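/- arXiv:2310.09973 — 4 statements merged into one kernel-verified Lean document; each statement's English description precedes it below -/
import Mathlib

section
/- Let k ≥ 2 and let G₁, …, G_k be Class 1 simple graphs, each with at least one edge, with maximum degrees Δ(G₁), …, Δ(G_k). Let G = G₁ □ G₂ □ ⋯ □ G_k be their iterated Cartesian (box) product, and let φ be a partial proper edge coloring of G defined on a set E₀ of edges of G using at most Σᵢ Δ(Gᵢ) colors, such that any two distinct edges of E₀ are at distance at least 3 in G. If Σᵢ Δ(Gᵢ) is even and 2Δ(Gᵢ) < Σⱼ Δ(Gⱼ) for every i ∈ {1, …, k}, then φ extends to a proper edge coloring of G using Σᵢ Δ(Gᵢ) colors. -/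
open SimpleGraph
open scoped Classical

/-- A (total) edge coloring `c` with `n` colors is proper on the edge set `E₀ ⊆ G.edgeSet`:
any two distinct edges of `E₀` sharing a vertex receive different colors. -/
def IsProperEdgeColoringOn {V : Type*} (G : SimpleGraph V) (E₀ : Set (Sym2 V)) {n : ℕ}
    (c : Sym2 V → Fin n) : Prop :=
  E₀ ⊆ G.edgeSet ∧
    ∀ e ∈ E₀, ∀ f ∈ E₀, e ≠ f → (∃ v, v ∈ e ∧ v ∈ f) → c e ≠ c f

/-- A proper edge coloring of `G` with `n` colors: any two distinct edges of `G`
sharing a vertex receive different colors. -/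
def IsProperEdgeColoring {V : Type*} (G : SimpleGraph V) {n : ℕ} (c : Sym2 V → Fin n) : Prop :=
  ∀ e ∈ G.edgeSet, ∀ f ∈ G.edgeSet, e ≠ f → (∃ v, v ∈ e ∧ v ∈ f) → c e ≠ c f

/-- The distance between edges `e` and `f` of `G` is at least `k`:
every endpoint of `e` is at (extended) graph distance at least `k` from every endpoint of `f`. -/
def EdgeDistGE {V : Type*} (G : SimpleGraph V) (e f : Sym2 V) (k : ℕ) : Prop :=
  ∀ x ∈ e, ∀ y ∈ f, (k : ℕ∞) ≤ G.edist x y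

/-- The chromatic index of `G`: the least `n` such that `G` admits a proper edge coloring
with `n` colors. -/
noncomputable def chromIndex {V : Type*} (G : SimpleGraph V) : ℕ :=
  sInf {n | ∃ c : Sym2 V → Fin n, IsProperEdgeColoring G c}

/-- A finite graph is Class 1 if its chromatic index equals its maximum degree. -/
def IsClassOne {V : Type*} [Fintype V] (G : SimpleGraph V) : Prop :=
  chromIndex G = G.maxDegree

/-- The iterated Cartesian (box) product of the family of graphs `G i`. -/
def boxProdPi {ι : Type*} {V : ι → Type*} (G : ∀ i, SimpleGraph (V i)) :
    SimpleGraph (∀ i, V i) where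
  Adj x y := ∃ i, (G i).Adj (x i) (y i) ∧ ∀ j, j ≠ i → x j = y j
  symm := ⟨fun x y ⟨i, ha, he⟩ => ⟨i, ha.symm, fun j hj => (he j hj).symm⟩⟩
  loopless := ⟨fun x ⟨i, ha, _⟩ => (G i).loopless.irrefl _ ha⟩

/-- The `d`-fold iterated Cartesian (box) product of `G` with itself. -/
def boxPow {V : Type*} (G : SimpleGraph V) (d : ℕ) : SimpleGraph (Fin d → V) :=
  boxProdPi fun _ => G

noncomputable section Aux

namespace Ext

variable {k : ℕ}

/-- offset of block `i` -/
def off (d : Fin k → ℕ) (i : Fin k) : ℕ := ∑ j ∈ Finset.univ.filter (fun j => j < i), d j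

lemma off_add_le (d : Fin k → ℕ) (i : Fin k) : off d i + d i ≤ ∑ j, d j := by
  have h1 : ∑ j ∈ insert i (Finset.univ.filter (fun j => j < i)), d j ≤ ∑ j, d j :=
    Finset.sum_le_sum_of_subset (by intro x _; exact Finset.mem_univ x)
  rwa [Finset.sum_insert (by simp), add_comm] at h1

lemma off_mono {d : Fin k → ℕ} {i i' : Fin k} (h : i < i') : off d i + d i ≤ off d i' := by
  have h1 : insert i (Finset.univ.filter (fun j => j < i)) ⊆
      Finset.univ.filter (fun j => j < i') := by
    intro x hx
    rcases Finset.mem_insert.mp hx with rfl | hx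
    · simp [h]
    · simp only [Finset.mem_filter] at hx ⊢
      exact ⟨Finset.mem_univ x, lt_trans hx.2 h⟩
  have h2 := Finset.sum_le_sum_of_subset (f := d) h1
  rw [Finset.sum_insert (by simp)] at h2
  unfold off
  omega

/-- the color in `Fin N` corresponding to block `i`, factor color `t` -/
def emb (d : Fin k → ℕ) (i : Fin k) (t : Fin (d i)) : Fin (∑ j, d j) :=
  ⟨off d i + t.1, lt_of_lt_of_le (by have := t.2; omega) (off_add_le d i)⟩

lemma emb_inj₁ {d : Fin k → ℕ} {i i' : Fin k} {t : Fin (d i)} {t' : Fin (d i')}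
    (h : emb d i t = emb d i' t') : i = i' := by
  by_contra hne
  rcases lt_or_gt_of_ne hne with hlt | hlt
  · have h2 := off_mono (d := d) hlt
    have h3 : (emb d i t).1 = (emb d i' t').1 := by rw [h]
    simp only [emb] at h3
    have := t.2; omega
  · have h2 := off_mono (d := d) hlt
    have h3 : (emb d i t).1 = (emb d i' t').1 := by rw [h]
    simp only [emb] at h3
    have := t'.2; omega

lemma emb_inj₂ {d : Fin k → ℕ} {i : Fin k} {t t' : Fin (d i)}
    (h : emb d i t = emb d i t') : t = t' := by
  have h3 : (emb d i t).1 = (emb d i t').1 := by rw [h]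
  simp only [emb] at h3
  exact Fin.ext (by omega)

lemma emb_surj {d : Fin k → ℕ} [NeZero k] (κ : Fin (∑ j, d j)) :
    ∃ i t, emb d i t = κ := by
  classical
  have hinj : Function.Injective (fun p : Σ i, Fin (d i) => emb d p.1 p.2) := by
    rintro ⟨i, t⟩ ⟨i', t'⟩ h
    obtain rfl := emb_inj₁ h
    obtain rfl := emb_inj₂ h
    rfl
  have hcard : Fintype.card (Σ i, Fin (d i)) = Fintype.card (Fin (∑ j, d j)) := by
    simp
  have hbij := (Fintype.bijective_iff_injective_and_card _).mpr ⟨hinj, hcard⟩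
  obtain ⟨⟨i, t⟩, ht⟩ := hbij.2 κ
  exact ⟨i, t, ht⟩

variable {d : Fin k → ℕ}

/-- the fixed-point-free cross-block involution on colors -/
def invo (d : Fin k → ℕ) (κ : Fin (∑ j, d j)) : Fin (∑ j, d j) :=
  if h : κ.1 < (∑ j, d j) / 2 then ⟨κ.1 + (∑ j, d j) / 2, by have := κ.2; omega⟩
  else ⟨κ.1 - (∑ j, d j) / 2, by have := κ.2; omega⟩

lemma invo_val (κ : Fin (∑ j, d j)) :
    (invo d κ).1 = if κ.1 < (∑ j, d j) / 2 then κ.1 + (∑ j, d j) / 2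
      else κ.1 - (∑ j, d j) / 2 := by
  unfold invo
  split_ifs <;> rfl

lemma invo_invo (hev : Even (∑ j, d j)) (κ : Fin (∑ j, d j)) : invo d (invo d κ) = κ := by
  obtain ⟨m, hm⟩ := hev
  have hm' : (∑ j, d j) / 2 = m := by omega
  have hκ := κ.2
  have h1 := invo_val (d := d) κ
  have h2 := invo_val (d := d) (invo d κ)
  have h3 := (invo d (invo d κ)).2
  apply Fin.ext
  split_ifs at h1 h2 <;> omega

lemma invo_ne (hev : Even (∑ j, d j)) (hpos : 0 < ∑ j, d j) (κ : Fin (∑ j, d j)) :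
    invo d κ ≠ κ := by
  obtain ⟨m, hm⟩ := hev
  have hm' : (∑ j, d j) / 2 = m := by omega
  have hκ := κ.2
  intro h
  have h1 := invo_val (d := d) κ
  rw [h] at h1
  split_ifs at h1 <;> omega

lemma invo_inj (hev : Even (∑ j, d j)) {κ κ' : Fin (∑ j, d j)}
    (h : invo d κ = invo d κ') : κ = κ' := by
  have := congrArg (invo d) h
  rwa [invo_invo hev, invo_invo hev] at this

/-- the involution moves every color to a different block -/
lemma invo_cross (hev : Even (∑ j, d j)) (hdg : ∀ i, 2 * d i < ∑ j, d j)
    {i : Fin k} {t t' : Fin (d i)} (h : invo d (emb d i t) = emb d i t') : False := by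
  obtain ⟨m, hm⟩ := hev
  have hm' : (∑ j, d j) / 2 = m := by omega
  have hd := hdg i
  have ht := t.2
  have ht' := t'.2
  have hv := congrArg Fin.val h
  rw [invo_val] at hv
  have he1 : (emb d i t).1 = off d i + t.1 := rfl
  have he2 : (emb d i t').1 = off d i + t'.1 := rfl
  split_ifs at hv <;> omega

section Prod

variable {V : Fin k → Type*} {G : ∀ i, SimpleGraph (V i)} {d : Fin k → ℕ}

lemma dir_eq {x y : ∀ i, V i} {i i' : Fin k}
    (hi : (G i).Adj (x i) (y i)) (hoff : ∀ j, j ≠ i → x j = y j)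
    (hi' : (G i').Adj (x i') (y i')) (hoff' : ∀ j, j ≠ i' → x j = y j) : i = i' := by
  by_contra hne
  exact (G i).loopless.irrefl (y i) (hoff' i hne ▸ hi)

def pdir {x y : ∀ i, V i} (h : (boxProdPi G).Adj x y) : Fin k := Exists.choose h

lemma pdir_adj {x y : ∀ i, V i} (h : (boxProdPi G).Adj x y) :
    (G (pdir h)).Adj (x (pdir h)) (y (pdir h)) := (Exists.choose_spec h).1

lemma pdir_off {x y : ∀ i, V i} (h : (boxProdPi G).Adj x y) :
    ∀ j, j ≠ pdir h → x j = y j := (Exists.choose_spec h).2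

lemma pdir_eq {x y : ∀ i, V i} (h : (boxProdPi G).Adj x y) {i : Fin k}
    (hi : (G i).Adj (x i) (y i)) (hoff : ∀ j, j ≠ i → x j = y j) : pdir h = i :=
  dir_eq (pdir_adj h) (pdir_off h) hi hoff

variable (G) in
/-- the canonical coloring of the box product, as a two-argument function -/
def canonF (col : ∀ i, Sym2 (V i) → Fin (d i)) (κ₀ : Fin (∑ j, d j))
    (x y : ∀ i, V i) : Fin (∑ j, d j) :=
  if h : (boxProdPi G).Adj x y then emb d (pdir h) (col _ s(x (pdir h), y (pdir h))) else κ₀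

lemma canonF_symm (col : ∀ i, Sym2 (V i) → Fin (d i)) (κ₀ : Fin (∑ j, d j))
    (x y : ∀ i, V i) : canonF G col κ₀ x y = canonF G col κ₀ y x := by
  unfold canonF
  by_cases h : (boxProdPi G).Adj x y
  · rw [dif_pos h, dif_pos h.symm]
    have he : pdir h.symm = pdir h :=
      pdir_eq h.symm (pdir_adj h).symm (fun j hj => (pdir_off h j hj).symm)
    revert he
    generalize pdir h.symm = a
    rintro rfl
    rw [Sym2.eq_swap]
  · rw [dif_neg h, dif_neg (fun hs => h hs.symm)]

variable (G) in
/-- the canonical coloring of the box product -/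
def canon (col : ∀ i, Sym2 (V i) → Fin (d i)) (κ₀ : Fin (∑ j, d j)) :
    Sym2 (∀ i, V i) → Fin (∑ j, d j) :=
  Sym2.lift ⟨fun x y => canonF G col κ₀ x y, fun x y => canonF_symm col κ₀ x y⟩

variable {col : ∀ i, Sym2 (V i) → Fin (d i)} {κ₀ : Fin (∑ j, d j)}

lemma canon_mk {x y : ∀ i, V i} (h : (boxProdPi G).Adj x y) :
    canon G col κ₀ s(x, y) = emb d (pdir h) (col _ s(x (pdir h), y (pdir h))) := by
  unfold canon
  rw [Sym2.lift_mk]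
  exact dif_pos h

lemma canon_mk_dir {x y : ∀ i, V i} (h : (boxProdPi G).Adj x y) {i : Fin k}
    (hi : (G i).Adj (x i) (y i)) (hoff : ∀ j, j ≠ i → x j = y j) :
    canon G col κ₀ s(x, y) = emb d i (col i s(x i, y i)) := by
  have hp := pdir_eq h hi hoff
  subst hp
  exact canon_mk h

lemma canon_update {x : ∀ i, V i} {i : Fin k} {w : V i} (hw : (G i).Adj (x i) w) :
    (boxProdPi G).Adj x (Function.update x i w) ∧
      canon G col κ₀ s(x, Function.update x i w) = emb d i (col i s(x i, w)) := by
  have hupd : ∀ j, j ≠ i → x j = Function.update x i w j := by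
    intro j hj; rw [Function.update_of_ne hj]
  have hadj : (boxProdPi G).Adj x (Function.update x i w) :=
    Exists.intro i ⟨by simpa using hw, hupd⟩
  refine ⟨hadj, ?_⟩
  rw [canon_mk_dir hadj (by simpa using hw) hupd]
  congr 2
  simp

lemma canon_decode {x y : ∀ i, V i} (h : (boxProdPi G).Adj x y) {i : Fin k} {t : Fin (d i)}
    (hc : canon G col κ₀ s(x, y) = emb d i t) :
    (G i).Adj (x i) (y i) ∧ col i s(x i, y i) = t ∧ ∀ j, j ≠ i → x j = y j := by
  have hmk := canon_mk (col := col) (κ₀ := κ₀) h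
  rw [hc] at hmk
  obtain rfl := emb_inj₁ hmk
  obtain rfl := emb_inj₂ hmk
  exact ⟨pdir_adj h, rfl, pdir_off h⟩

lemma canon_proper (hcol : ∀ i, IsProperEdgeColoring (G i) (col i)) :
    IsProperEdgeColoring (boxProdPi G) (canon G col κ₀) := by
  rintro e he f hf hne ⟨v, hve, hvf⟩
  intro hcc
  obtain ⟨p, hp⟩ : ∃ p, s(v, p) = e := ⟨(Sym2.Mem.other hve), Sym2.other_spec hve⟩
  obtain ⟨q, hq⟩ : ∃ q, s(v, q) = f := ⟨(Sym2.Mem.other hvf), Sym2.other_spec hvf⟩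
  subst hp; subst hq
  rw [SimpleGraph.mem_edgeSet] at he hf
  have hmk := canon_mk (col := col) (κ₀ := κ₀) he
  have hdp := canon_decode (col := col) (κ₀ := κ₀) he hmk
  have hdq := canon_decode (col := col) (κ₀ := κ₀) hf (hcc ▸ hmk)
  set i := pdir he
  by_cases heq : s(v i, p i) = s(v i, q i)
  · have hpq : p i = q i := by
      rcases Sym2.eq_iff.mp heq with ⟨_, h2⟩ | ⟨h1, _⟩
      · exact h2
      · exact absurd h1 hdq.1.ne
    apply hne
    have : p = q := by
      funext j
      by_cases hj : j = i
      · subst hj; exact hpq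
      · rw [← hdp.2.2 j hj, ← hdq.2.2 j hj]
    rw [this]
  · exact hcol i _ ((G i).mem_edgeSet.mpr hdp.1) _ ((G i).mem_edgeSet.mpr hdq.1)
      heq ⟨v i, Sym2.mem_mk_left _ _, Sym2.mem_mk_left _ _⟩
      (by rw [hdp.2.1, hdq.2.1])

lemma col_unique (hcol : ∀ i, IsProperEdgeColoring (G i) (col i)) {i : Fin k}
    {z w w' : V i} (h : (G i).Adj z w) (h' : (G i).Adj z w')
    (hc : col i s(z, w) = col i s(z, w')) : w = w' := by
  by_cases heq : s(z, w) = s(z, w')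
  · rcases Sym2.eq_iff.mp heq with ⟨_, h2⟩ | ⟨h1, _⟩
    · exact h2
    · exact absurd h1 h'.ne
  · exact absurd hc (hcol i _ ((G i).mem_edgeSet.mpr h) _ ((G i).mem_edgeSet.mpr h')
      heq ⟨z, Sym2.mem_mk_left _ _, Sym2.mem_mk_left _ _⟩)

lemma edge_unique (hcol : ∀ i, IsProperEdgeColoring (G i) (col i)) {x w w' : ∀ i, V i}
    (h : (boxProdPi G).Adj x w) (h' : (boxProdPi G).Adj x w')
    (hc : canon G col κ₀ s(x, w) = canon G col κ₀ s(x, w')) : w = w' := by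
  by_cases heq : s(x, w) = s(x, w')
  · rcases Sym2.eq_iff.mp heq with ⟨_, h2⟩ | ⟨h1, _⟩
    · exact h2
    · exact absurd h1 h'.ne
  · exact absurd hc (canon_proper hcol _ ((boxProdPi G).mem_edgeSet.mpr h) _
      ((boxProdPi G).mem_edgeSet.mpr h') heq ⟨x, Sym2.mem_mk_left _ _, Sym2.mem_mk_left _ _⟩)

variable (G col κ₀) in
/-- `x` has an edge of canonical color `κ` -/
def hasN (x : ∀ i, V i) (κ : Fin (∑ j, d j)) : Prop :=
  ∃ w, (boxProdPi G).Adj x w ∧ canon G col κ₀ s(x, w) = κ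

variable (G col κ₀) in
/-- the other endpoint of the edge of canonical color `κ` at `x` -/
def mvN (x : ∀ i, V i) (κ : Fin (∑ j, d j)) : ∀ i, V i :=
  if h : hasN G col κ₀ x κ then h.choose else x

lemma mvN_spec {x : ∀ i, V i} {κ : Fin (∑ j, d j)} (h : hasN G col κ₀ x κ) :
    (boxProdPi G).Adj x (mvN G col κ₀ x κ) ∧
      canon G col κ₀ s(x, mvN G col κ₀ x κ) = κ := by
  unfold mvN
  rw [dif_pos h]
  exact h.choose_spec

lemma mvN_unique (hcol : ∀ i, IsProperEdgeColoring (G i) (col i)) {x w : ∀ i, V i}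
    {κ : Fin (∑ j, d j)} (h : (boxProdPi G).Adj x w) (hc : canon G col κ₀ s(x, w) = κ) :
    mvN G col κ₀ x κ = w := by
  have hh : hasN G col κ₀ x κ := ⟨w, h, hc⟩
  exact edge_unique hcol (mvN_spec hh).1 h ((mvN_spec hh).2.trans hc.symm)

lemma mvN_off {x : ∀ i, V i} {κ : Fin (∑ j, d j)} (h : hasN G col κ₀ x κ)
    {i : Fin k} {t : Fin (d i)} (ht : emb d i t = κ) :
    ∀ j, j ≠ i → mvN G col κ₀ x κ j = x j := by
  intro j hj
  exact ((canon_decode (mvN_spec h).1 ((mvN_spec h).2.trans ht.symm)).2.2 j hj).symm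

lemma mvN_factor {x : ∀ i, V i} {κ : Fin (∑ j, d j)} (h : hasN G col κ₀ x κ)
    {i : Fin k} {t : Fin (d i)} (ht : emb d i t = κ) :
    (G i).Adj (x i) (mvN G col κ₀ x κ i) ∧ col i s(x i, mvN G col κ₀ x κ i) = t := by
  have hd := canon_decode (mvN_spec h).1 ((mvN_spec h).2.trans ht.symm)
  exact ⟨hd.1, hd.2.1⟩

lemma mvN_update {x : ∀ i, V i} {κ : Fin (∑ j, d j)} (h : hasN G col κ₀ x κ)
    {i : Fin k} {t : Fin (d i)} (ht : emb d i t = κ) :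
    mvN G col κ₀ x κ = Function.update x i (mvN G col κ₀ x κ i) := by
  funext j
  by_cases hj : j = i
  · subst hj; simp
  · rw [Function.update_of_ne hj, mvN_off h ht j hj]

lemma hasN_congr {x z : ∀ i, V i} {κ : Fin (∑ j, d j)} {i : Fin k} {t : Fin (d i)}
    (ht : emb d i t = κ) (hxz : x i = z i) (h : hasN G col κ₀ x κ) :
    hasN G col κ₀ z κ := by
  have hf := mvN_factor h ht
  have hadj : (G i).Adj (z i) (mvN G col κ₀ x κ i) := hxz ▸ hf.1
  have hu := canon_update (G := G) (col := col) (κ₀ := κ₀) hadj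
  refine ⟨_, hu.1, ?_⟩
  rw [hu.2, ← hxz, hf.2, ht]

lemma adj_edist {x y : ∀ i, V i} (h : (boxProdPi G).Adj x y) :
    (boxProdPi G).edist x y ≤ 1 := by
  have := SimpleGraph.edist_le (SimpleGraph.Walk.cons h SimpleGraph.Walk.nil)
  simpa using this

lemma edist_two {x y z : ∀ i, V i} (h1 : (boxProdPi G).edist x y ≤ 1)
    (h2 : (boxProdPi G).edist y z ≤ 1) : (boxProdPi G).edist x z ≤ 2 := by
  calc (boxProdPi G).edist x z ≤ _ + _ := SimpleGraph.edist_triangle (v := y)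
  _ ≤ 1 + 1 := add_le_add h1 h2
  _ = 2 := by norm_num

lemma exists_pair {A : Type*} (e : Sym2 A) : ∃ p : A × A, s(p.1, p.2) = e := by
  induction e using Sym2.ind with
  | _ x y => exact ⟨(x, y), rfl⟩

/-- first chosen endpoint -/
def eFst {A : Type*} (e : Sym2 A) : A := (Classical.choose (exists_pair e)).1

/-- second chosen endpoint -/
def eSnd {A : Type*} (e : Sym2 A) : A := (Classical.choose (exists_pair e)).2

lemma eFst_eSnd {A : Type*} (e : Sym2 A) : s(eFst e, eSnd e) = e :=
  Classical.choose_spec (exists_pair e)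

section Main

variable [NeZero k] {V : Fin k → Type*} {G : ∀ i, SimpleGraph (V i)} {d : Fin k → ℕ}
  {col : ∀ i, Sym2 (V i) → Fin (d i)} {κ₀ : Fin (∑ j, d j)}

/-- the direction of an edge of the box product -/
def pd (G : ∀ i, SimpleGraph (V i)) (e : Sym2 (∀ i, V i)) : Fin k :=
  if h : (boxProdPi G).Adj (eFst e) (eSnd e) then pdir h
  else ⟨0, Nat.pos_of_ne_zero (NeZero.ne k)⟩

variable (G)

/-- whether the precolor of `e` lies in the block of the direction of `e` -/
def Sameb (φ : Sym2 (∀ i, V i) → Fin (∑ j, d j)) (e : Sym2 (∀ i, V i)) : Prop :=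
  ∃ t : Fin (d (pd G e)), emb d (pd G e) t = φ e

/-- the auxiliary color used for the Kempe-type switch at `e` -/
def estar (φ : Sym2 (∀ i, V i) → Fin (∑ j, d j)) (e : Sym2 (∀ i, V i)) :
    Fin (∑ j, d j) :=
  if Sameb G φ e then invo d (φ e) else φ e

variable (col κ₀)

/-- one side of the pre-switch Kempe component at `e` -/
def side (φ : Sym2 (∀ i, V i) → Fin (∑ j, d j)) (e : Sym2 (∀ i, V i))
    (p : ∀ i, V i) : Set (Sym2 (∀ i, V i)) :=
  {g | (hasN G col κ₀ p (φ e) ∧ g = s(p, mvN G col κ₀ p (φ e))) ∨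
    (hasN G col κ₀ p (invo d (φ e)) ∧ g = s(p, mvN G col κ₀ p (invo d (φ e)))) ∨
    (hasN G col κ₀ p (φ e) ∧ hasN G col κ₀ p (invo d (φ e)) ∧
      (g = s(mvN G col κ₀ p (φ e),
          mvN G col κ₀ (mvN G col κ₀ p (φ e)) (invo d (φ e))) ∨
       g = s(mvN G col κ₀ (mvN G col κ₀ p (φ e)) (invo d (φ e)),
          mvN G col κ₀ p (invo d (φ e)))))}

/-- the set of pre-switched edges -/
def Wset (E₀ : Set (Sym2 (∀ i, V i))) (φ : Sym2 (∀ i, V i) → Fin (∑ j, d j)) :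
    Set (Sym2 (∀ i, V i)) :=
  {g | ∃ e ∈ E₀, φ e ≠ canon G col κ₀ e ∧ Sameb G φ e ∧
    (g ∈ side G col κ₀ φ e (eFst e) ∨ g ∈ side G col κ₀ φ e (eSnd e))}

/-- the intermediate coloring -/
def cOne (E₀ : Set (Sym2 (∀ i, V i))) (φ : Sym2 (∀ i, V i) → Fin (∑ j, d j)) :
    Sym2 (∀ i, V i) → Fin (∑ j, d j) :=
  fun g => if g ∈ Wset G col κ₀ E₀ φ then invo d (canon G col κ₀ g) else canon G col κ₀ g

/-- the final Kempe switch component at a bad edge `e` -/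
def Rset (φ : Sym2 (∀ i, V i) → Fin (∑ j, d j)) (e : Sym2 (∀ i, V i)) :
    Set (Sym2 (∀ i, V i)) :=
  {g | g = e ∨ (hasN G col κ₀ (eFst e) (estar G φ e) ∧
    (g = s(eFst e, mvN G col κ₀ (eFst e) (estar G φ e)) ∨
     g = s(eSnd e, mvN G col κ₀ (eSnd e) (estar G φ e)) ∨
     g = s(mvN G col κ₀ (eFst e) (estar G φ e),
        mvN G col κ₀ (eSnd e) (estar G φ e))))}

/-- the final coloring -/
def cFin (E₀ : Set (Sym2 (∀ i, V i))) (φ : Sym2 (∀ i, V i) → Fin (∑ j, d j)) :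
    Sym2 (∀ i, V i) → Fin (∑ j, d j) :=
  fun g =>
    if h : ∃ e, e ∈ E₀ ∧ φ e ≠ canon G col κ₀ e ∧ g ∈ Rset G col κ₀ φ e then
      (if cOne G col κ₀ E₀ φ g = φ h.choose then canon G col κ₀ h.choose else φ h.choose)
    else cOne G col κ₀ E₀ φ g

variable {G} {col} {κ₀}
variable {E₀ : Set (Sym2 (∀ i, V i))} {φ : Sym2 (∀ i, V i) → Fin (∑ j, d j)}

lemma mvN_back (hcol : ∀ i, IsProperEdgeColoring (G i) (col i)) {x : ∀ i, V i}
    {κ : Fin (∑ j, d j)} (h : hasN G col κ₀ x κ) :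
    hasN G col κ₀ (mvN G col κ₀ x κ) κ ∧
      mvN G col κ₀ (mvN G col κ₀ x κ) κ = x := by
  have hs := mvN_spec h
  have hswap : canon G col κ₀ s(mvN G col κ₀ x κ, x) = κ := by
    rw [Sym2.eq_swap]; exact hs.2
  have hh : hasN G col κ₀ (mvN G col κ₀ x κ) κ := ⟨x, hs.1.symm, hswap⟩
  exact ⟨hh, mvN_unique hcol hs.1.symm hswap⟩

lemma square (hcol : ∀ i, IsProperEdgeColoring (G i) (col i)) {p : ∀ i, V i}
    {a b : Fin (∑ j, d j)} {i j : Fin k} {t : Fin (d i)} {u : Fin (d j)}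
    (hti : emb d i t = a) (huj : emb d j u = b) (hij : i ≠ j)
    (hpa : hasN G col κ₀ p a) (hpb : hasN G col κ₀ p b) :
    hasN G col κ₀ (mvN G col κ₀ p a) b ∧
    (boxProdPi G).Adj (mvN G col κ₀ p b) (mvN G col κ₀ (mvN G col κ₀ p a) b) ∧
    canon G col κ₀ s(mvN G col κ₀ p b, mvN G col κ₀ (mvN G col κ₀ p a) b) = a := by
  set A := mvN G col κ₀ p a with hA
  set X' := mvN G col κ₀ p b with hX'
  have hAj : A j = p j := mvN_off hpa hti j (Ne.symm hij)
  have hAb : hasN G col κ₀ A b := hasN_congr huj hAj.symm hpb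
  set A' := mvN G col κ₀ A b with hA'
  have hfA := mvN_factor hAb huj
  have hfp := mvN_factor hpb huj
  have hadjpA' : (G j).Adj (p j) (A' j) := hAj ▸ hfA.1
  have hcolpA' : col j s(p j, A' j) = u := by rw [← hAj]; exact hfA.2
  have hjj : A' j = X' j := col_unique hcol hadjpA' hfp.1 (hcolpA'.trans hfp.2.symm)
  have hfxi := mvN_factor hpa hti
  have hX'i : X' i = p i := mvN_off hpb huj i hij
  have hA'X' : A' = Function.update X' i (A i) := by
    have hA'u : A' = Function.update A j (A' j) := mvN_update hAb huj
    have hAu : A = Function.update p i (A i) := mvN_update hpa hti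
    have hX'u : X' = Function.update p j (X' j) := mvN_update hpb huj
    funext l
    by_cases hl : l = i
    · subst hl
      rw [Function.update_self, hA'u, Function.update_of_ne hij, hAu, Function.update_self]
    · rw [Function.update_of_ne hl]
      by_cases hlj : l = j
      · subst hlj
        rw [hA'u, Function.update_self, hjj]
      · rw [hA'u, Function.update_of_ne hlj, hAu, Function.update_of_ne hl,
          hX'u, Function.update_of_ne hlj]
  have hadjX'A : (G i).Adj (X' i) (A i) := hX'i ▸ hfxi.1
  have hcu := canon_update (G := G) (col := col) (κ₀ := κ₀) hadjX'A
  rw [← hA'X'] at hcu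
  refine ⟨hAb, hcu.1, ?_⟩
  rw [hcu.2, hX'i, hfxi.2, hti]

lemma base_facts {e : Sym2 (∀ i, V i)} (he : e ∈ (boxProdPi G).edgeSet) :
    ∃ h : (boxProdPi G).Adj (eFst e) (eSnd e),
      (G (pd G e)).Adj (eFst e (pd G e)) (eSnd e (pd G e)) ∧
      (∀ j, j ≠ pd G e → eFst e j = eSnd e j) ∧
      canon G col κ₀ e =
        emb d (pd G e) (col (pd G e) s(eFst e (pd G e), eSnd e (pd G e))) := by
  have h : (boxProdPi G).Adj (eFst e) (eSnd e) :=
    (boxProdPi G).mem_edgeSet.mp ((eFst_eSnd e).symm ▸ he)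
  have hpd : pd G e = pdir h := dif_pos h
  refine ⟨h, hpd ▸ pdir_adj h, hpd ▸ pdir_off h, ?_⟩
  conv_lhs => rw [← eFst_eSnd e]
  rw [canon_mk h, hpd]

/-- decompositions of the colors at a same-block bad edge -/
lemma sb_decomp (hev : Even (∑ j, d j)) (hdg : ∀ i, 2 * d i < ∑ j, d j)
    {e : Sym2 (∀ i, V i)} (hsb : Sameb G φ e) :
    ∃ (t : Fin (d (pd G e))) (j : Fin k) (u : Fin (d j)),
      emb d (pd G e) t = φ e ∧ emb d j u = invo d (φ e) ∧ pd G e ≠ j := by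
  obtain ⟨t, ht⟩ := hsb
  obtain ⟨j, u, hu⟩ := emb_surj (d := d) (invo d (φ e))
  refine ⟨t, j, u, ht, hu, ?_⟩
  rintro rfl
  exact invo_cross hev hdg
    (show invo d (emb d (pd G e) t) = emb d (pd G e) u by rw [ht]; exact hu.symm)

lemma side_closed (hcol : ∀ i, IsProperEdgeColoring (G i) (col i))
    (hev : Even (∑ j, d j))
    {e : Sym2 (∀ i, V i)} {i j : Fin k} {t : Fin (d i)} {u : Fin (d j)}
    (hti : emb d i t = φ e) (huj : emb d j u = invo d (φ e)) (hij : i ≠ j)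
    {q v p : ∀ i, V i} {g : Sym2 (∀ i, V i)}
    (hg : g ∈ side G col κ₀ φ e q) (hv : v ∈ g) (hadj : (boxProdPi G).Adj v p)
    (hc : canon G col κ₀ s(v, p) = invo d (canon G col κ₀ g)) :
    s(v, p) ∈ side G col κ₀ φ e q := by
  set α := φ e with hα
  set γ := invo d (φ e) with hγ
  rcases hg with ⟨hqα, rfl⟩ | ⟨hqγ, rfl⟩ | ⟨hqα, hqγ, hcase⟩
  · -- g = s(q, A), canonical color α
    rw [(mvN_spec hqα).2] at hc
    rcases Sym2.mem_iff.mp hv with rfl | rfl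
    · exact Or.inr (Or.inl ⟨⟨p, hadj, hc⟩, by rw [mvN_unique hcol hadj hc]⟩)
    · have hAj : mvN G col κ₀ q α j = q j := mvN_off hqα hti j (Ne.symm hij)
      have hAγ : hasN G col κ₀ q γ := hasN_congr huj hAj ⟨p, hadj, hc⟩
      refine Or.inr (Or.inr ⟨hqα, hAγ, Or.inl ?_⟩)
      rw [mvN_unique hcol hadj hc]
  · -- g = s(q, X'), canonical color γ
    rw [(mvN_spec hqγ).2, invo_invo hev] at hc
    rcases Sym2.mem_iff.mp hv with rfl | rfl
    · exact Or.inl ⟨⟨p, hadj, hc⟩, by rw [mvN_unique hcol hadj hc]⟩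
    · have hX'i : mvN G col κ₀ q γ i = q i := mvN_off hqγ huj i hij
      have hqα : hasN G col κ₀ q α := hasN_congr hti hX'i ⟨p, hadj, hc⟩
      have hsq := square hcol hti huj hij hqα hqγ
      have hp : p = mvN G col κ₀ (mvN G col κ₀ q α) γ := by
        rw [← mvN_unique hcol hadj hc, mvN_unique hcol hsq.2.1 hsq.2.2]
      refine Or.inr (Or.inr ⟨hqα, hqγ, Or.inr ?_⟩)
      rw [hp, Sym2.eq_swap]
  · have hAj : mvN G col κ₀ q α j = q j := mvN_off hqα hti j (Ne.symm hij)
    have hAγ : hasN G col κ₀ (mvN G col κ₀ q α) γ := hasN_congr huj hAj.symm hqγ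
    have hsq := square hcol hti huj hij hqα hqγ
    rcases hcase with rfl | rfl
    · -- g = s(A, A'), canonical color γ
      rw [(mvN_spec hAγ).2, invo_invo hev] at hc
      rcases Sym2.mem_iff.mp hv with rfl | rfl
      · have hp : p = q := by
          rw [← mvN_unique hcol hadj hc, (mvN_back hcol hqα).2]
        subst hp
        exact Or.inl ⟨hqα, Sym2.eq_swap⟩
      · have hcA' : canon G col κ₀
            s(mvN G col κ₀ (mvN G col κ₀ q α) γ, mvN G col κ₀ q γ) = α := by
          rw [Sym2.eq_swap]; exact hsq.2.2
        have hp : p = mvN G col κ₀ q γ := by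
          rw [← mvN_unique hcol hadj hc, mvN_unique hcol hsq.2.1.symm hcA']
        subst hp
        exact Or.inr (Or.inr ⟨hqα, hqγ, Or.inr rfl⟩)
    · -- g = s(A', X'), canonical color α
      have hcg : canon G col κ₀
          s(mvN G col κ₀ (mvN G col κ₀ q α) γ, mvN G col κ₀ q γ) = α := by
        rw [Sym2.eq_swap]; exact hsq.2.2
      rw [hcg] at hc
      rcases Sym2.mem_iff.mp hv with rfl | rfl
      · have hp : p = mvN G col κ₀ q α := by
          rw [← mvN_unique hcol hadj hc, (mvN_back hcol hAγ).2]
        subst hp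
        exact Or.inr (Or.inr ⟨hqα, hqγ, Or.inl Sym2.eq_swap⟩)
      · have hp : p = q := by
          rw [← mvN_unique hcol hadj hc, (mvN_back hcol hqγ).2]
        subst hp
        exact Or.inr (Or.inl ⟨hqγ, Sym2.eq_swap⟩)

lemma side_color_near (hcol : ∀ i, IsProperEdgeColoring (G i) (col i))
    {e : Sym2 (∀ i, V i)} {i j : Fin k} {t : Fin (d i)} {u : Fin (d j)}
    (hti : emb d i t = φ e) (huj : emb d j u = invo d (φ e)) (hij : i ≠ j)
    {q : ∀ i, V i} {g : Sym2 (∀ i, V i)} (hg : g ∈ side G col κ₀ φ e q) :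
    (canon G col κ₀ g = φ e ∨ canon G col κ₀ g = invo d (φ e)) ∧
      g ∈ (boxProdPi G).edgeSet ∧
      ∃ w ∈ g, (boxProdPi G).edist q w ≤ 1 := by
  rcases hg with ⟨hqα, rfl⟩ | ⟨hqγ, rfl⟩ | ⟨hqα, hqγ, hcase⟩
  · exact ⟨Or.inl (mvN_spec hqα).2, (boxProdPi G).mem_edgeSet.mpr (mvN_spec hqα).1,
      q, Sym2.mem_mk_left _ _, by simp⟩
  · exact ⟨Or.inr (mvN_spec hqγ).2, (boxProdPi G).mem_edgeSet.mpr (mvN_spec hqγ).1,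
      q, Sym2.mem_mk_left _ _, by simp⟩
  · have hAj : mvN G col κ₀ q (φ e) j = q j := mvN_off hqα hti j (Ne.symm hij)
    have hAγ : hasN G col κ₀ (mvN G col κ₀ q (φ e)) (invo d (φ e)) :=
      hasN_congr huj hAj.symm hqγ
    have hsq := square hcol hti huj hij hqα hqγ
    rcases hcase with rfl | rfl
    · exact ⟨Or.inr (mvN_spec hAγ).2, (boxProdPi G).mem_edgeSet.mpr (mvN_spec hAγ).1,
        mvN G col κ₀ q (φ e), Sym2.mem_mk_left _ _, adj_edist (mvN_spec hqα).1⟩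
    · refine ⟨Or.inl (by rw [Sym2.eq_swap]; exact hsq.2.2),
        (boxProdPi G).mem_edgeSet.mpr hsq.2.1.symm,
        mvN G col κ₀ q (invo d (φ e)), Sym2.mem_mk_right _ _, adj_edist (mvN_spec hqγ).1⟩

lemma mem_left {A : Type*} (e : Sym2 A) : eFst e ∈ e := by
  have h := Sym2.mem_mk_left (eFst e) (eSnd e)
  rwa [eFst_eSnd e] at h

lemma mem_right {A : Type*} (e : Sym2 A) : eSnd e ∈ e := by
  have h := Sym2.mem_mk_right (eFst e) (eSnd e)
  rwa [eFst_eSnd e] at h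

lemma W_struct (hcol : ∀ i, IsProperEdgeColoring (G i) (col i))
    (hev : Even (∑ j, d j)) (hdg : ∀ i, 2 * d i < ∑ j, d j)
    {g : Sym2 (∀ i, V i)} (hg : g ∈ Wset G col κ₀ E₀ φ) :
    ∃ e ∈ E₀, φ e ≠ canon G col κ₀ e ∧ Sameb G φ e ∧
      (canon G col κ₀ g = φ e ∨ canon G col κ₀ g = invo d (φ e)) ∧
      g ∈ (boxProdPi G).edgeSet ∧
      ∃ w ∈ g, ∃ z ∈ e, (boxProdPi G).edist z w ≤ 1 := by
  obtain ⟨e, he, hbad, hsb, hside⟩ := hg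
  obtain ⟨t, j, u, hti, huj, hij⟩ := sb_decomp hev hdg hsb
  rcases hside with hs | hs
  · obtain ⟨hcolor, hedge, w, hw, hdist1⟩ := side_color_near hcol hti huj hij hs
    exact ⟨e, he, hbad, hsb, hcolor, hedge, w, hw, eFst e, mem_left e, hdist1⟩
  · obtain ⟨hcolor, hedge, w, hw, hdist1⟩ := side_color_near hcol hti huj hij hs
    exact ⟨e, he, hbad, hsb, hcolor, hedge, w, hw, eSnd e, mem_right e, hdist1⟩

lemma W_closed (hcol : ∀ i, IsProperEdgeColoring (G i) (col i))
    (hev : Even (∑ j, d j)) (hdg : ∀ i, 2 * d i < ∑ j, d j)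
    {g : Sym2 (∀ i, V i)} (hg : g ∈ Wset G col κ₀ E₀ φ) {v p : ∀ i, V i}
    (hv : v ∈ g) (hadj : (boxProdPi G).Adj v p)
    (hc : canon G col κ₀ s(v, p) = invo d (canon G col κ₀ g)) :
    s(v, p) ∈ Wset G col κ₀ E₀ φ := by
  obtain ⟨e, he, hbad, hsb, hside⟩ := hg
  obtain ⟨t, j, u, hti, huj, hij⟩ := sb_decomp hev hdg hsb
  rcases hside with hs | hs
  · exact ⟨e, he, hbad, hsb, Or.inl (side_closed hcol hev hti huj hij hs hv hadj hc)⟩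
  · exact ⟨e, he, hbad, hsb, Or.inr (side_closed hcol hev hti huj hij hs hv hadj hc)⟩

lemma cOne_proper (hcol : ∀ i, IsProperEdgeColoring (G i) (col i))
    (hev : Even (∑ j, d j)) (hdg : ∀ i, 2 * d i < ∑ j, d j) :
    IsProperEdgeColoring (boxProdPi G) (cOne G col κ₀ E₀ φ) := by
  rintro g hg h hh hne ⟨v, hvg, hvh⟩ heq
  unfold cOne at heq
  by_cases hgW : g ∈ Wset G col κ₀ E₀ φ <;> by_cases hhW : h ∈ Wset G col κ₀ E₀ φ
  · rw [if_pos hgW, if_pos hhW] at heq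
    exact canon_proper hcol g hg h hh hne ⟨v, hvg, hvh⟩ (invo_inj hev heq)
  · rw [if_pos hgW, if_neg hhW] at heq
    obtain ⟨p, hp⟩ : ∃ p, s(v, p) = h := ⟨Sym2.Mem.other hvh, Sym2.other_spec hvh⟩
    have hadj : (boxProdPi G).Adj v p := (boxProdPi G).mem_edgeSet.mp (hp ▸ hh)
    have : s(v, p) ∈ Wset G col κ₀ E₀ φ :=
      W_closed hcol hev hdg hgW hvg hadj (by rw [hp, ← heq])
    exact hhW (hp ▸ this)
  · rw [if_neg hgW, if_pos hhW] at heq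
    obtain ⟨p, hp⟩ : ∃ p, s(v, p) = g := ⟨Sym2.Mem.other hvg, Sym2.other_spec hvg⟩
    have hadj : (boxProdPi G).Adj v p := (boxProdPi G).mem_edgeSet.mp (hp ▸ hg)
    have : s(v, p) ∈ Wset G col κ₀ E₀ φ :=
      W_closed hcol hev hdg hhW hvh hadj (by rw [hp, heq])
    exact hgW (hp ▸ this)
  · rw [if_neg hgW, if_neg hhW] at heq
    exact canon_proper hcol g hg h hh hne ⟨v, hvg, hvh⟩ heq

section RPhase

variable (hcol : ∀ i, IsProperEdgeColoring (G i) (col i))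
  (hev : Even (∑ j, d j)) (hdg : ∀ i, 2 * d i < ∑ j, d j)
  (hsub : E₀ ⊆ (boxProdPi G).edgeSet)
  (hdist2 : ∀ e ∈ E₀, ∀ f ∈ E₀, e ≠ f → ∀ p ∈ e, ∀ q ∈ f,
    ¬ (boxProdPi G).edist p q ≤ 2)

lemma estar_eq_same {e : Sym2 (∀ i, V i)} (hsb : Sameb G φ e) :
    estar G φ e = invo d (φ e) := if_pos hsb

lemma estar_eq_cross {e : Sym2 (∀ i, V i)} (hsb : ¬ Sameb G φ e) :
    estar G φ e = φ e := if_neg hsb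

include hcol hev hdg hsub hdist2

lemma estar_block {e : Sym2 (∀ i, V i)} :
    ∃ j u, emb d j u = estar G φ e ∧ j ≠ pd G e := by
  by_cases hsb : Sameb G φ e
  · obtain ⟨t, j, u, hti, huj, hij⟩ := sb_decomp hev hdg hsb
    exact ⟨j, u, by rw [estar_eq_same hsb]; exact huj, Ne.symm hij⟩
  · obtain ⟨j, u, hu⟩ := emb_surj (d := d) (φ e)
    refine ⟨j, u, by rw [estar_eq_cross hsb]; exact hu, ?_⟩
    rintro rfl
    exact hsb ⟨u, hu⟩

lemma beta_ne_invo {e : Sym2 (∀ i, V i)} (he' : e ∈ (boxProdPi G).edgeSet)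
    (hsb : Sameb G φ e) : canon G col κ₀ e ≠ invo d (φ e) := by
  obtain ⟨h, hfac, hoff, hcanon⟩ := base_facts (col := col) (κ₀ := κ₀) he'
  obtain ⟨t, j, u, hti, huj, hij⟩ := sb_decomp hev hdg hsb
  intro hcontra
  exact hij (emb_inj₁ (hcanon.symm.trans (hcontra.trans huj.symm)))

lemma notW {e : Sym2 (∀ i, V i)} (he : e ∈ E₀) {g : Sym2 (∀ i, V i)}
    (hnear : ∀ w ∈ g, ∃ z ∈ e, (boxProdPi G).edist z w ≤ 1)
    (hcolor : Sameb G φ e → φ e ≠ canon G col κ₀ e →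
      canon G col κ₀ g ≠ φ e ∧ canon G col κ₀ g ≠ invo d (φ e)) :
    g ∉ Wset G col κ₀ E₀ φ := by
  intro hg
  obtain ⟨f, hf, hbadf, hsbf, hcf, hgE, w, hw, z', hz', h1⟩ := W_struct hcol hev hdg hg
  by_cases hef : f = e
  · subst hef
    rcases hcf with hcf | hcf
    · exact (hcolor hsbf hbadf).1 hcf
    · exact (hcolor hsbf hbadf).2 hcf
  · obtain ⟨z, hz, h2⟩ := hnear w hw
    exact hdist2 e he f hf (fun hh => hef hh.symm) z hz z' hz'
      (edist_two h2 (by rw [SimpleGraph.edist_comm]; exact h1))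

lemma e_notW {e : Sym2 (∀ i, V i)} (he : e ∈ E₀)
    (hbad : φ e ≠ canon G col κ₀ e) : e ∉ Wset G col κ₀ E₀ φ := by
  refine notW hcol hev hdg hsub hdist2 he ?_ ?_
  · intro w hw
    exact ⟨w, hw, by simp⟩
  · intro hsb _
    exact ⟨Ne.symm hbad, beta_ne_invo hcol hev hdg hsub hdist2 (hsub he) hsb⟩

lemma cOne_e {e : Sym2 (∀ i, V i)} (he : e ∈ E₀)
    (hbad : φ e ≠ canon G col κ₀ e) :
    cOne G col κ₀ E₀ φ e = canon G col κ₀ e :=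
  if_neg (e_notW hcol hev hdg hsub hdist2 he hbad)

lemma canon_e_eq {e : Sym2 (∀ i, V i)} (h : (boxProdPi G).Adj (eFst e) (eSnd e)) :
    canon G col κ₀ s(eFst e, eSnd e) = canon G col κ₀ e := by rw [eFst_eSnd]

lemma beta_mv {e : Sym2 (∀ i, V i)} (he' : e ∈ (boxProdPi G).edgeSet) :
    hasN G col κ₀ (eFst e) (canon G col κ₀ e) ∧
    mvN G col κ₀ (eFst e) (canon G col κ₀ e) = eSnd e ∧
    hasN G col κ₀ (eSnd e) (canon G col κ₀ e) ∧
    mvN G col κ₀ (eSnd e) (canon G col κ₀ e) = eFst e := by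
  obtain ⟨h, hfac, hoff, hcanon⟩ := base_facts (col := col) (κ₀ := κ₀) he'
  have h1 : canon G col κ₀ s(eFst e, eSnd e) = canon G col κ₀ e := by rw [eFst_eSnd]
  have h2 : canon G col κ₀ s(eSnd e, eFst e) = canon G col κ₀ e := by
    rw [Sym2.eq_swap]; exact h1
  exact ⟨⟨eSnd e, h, h1⟩, mvN_unique hcol h h1, ⟨eFst e, h.symm, h2⟩,
    mvN_unique hcol h.symm h2⟩

/-- main facts about the final switch component, when the auxiliary edges exist -/
lemma R_main {e : Sym2 (∀ i, V i)} (he : e ∈ E₀)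
    (hbad : φ e ≠ canon G col κ₀ e)
    (hC : hasN G col κ₀ (eFst e) (estar G φ e)) :
    hasN G col κ₀ (eSnd e) (estar G φ e) ∧
    (boxProdPi G).Adj (mvN G col κ₀ (eFst e) (estar G φ e))
      (mvN G col κ₀ (eSnd e) (estar G φ e)) ∧
    cOne G col κ₀ E₀ φ s(eFst e, mvN G col κ₀ (eFst e) (estar G φ e)) = φ e ∧
    cOne G col κ₀ E₀ φ s(eSnd e, mvN G col κ₀ (eSnd e) (estar G φ e)) = φ e ∧
    cOne G col κ₀ E₀ φ s(mvN G col κ₀ (eFst e) (estar G φ e),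
      mvN G col κ₀ (eSnd e) (estar G φ e)) = canon G col κ₀ e := by
  have he' := hsub he
  obtain ⟨hadj, hfac, hoff, hcanon⟩ := base_facts (col := col) (κ₀ := κ₀) he'
  obtain ⟨j, u, hu, hj⟩ := estar_block hcol hev hdg hsub hdist2 (e := e) (φ := φ)
  obtain ⟨hβx, hmvx, hβy, hmvy⟩ := beta_mv hcol hev hdg hsub hdist2 he'
  have hCy : hasN G col κ₀ (eSnd e) (estar G φ e) := hasN_congr hu (hoff j hj) hC
  have hsq := square hcol hcanon.symm hu (Ne.symm hj) hβx hC
  rw [hmvx] at hsq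
  have hXY' : (boxProdPi G).Adj (mvN G col κ₀ (eFst e) (estar G φ e))
      (mvN G col κ₀ (eSnd e) (estar G φ e)) := hsq.2.1
  have hcXY' : canon G col κ₀ s(mvN G col κ₀ (eFst e) (estar G φ e),
      mvN G col κ₀ (eSnd e) (estar G φ e)) = canon G col κ₀ e := hsq.2.2
  have hadjxX : (boxProdPi G).Adj (eFst e) (mvN G col κ₀ (eFst e) (estar G φ e)) :=
    (mvN_spec hC).1
  have hadjyY : (boxProdPi G).Adj (eSnd e) (mvN G col κ₀ (eSnd e) (estar G φ e)) :=
    (mvN_spec hCy).1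
  have hvalx : canon G col κ₀ s(eFst e, mvN G col κ₀ (eFst e) (estar G φ e)) =
      estar G φ e := (mvN_spec hC).2
  have hvaly : canon G col κ₀ s(eSnd e, mvN G col κ₀ (eSnd e) (estar G φ e)) =
      estar G φ e := (mvN_spec hCy).2
  refine ⟨hCy, hXY', ?_, ?_, ?_⟩
  · by_cases hsb : Sameb G φ e
    · have hC' := hC
      rw [estar_eq_same hsb] at hC'
      have hmem : s(eFst e, mvN G col κ₀ (eFst e) (estar G φ e)) ∈
          Wset G col κ₀ E₀ φ := by
        rw [estar_eq_same hsb]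
        exact ⟨e, he, hbad, hsb, Or.inl (Or.inr (Or.inl ⟨hC', rfl⟩))⟩
      rw [cOne, if_pos hmem, hvalx, estar_eq_same hsb, invo_invo hev]
    · have hnW : s(eFst e, mvN G col κ₀ (eFst e) (estar G φ e)) ∉
          Wset G col κ₀ E₀ φ := by
        refine notW hcol hev hdg hsub hdist2 he ?_ (fun hsb' _ => absurd hsb' hsb)
        intro w hw
        rcases Sym2.mem_iff.mp hw with rfl | rfl
        · exact ⟨eFst e, mem_left e, by simp⟩
        · exact ⟨eFst e, mem_left e, adj_edist hadjxX⟩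
      rw [cOne, if_neg hnW, hvalx, estar_eq_cross hsb]
  · by_cases hsb : Sameb G φ e
    · have hC' := hCy
      rw [estar_eq_same hsb] at hC'
      have hmem : s(eSnd e, mvN G col κ₀ (eSnd e) (estar G φ e)) ∈
          Wset G col κ₀ E₀ φ := by
        rw [estar_eq_same hsb]
        exact ⟨e, he, hbad, hsb, Or.inr (Or.inr (Or.inl ⟨hC', rfl⟩))⟩
      rw [cOne, if_pos hmem, hvaly, estar_eq_same hsb, invo_invo hev]
    · have hnW : s(eSnd e, mvN G col κ₀ (eSnd e) (estar G φ e)) ∉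
          Wset G col κ₀ E₀ φ := by
        refine notW hcol hev hdg hsub hdist2 he ?_ (fun hsb' _ => absurd hsb' hsb)
        intro w hw
        rcases Sym2.mem_iff.mp hw with rfl | rfl
        · exact ⟨eSnd e, mem_right e, by simp⟩
        · exact ⟨eSnd e, mem_right e, adj_edist hadjyY⟩
      rw [cOne, if_neg hnW, hvaly, estar_eq_cross hsb]
  · have hnW : s(mvN G col κ₀ (eFst e) (estar G φ e),
        mvN G col κ₀ (eSnd e) (estar G φ e)) ∉ Wset G col κ₀ E₀ φ := by
      refine notW hcol hev hdg hsub hdist2 he ?_ ?_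
      · intro w hw
        rcases Sym2.mem_iff.mp hw with rfl | rfl
        · exact ⟨eFst e, mem_left e, adj_edist hadjxX⟩
        · exact ⟨eSnd e, mem_right e, adj_edist hadjyY⟩
      · intro hsb _
        rw [hcXY']
        exact ⟨Ne.symm hbad, beta_ne_invo hcol hev hdg hsub hdist2 he' hsb⟩
    rw [cOne, if_neg hnW, hcXY']

omit hcol hev hdg hsub hdist2 in
lemma mem_e_cases' {e : Sym2 (∀ i, V i)} {v : ∀ i, V i} (hv : v ∈ e) :
    v = eFst e ∨ v = eSnd e := by
  rw [← eFst_eSnd e] at hv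
  exact Sym2.mem_iff.mp hv

lemma estar_ne_canon {e : Sym2 (∀ i, V i)} (he' : e ∈ (boxProdPi G).edgeSet)
    (hbad : φ e ≠ canon G col κ₀ e) : estar G φ e ≠ canon G col κ₀ e := by
  by_cases hsb : Sameb G φ e
  · rw [estar_eq_same hsb]
    exact fun hcontra => beta_ne_invo hcol hev hdg hsub hdist2 he' hsb hcontra.symm
  · rw [estar_eq_cross hsb]
    exact hbad

lemma no_alpha {e : Sym2 (∀ i, V i)} (he : e ∈ E₀)
    (hbad : φ e ≠ canon G col κ₀ e)
    (hnC : ¬ hasN G col κ₀ (eFst e) (estar G φ e)) {v p : ∀ i, V i}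
    (hv : v ∈ e) (hadj : (boxProdPi G).Adj v p) :
    cOne G col κ₀ E₀ φ s(v, p) ≠ φ e := by
  intro heq
  have he' := hsub he
  obtain ⟨hadj0, hfac, hoff, hcanon⟩ := base_facts (col := col) (κ₀ := κ₀) he'
  obtain ⟨j, u, hu, hj⟩ := estar_block hcol hev hdg hsub hdist2 (e := e) (φ := φ)
  have htrans : hasN G col κ₀ v (estar G φ e) → False := by
    intro hvN
    rcases mem_e_cases' hv with rfl | rfl
    · exact hnC hvN
    · exact hnC (hasN_congr hu (hoff j hj).symm hvN)
  by_cases hW : s(v, p) ∈ Wset G col κ₀ E₀ φ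
  · rw [cOne, if_pos hW] at heq
    have hcvp : canon G col κ₀ s(v, p) = invo d (φ e) := by
      have := congrArg (invo d) heq
      rwa [invo_invo hev] at this
    by_cases hsb : Sameb G φ e
    · refine htrans ⟨p, hadj, ?_⟩
      rw [hcvp, estar_eq_same hsb]
    · obtain ⟨f, hf, hbadf, hsbf, hcf, hgE, w, hw, z', hz', h1⟩ :=
        W_struct hcol hev hdg hW
      by_cases hef : f = e
      · exact hsb (hef ▸ hsbf)
      · have hvw : (boxProdPi G).edist v w ≤ 1 := by
          rcases Sym2.mem_iff.mp hw with rfl | rfl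
          · simp
          · exact adj_edist hadj
        exact hdist2 e he f hf (fun hh => hef hh.symm) v hv z' hz'
          (edist_two hvw (by rw [SimpleGraph.edist_comm]; exact h1))
  · rw [cOne, if_neg hW] at heq
    by_cases hsb : Sameb G φ e
    · apply hW
      have hvN : hasN G col κ₀ v (φ e) := ⟨p, hadj, heq⟩
      have hp : p = mvN G col κ₀ v (φ e) := (mvN_unique hcol hadj heq).symm
      rcases mem_e_cases' hv with rfl | rfl
      · exact ⟨e, he, hbad, hsb, Or.inl (Or.inl ⟨hvN, by rw [hp]⟩)⟩
      · exact ⟨e, he, hbad, hsb, Or.inr (Or.inl ⟨hvN, by rw [hp]⟩)⟩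
    · refine htrans ⟨p, hadj, ?_⟩
      rw [heq, estar_eq_cross hsb]

lemma R_near {e : Sym2 (∀ i, V i)} (he : e ∈ E₀)
    (hbad : φ e ≠ canon G col κ₀ e) {g : Sym2 (∀ i, V i)}
    (hg : g ∈ Rset G col κ₀ φ e) :
    g ∈ (boxProdPi G).edgeSet ∧
      ∀ w ∈ g, ∃ z ∈ e, (boxProdPi G).edist z w ≤ 1 := by
  rcases hg with rfl | ⟨hC, hcase⟩
  · exact ⟨hsub he, fun w hw => ⟨w, hw, by simp⟩⟩
  · have hM := R_main hcol hev hdg hsub hdist2 he hbad hC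
    rcases hcase with rfl | rfl | rfl
    · refine ⟨(boxProdPi G).mem_edgeSet.mpr (mvN_spec hC).1, ?_⟩
      intro w hw
      rcases Sym2.mem_iff.mp hw with rfl | rfl
      · exact ⟨eFst e, mem_left e, by simp⟩
      · exact ⟨eFst e, mem_left e, adj_edist (mvN_spec hC).1⟩
    · refine ⟨(boxProdPi G).mem_edgeSet.mpr (mvN_spec hM.1).1, ?_⟩
      intro w hw
      rcases Sym2.mem_iff.mp hw with rfl | rfl
      · exact ⟨eSnd e, mem_right e, by simp⟩
      · exact ⟨eSnd e, mem_right e, adj_edist (mvN_spec hM.1).1⟩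
    · refine ⟨(boxProdPi G).mem_edgeSet.mpr hM.2.1, ?_⟩
      intro w hw
      rcases Sym2.mem_iff.mp hw with rfl | rfl
      · exact ⟨eFst e, mem_left e, adj_edist (mvN_spec hC).1⟩
      · exact ⟨eSnd e, mem_right e, adj_edist (mvN_spec hM.1).1⟩

lemma R_disj {e f : Sym2 (∀ i, V i)} (he : e ∈ E₀) (hf : f ∈ E₀)
    (hbade : φ e ≠ canon G col κ₀ e) (hbadf : φ f ≠ canon G col κ₀ f)
    (hne : e ≠ f) {g : Sym2 (∀ i, V i)} (hge : g ∈ Rset G col κ₀ φ e)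
    (hgf : g ∈ Rset G col κ₀ φ f) : False := by
  obtain ⟨z, hz, h1⟩ := (R_near hcol hev hdg hsub hdist2 he hbade hge).2 (eFst g) (mem_left g)
  obtain ⟨z', hz', h2⟩ := (R_near hcol hev hdg hsub hdist2 hf hbadf hgf).2 (eFst g) (mem_left g)
  exact hdist2 e he f hf hne z hz z' hz'
    (edist_two h1 (by rw [SimpleGraph.edist_comm]; exact h2))

lemma cFin_on_R {e : Sym2 (∀ i, V i)} (he : e ∈ E₀)
    (hbad : φ e ≠ canon G col κ₀ e) {g : Sym2 (∀ i, V i)}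
    (hg : g ∈ Rset G col κ₀ φ e) :
    cFin G col κ₀ E₀ φ g =
      if cOne G col κ₀ E₀ φ g = φ e then canon G col κ₀ e else φ e := by
  have hex : ∃ e', e' ∈ E₀ ∧ φ e' ≠ canon G col κ₀ e' ∧ g ∈ Rset G col κ₀ φ e' :=
    ⟨e, he, hbad, hg⟩
  rw [cFin, dif_pos hex]
  have hspec := hex.choose_spec
  have heq : hex.choose = e := by
    by_contra hne
    exact R_disj hcol hev hdg hsub hdist2 hspec.1 he hspec.2.1 hbad hne hspec.2.2 hg
  rw [heq]

lemma cFin_off {g : Sym2 (∀ i, V i)}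
    (h : ¬ ∃ e', e' ∈ E₀ ∧ φ e' ≠ canon G col κ₀ e' ∧ g ∈ Rset G col κ₀ φ e') :
    cFin G col κ₀ E₀ φ g = cOne G col κ₀ E₀ φ g := dif_neg h

lemma cFin_vals {e : Sym2 (∀ i, V i)} (he : e ∈ E₀)
    (hbad : φ e ≠ canon G col κ₀ e) :
    cFin G col κ₀ E₀ φ e = φ e ∧
    (∀ hC : hasN G col κ₀ (eFst e) (estar G φ e),
      cFin G col κ₀ E₀ φ s(eFst e, mvN G col κ₀ (eFst e) (estar G φ e)) =
        canon G col κ₀ e ∧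
      cFin G col κ₀ E₀ φ s(eSnd e, mvN G col κ₀ (eSnd e) (estar G φ e)) =
        canon G col κ₀ e ∧
      cFin G col κ₀ E₀ φ s(mvN G col κ₀ (eFst e) (estar G φ e),
        mvN G col κ₀ (eSnd e) (estar G φ e)) = φ e) := by
  constructor
  · rw [cFin_on_R hcol hev hdg hsub hdist2 he hbad (Or.inl rfl),
      cOne_e hcol hev hdg hsub hdist2 he hbad, if_neg (Ne.symm hbad)]
  · intro hC
    have hM := R_main hcol hev hdg hsub hdist2 he hbad hC
    refine ⟨?_, ?_, ?_⟩
    · rw [cFin_on_R hcol hev hdg hsub hdist2 he hbad (Or.inr ⟨hC, Or.inl rfl⟩),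
        hM.2.2.1, if_pos rfl]
    · rw [cFin_on_R hcol hev hdg hsub hdist2 he hbad (Or.inr ⟨hC, Or.inr (Or.inl rfl)⟩),
        hM.2.2.2.1, if_pos rfl]
    · rw [cFin_on_R hcol hev hdg hsub hdist2 he hbad (Or.inr ⟨hC, Or.inr (Or.inr rfl)⟩),
        hM.2.2.2.2, if_neg (Ne.symm hbad)]

lemma R_distinct {e : Sym2 (∀ i, V i)} (he : e ∈ E₀)
    (hbad : φ e ≠ canon G col κ₀ e)
    (hC : hasN G col κ₀ (eFst e) (estar G φ e)) :
    eFst e ≠ eSnd e ∧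
    eFst e ≠ mvN G col κ₀ (eFst e) (estar G φ e) ∧
    eSnd e ≠ mvN G col κ₀ (eSnd e) (estar G φ e) ∧
    eFst e ≠ mvN G col κ₀ (eSnd e) (estar G φ e) ∧
    eSnd e ≠ mvN G col κ₀ (eFst e) (estar G φ e) ∧
    mvN G col κ₀ (eFst e) (estar G φ e) ≠ mvN G col κ₀ (eSnd e) (estar G φ e) := by
  have he' := hsub he
  have hM := R_main hcol hev hdg hsub hdist2 he hbad hC
  obtain ⟨hadj0, hfac, hoff, hcanon⟩ := base_facts (col := col) (κ₀ := κ₀) he'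
  have hxy : eFst e ≠ eSnd e := hadj0.ne
  have hne1 : eFst e ≠ mvN G col κ₀ (eFst e) (estar G φ e) := (mvN_spec hC).1.ne
  have hne2 : eSnd e ≠ mvN G col κ₀ (eSnd e) (estar G φ e) := (mvN_spec hM.1).1.ne
  refine ⟨hxy, hne1, hne2, ?_, ?_, ?_⟩
  · intro h
    apply estar_ne_canon hcol hev hdg hsub hdist2 he' hbad
    have hval := (mvN_spec hM.1).2
    rw [← h] at hval
    rw [← hval, Sym2.eq_swap, eFst_eSnd]
  · intro h
    apply estar_ne_canon hcol hev hdg hsub hdist2 he' hbad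
    have hval := (mvN_spec hC).2
    rw [← h] at hval
    rw [← hval, eFst_eSnd]
  · intro h
    apply hxy
    have h1 := (mvN_back hcol hC).2
    have h2 := (mvN_back hcol hM.1).2
    rw [← h1, h, h2]

lemma key {e : Sym2 (∀ i, V i)} (he : e ∈ E₀)
    (hbad : φ e ≠ canon G col κ₀ e) {g h' : Sym2 (∀ i, V i)}
    (hg : g ∈ Rset G col κ₀ φ e)
    (hnh : ¬ ∃ f, f ∈ E₀ ∧ φ f ≠ canon G col κ₀ f ∧ h' ∈ Rset G col κ₀ φ f)
    (hhE : h' ∈ (boxProdPi G).edgeSet) {v : ∀ i, V i}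
    (hvg : v ∈ g) (hvh : v ∈ h') : cFin G col κ₀ E₀ φ g ≠ cFin G col κ₀ E₀ φ h' := by
  rw [cFin_off hcol hev hdg hsub hdist2 hnh]
  have hvals := cFin_vals hcol hev hdg hsub hdist2 he hbad
  have step : ∀ g₀ : Sym2 (∀ i, V i), g₀ ∈ Rset G col κ₀ φ e →
      g₀ ∈ (boxProdPi G).edgeSet → v ∈ g₀ →
      cOne G col κ₀ E₀ φ g₀ = cFin G col κ₀ E₀ φ g →
      cFin G col κ₀ E₀ φ g ≠ cOne G col κ₀ E₀ φ h' := by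
    intro g₀ hg₀R hg₀E hvg₀ hcval heq
    have hg₀ne : g₀ ≠ h' := by
      rintro rfl
      exact hnh ⟨e, he, hbad, hg₀R⟩
    exact cOne_proper hcol hev hdg g₀ hg₀E h' hhE hg₀ne ⟨v, hvg₀, hvh⟩
      (by rw [hcval, heq])
  rcases hg with rfl | ⟨hC0, hcase⟩
  · by_cases hC : hasN G col κ₀ (eFst g) (estar G φ g)
    · have hM := R_main hcol hev hdg hsub hdist2 he hbad hC
      rcases mem_e_cases' hvg with hvx | hvy
      · refine step _ (Or.inr ⟨hC, Or.inl rfl⟩)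
          ((boxProdPi G).mem_edgeSet.mpr (mvN_spec hC).1) ?_ ?_
        · rw [hvx]; exact Sym2.mem_mk_left _ _
        · rw [hM.2.2.1, hvals.1]
      · refine step _ (Or.inr ⟨hC, Or.inr (Or.inl rfl)⟩)
          ((boxProdPi G).mem_edgeSet.mpr (mvN_spec hM.1).1) ?_ ?_
        · rw [hvy]; exact Sym2.mem_mk_left _ _
        · rw [hM.2.2.2.1, hvals.1]
    · intro heq
      rw [hvals.1] at heq
      obtain ⟨p, hp⟩ : ∃ p, s(v, p) = h' := ⟨Sym2.Mem.other hvh, Sym2.other_spec hvh⟩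
      have hadj : (boxProdPi G).Adj v p := (boxProdPi G).mem_edgeSet.mp (hp ▸ hhE)
      exact no_alpha hcol hev hdg hsub hdist2 he hbad hC hvg hadj
        (by rw [hp, ← heq])
  · have hM := R_main hcol hev hdg hsub hdist2 he hbad hC0
    rcases hcase with rfl | rfl | rfl
    · rcases Sym2.mem_iff.mp hvg with rfl | rfl
      · refine step _ (Or.inl rfl) (hsub he) (mem_left e) ?_
        rw [cOne_e hcol hev hdg hsub hdist2 he hbad, (hvals.2 hC0).1]
      · refine step _ (Or.inr ⟨hC0, Or.inr (Or.inr rfl)⟩)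
          ((boxProdPi G).mem_edgeSet.mpr hM.2.1) (Sym2.mem_mk_left _ _) ?_
        rw [hM.2.2.2.2, (hvals.2 hC0).1]
    · rcases Sym2.mem_iff.mp hvg with rfl | rfl
      · refine step _ (Or.inl rfl) (hsub he) (mem_right e) ?_
        rw [cOne_e hcol hev hdg hsub hdist2 he hbad, (hvals.2 hC0).2.1]
      · refine step _ (Or.inr ⟨hC0, Or.inr (Or.inr rfl)⟩)
          ((boxProdPi G).mem_edgeSet.mpr hM.2.1) (Sym2.mem_mk_right _ _) ?_
        rw [hM.2.2.2.2, (hvals.2 hC0).2.1]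
    · rcases Sym2.mem_iff.mp hvg with rfl | rfl
      · refine step _ (Or.inr ⟨hC0, Or.inl rfl⟩)
          ((boxProdPi G).mem_edgeSet.mpr (mvN_spec hC0).1) (Sym2.mem_mk_right _ _) ?_
        rw [hM.2.2.1, (hvals.2 hC0).2.2]
      · refine step _ (Or.inr ⟨hC0, Or.inr (Or.inl rfl)⟩)
          ((boxProdPi G).mem_edgeSet.mpr (mvN_spec hM.1).1) (Sym2.mem_mk_right _ _) ?_
        rw [hM.2.2.2.1, (hvals.2 hC0).2.2]

lemma cFin_proper : IsProperEdgeColoring (boxProdPi G) (cFin G col κ₀ E₀ φ) := by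
  rintro g hgE h hhE hne ⟨v, hvg, hvh⟩ heq
  by_cases hg : ∃ e', e' ∈ E₀ ∧ φ e' ≠ canon G col κ₀ e' ∧ g ∈ Rset G col κ₀ φ e'
  · obtain ⟨e, he, hbade, hge⟩ := hg
    by_cases hh : ∃ f', f' ∈ E₀ ∧ φ f' ≠ canon G col κ₀ f' ∧ h ∈ Rset G col κ₀ φ f'
    · obtain ⟨f, hf, hbadf, hhf⟩ := hh
      have hef : e = f := by
        by_contra hnef
        obtain ⟨z, hz, h1⟩ :=
          (R_near hcol hev hdg hsub hdist2 he hbade hge).2 v hvg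
        obtain ⟨z', hz', h2⟩ :=
          (R_near hcol hev hdg hsub hdist2 hf hbadf hhf).2 v hvh
        exact hdist2 e he f hf hnef z hz z' hz'
          (edist_two h1 (by rw [SimpleGraph.edist_comm]; exact h2))
      subst hef
      have hvals := cFin_vals hcol hev hdg hsub hdist2 he hbade
      rcases hge with rfl | ⟨hC, hcase⟩
      · rcases hhf with rfl | ⟨hC2, hcase2⟩
        · exact hne rfl
        · have hD := R_distinct hcol hev hdg hsub hdist2 he hbade hC2
          rcases hcase2 with rfl | rfl | rfl
          · rw [hvals.1, (hvals.2 hC2).1] at heq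
            exact hbade heq
          · rw [hvals.1, (hvals.2 hC2).2.1] at heq
            exact hbade heq
          · rcases mem_e_cases' hvg with rfl | rfl
            · rcases Sym2.mem_iff.mp hvh with hq | hq
              · exact hD.2.1 hq
              · exact hD.2.2.2.1 hq
            · rcases Sym2.mem_iff.mp hvh with hq | hq
              · exact hD.2.2.2.2.1 hq
              · exact hD.2.2.1 hq
      · have hD := R_distinct hcol hev hdg hsub hdist2 he hbade hC
        rcases hhf with rfl | ⟨hC2, hcase2⟩
        · rcases hcase with rfl | rfl | rfl
          · rw [hvals.1, (hvals.2 hC).1] at heq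
            exact hbade heq.symm
          · rw [hvals.1, (hvals.2 hC).2.1] at heq
            exact hbade heq.symm
          · rcases mem_e_cases' hvh with rfl | rfl
            · rcases Sym2.mem_iff.mp hvg with hq | hq
              · exact hD.2.1 hq
              · exact hD.2.2.2.1 hq
            · rcases Sym2.mem_iff.mp hvg with hq | hq
              · exact hD.2.2.2.2.1 hq
              · exact hD.2.2.1 hq
        · rcases hcase with rfl | rfl | rfl <;> rcases hcase2 with rfl | rfl | rfl
          · exact hne rfl
          · rcases Sym2.mem_iff.mp hvg with hq | hq <;>
              rcases Sym2.mem_iff.mp hvh with hq2 | hq2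
            · exact hD.1 (hq.symm.trans hq2)
            · exact hD.2.2.2.1 (hq.symm.trans hq2)
            · exact hD.2.2.2.2.1 (hq.symm.trans hq2).symm
            · exact hD.2.2.2.2.2 (hq.symm.trans hq2)
          · rw [(hvals.2 hC).1, (hvals.2 hC).2.2] at heq
            exact hbade heq.symm
          · rcases Sym2.mem_iff.mp hvg with hq | hq <;>
              rcases Sym2.mem_iff.mp hvh with hq2 | hq2
            · exact hD.1 (hq.symm.trans hq2).symm
            · exact hD.2.2.2.2.1 (hq.symm.trans hq2)
            · exact hD.2.2.2.1 (hq.symm.trans hq2).symm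
            · exact hD.2.2.2.2.2 (hq.symm.trans hq2).symm
          · exact hne rfl
          · rw [(hvals.2 hC).2.1, (hvals.2 hC).2.2] at heq
            exact hbade heq.symm
          · rw [(hvals.2 hC).2.2, (hvals.2 hC).1] at heq
            exact hbade heq
          · rw [(hvals.2 hC).2.2, (hvals.2 hC).2.1] at heq
            exact hbade heq
          · exact hne rfl
    · exact key hcol hev hdg hsub hdist2 he hbade hge hh hhE hvg hvh heq
  · by_cases hh : ∃ f', f' ∈ E₀ ∧ φ f' ≠ canon G col κ₀ f' ∧ h ∈ Rset G col κ₀ φ f'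
    · obtain ⟨f, hf, hbadf, hhf⟩ := hh
      exact key hcol hev hdg hsub hdist2 hf hbadf hhf hg hgE hvh hvg heq.symm
    · rw [cFin_off hcol hev hdg hsub hdist2 hg,
        cFin_off hcol hev hdg hsub hdist2 hh] at heq
      exact cOne_proper hcol hev hdg g hgE h hhE hne ⟨v, hvg, hvh⟩ heq

lemma cFin_agree {e : Sym2 (∀ i, V i)} (he : e ∈ E₀) :
    cFin G col κ₀ E₀ φ e = φ e := by
  by_cases hbad : φ e = canon G col κ₀ e
  · have hnex : ¬ ∃ f, f ∈ E₀ ∧ φ f ≠ canon G col κ₀ f ∧ e ∈ Rset G col κ₀ φ f := by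
      rintro ⟨f, hf, hbadf, hef⟩
      by_cases hfe : f = e
      · exact hbadf (hfe ▸ hbad)
      · obtain ⟨z, hz, h1⟩ :=
          (R_near hcol hev hdg hsub hdist2 hf hbadf hef).2 (eFst e) (mem_left e)
        refine hdist2 e he f hf (fun hh => hfe hh.symm) (eFst e) (mem_left e) z hz ?_
        rw [SimpleGraph.edist_comm] at h1
        exact le_trans h1 (by norm_num)
    rw [cFin_off hcol hev hdg hsub hdist2 hnex]
    have hnW : e ∉ Wset G col κ₀ E₀ φ := by
      refine notW hcol hev hdg hsub hdist2 he ?_ ?_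
      · intro w hw
        exact ⟨w, hw, by simp⟩
      · intro _ hb
        exact absurd hbad hb
    rw [cOne, if_neg hnW]
    exact hbad.symm
  · exact (cFin_vals hcol hev hdg hsub hdist2 he hbad).1

end RPhase
end Main
end Prod
end Ext
end Aux

/-- A distance-3 precoloring of the iterated Cartesian product of Class 1
graphs with at most `∑ Δ(Gᵢ)` colors is extendable, provided `∑ Δ(Gᵢ)` is even and
`2Δ(Gᵢ) < ∑ Δ(Gⱼ)` for every `i`. -/
theorem extend_distance3_boxProdPi {k : ℕ} (hk : 2 ≤ k) {V : Fin k → Type*}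
    [∀ i, Fintype (V i)] (G : ∀ i, SimpleGraph (V i))
    (hclass : ∀ i, IsClassOne (G i))
    (hedge : ∀ i, (G i).edgeSet.Nonempty)
    (heven : Even (∑ i, (G i).maxDegree))
    (hdeg : ∀ i, 2 * (G i).maxDegree < ∑ j, (G j).maxDegree)
    (E₀ : Set (Sym2 (∀ i, V i)))
    (φ : Sym2 (∀ i, V i) → Fin (∑ i, (G i).maxDegree))
    (hφ : IsProperEdgeColoringOn (boxProdPi G) E₀ φ)
    (hdist : ∀ e ∈ E₀, ∀ f ∈ E₀, e ≠ f → EdgeDistGE (boxProdPi G) e f 3) :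
    ∃ c : Sym2 (∀ i, V i) → Fin (∑ i, (G i).maxDegree),
      IsProperEdgeColoring (boxProdPi G) c ∧ ∀ e ∈ E₀, c e = φ e := by

  classical
  haveI : NeZero k := ⟨by omega⟩
  have hne : ∀ i, {n | ∃ c : Sym2 (V i) → Fin n, IsProperEdgeColoring (G i) c}.Nonempty := by
    intro i
    refine ⟨Fintype.card (Sym2 (V i)), fun g => (Fintype.equivFin (Sym2 (V i))) g, ?_⟩
    intro e _ f _ hnef _ hc
    exact hnef ((Fintype.equivFin (Sym2 (V i))).injective hc)
  have hcol' : ∀ i, ∃ c : Sym2 (V i) → Fin ((G i).maxDegree),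
      IsProperEdgeColoring (G i) c := by
    intro i
    have hmem : chromIndex (G i) ∈ {n | ∃ c : Sym2 (V i) → Fin n,
        IsProperEdgeColoring (G i) c} := Nat.sInf_mem (hne i)
    rwa [hclass i] at hmem
  choose col hcol using hcol'
  have hNpos : 0 < ∑ i, (G i).maxDegree := by
    have := hdeg ⟨0, by omega⟩
    omega
  set κ₀ : Fin (∑ i, (G i).maxDegree) := ⟨0, hNpos⟩ with hκ₀
  have hsub : E₀ ⊆ (boxProdPi G).edgeSet := hφ.1
  have hdist2 : ∀ e ∈ E₀, ∀ f ∈ E₀, e ≠ f → ∀ p ∈ e, ∀ q ∈ f,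
      ¬ (boxProdPi G).edist p q ≤ 2 := by
    intro e he f hf hnef p hp q hq hle
    have h3 := hdist e he f hf hnef p hp q hq
    have : (3 : ℕ∞) ≤ 2 := le_trans h3 hle
    norm_num at this
  exact ⟨Ext.cFin G col κ₀ E₀ φ,
    Ext.cFin_proper hcol heven hdeg hsub hdist2,
    fun e he => Ext.cFin_agree hcol heven hdeg hsub hdist2 he⟩
end

section
/- Let k ≥ 2 and let H₁, …, H_k be pairwise disjoint finite sets with union H = H₁ ∪ ⋯ ∪ H_k. If |H| is even and 2|Hᵢ| < |H| for every i ∈ {1, …, k}, then the elements of H can be partitioned into pairs such that no two elements of any pair belong to the same set Hᵢ. Equivalently, there exists a fixed-point-free involution f : H → H such that for every x ∈ H and every i, if x ∈ Hᵢ then f(x) ∉ Hᵢ. -/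
open SimpleGraph
open scoped Classical

/-- Pairwise disjoint finite sets `H₁, …, H_k` whose union `H` has even
cardinality and satisfies `2|Hᵢ| < |H|` for all `i` admit a pairing of the elements of `H`
(a fixed-point-free involution) such that no pair lies inside a single `Hᵢ`. -/
theorem pairing_of_disjoint_sets {α : Type*} [DecidableEq α] {k : ℕ} (hk : 2 ≤ k)
    (H : Fin k → Finset α)
    (hdisj : ∀ i j, i ≠ j → Disjoint (H i) (H j))
    (heven : Even (Finset.univ.biUnion H).card)
    (hsize : ∀ i, 2 * (H i).card < (Finset.univ.biUnion H).card) :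
    ∃ f : α → α, ∀ x ∈ Finset.univ.biUnion H,
      f x ∈ Finset.univ.biUnion H ∧ f (f x) = x ∧ f x ≠ x ∧
        ∀ i, x ∈ H i → f x ∉ H i := by
  classical
  set l : List α := (List.finRange k).flatMap (fun i => (H i).toList) with hl
  have hmem : ∀ x, x ∈ l ↔ x ∈ Finset.univ.biUnion H := by
    intro x
    simp [hl, List.mem_flatMap, Finset.mem_biUnion]
  have hnd : l.Nodup := by
    rw [hl, List.nodup_flatMap]
    refine ⟨fun i _ => (H i).nodup_toList, ?_⟩
    refine (List.nodup_finRange k).pairwise_of_forall_ne ?_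
    intro i _ j _ hij
    intro x hx hy
    exact (hdisj i j hij).forall_ne_finset (by simpa using hx) (by simpa using hy) rfl
  have hlen : l.length = (Finset.univ.biUnion H).card := by
    rw [← List.toFinset_card_of_nodup hnd]
    congr 1
    ext x
    simp [hmem x]
  obtain ⟨m, hm⟩ := heven
  have hm2 : (Finset.univ.biUnion H).card = 2 * m := by omega
  have hmpos : 0 < m := by
    have := hsize ⟨0, by omega⟩
    omega
  have hln : l.length = 2 * m := by omega
  have hlpos : 0 < l.length := by omega
  -- block bounds lemma
  have hblock : ∀ i : Fin k, ∀ x ∈ H i,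
      ∃ a, a ≤ List.idxOf x l ∧ List.idxOf x l < a + (H i).card ∧
        ∀ y ∈ H i, a ≤ List.idxOf y l ∧ List.idxOf y l < a + (H i).card := by
    intro i x hx
    obtain ⟨s, t, hst⟩ := List.append_of_mem (List.mem_finRange i)
    have hnds : (s ++ i :: t).Nodup := hst ▸ List.nodup_finRange k
    have hins : i ∉ s := fun h => (List.disjoint_of_nodup_append hnds) h (List.mem_cons_self (a := i) (l := t))
    have hdecomp : l = s.flatMap (fun j => (H j).toList) ++
        ((H i).toList ++ t.flatMap (fun j => (H j).toList)) := by
      rw [hl, hst]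
      simp [List.flatMap_append, List.flatMap_cons]
    refine ⟨(s.flatMap (fun j => (H j).toList)).length, ?_⟩
    have key : ∀ y ∈ H i,
        List.idxOf y l = (s.flatMap (fun j => (H j).toList)).length + List.idxOf y (H i).toList := by
      intro y hy
      have hns : y ∉ s.flatMap (fun j => (H j).toList) := by
        intro h
        obtain ⟨j, hjs, hyj⟩ := List.mem_flatMap.mp h
        have hji : j ≠ i := fun h => hins (h ▸ hjs)
        exact (hdisj j i hji).forall_ne_finset (by simpa using hyj) hy rfl
      rw [hdecomp, List.idxOf_append_of_notMem hns,
        List.idxOf_append_of_mem (by simpa using hy)]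
    have hb : ∀ y ∈ H i, List.idxOf y (H i).toList < (H i).card := by
      intro y hy
      have := List.idxOf_lt_length_iff.mpr (show y ∈ (H i).toList by simpa using hy)
      simpa using this
    refine ⟨by rw [key x hx]; omega, by have := hb x hx; rw [key x hx]; omega, ?_⟩
    intro y hy
    have := hb y hy
    rw [key y hy]
    omega
  refine ⟨fun x => if h : x ∈ l then l.get ⟨(List.idxOf x l + m) % l.length,
      Nat.mod_lt _ hlpos⟩ else x, ?_⟩
  intro x hx
  have hxl : x ∈ l := (hmem x).mpr hx
  set p := List.idxOf x l with hp
  have hpl : p < l.length := List.idxOf_lt_length_iff.mpr hxl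
  set j := (p + m) % l.length with hj
  have hjl : j < l.length := Nat.mod_lt _ hlpos
  have hcase : j = p + m ∨ (m ≤ p ∧ j = p - m) := by
    rcases Nat.lt_or_ge (p + m) (2 * m) with h | h
    · left; rw [hj, hln, Nat.mod_eq_of_lt h]
    · right
      refine ⟨by omega, ?_⟩
      rw [hj, hln, Nat.mod_eq_sub_mod h, Nat.mod_eq_of_lt (by omega)]; omega
  have hfx : (fun x => if h : x ∈ l then l.get ⟨(List.idxOf x l + m) % l.length,
      Nat.mod_lt _ hlpos⟩ else x) x = l.get ⟨j, hjl⟩ := by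
    simp only [dif_pos hxl]; rfl
  rw [hfx]
  have hfxl : l.get ⟨j, hjl⟩ ∈ l := l.get_mem _
  have hidxfx : List.idxOf (l.get ⟨j, hjl⟩) l = j := List.get_idxOf hnd _
  refine ⟨(hmem _).mp hfxl, ?_, ?_, ?_⟩
  · simp only [dif_pos hfxl, hidxfx]
    have hjm : (j + m) % l.length = p := by
      rcases hcase with h | ⟨h1, h2⟩
      · rw [h, hln, show p + m + m = p + 2 * m by ring, Nat.add_mod_right,
          Nat.mod_eq_of_lt (by omega)]
      · rw [show j + m = p by omega, Nat.mod_eq_of_lt hpl]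
    simp only [hjm]
    exact List.idxOf_get hpl
  · intro heq
    have hpj : p = j := by rw [hp, ← heq, hidxfx]
    have hpl2 : p < 2 * m := by omega
    omega
  · intro i hxi hfxi
    obtain ⟨a, hap, hpc, hall⟩ := hblock i x hxi
    obtain ⟨haj, hjc⟩ := hall _ hfxi
    rw [hidxfx] at haj hjc
    rw [← hp] at hap hpc
    have hc : 2 * (H i).card < 2 * m := by
      have := hsize i; omega
    omega
end

section
/- Let k ≥ 1 and let C₂ₖ₊₁ be the odd cycle on 2k+1 vertices. Let φ be a partial proper edge coloring of the Cartesian product C₂ₖ₊₁ □ K₂ defined on a set E₀ of edges using at most 3 colors, such that any two distinct edges of E₀ are at distance at least 3 in C₂ₖ₊₁ □ K₂. Then φ extends to a proper edge coloring of C₂ₖ₊₁ □ K₂ using 3 colors. -/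
open SimpleGraph
open scoped Classical

open Fin.CommRing

def other1 (v : Fin 3) : Fin 3 := if v = 0 then 1 else 0
def other2 (v : Fin 3) : Fin 3 := if v = 2 then 1 else 2
def third (a b : Fin 3) : Fin 3 := -(a+b)
def uFun (a b : Fin 3) : Fin 3 := if a = b then other1 b else third a b
def wFun (a b : Fin 3) : Fin 3 := third (uFun a b) b

lemma uFun_ne_a (a b : Fin 3) : uFun a b ≠ a := by revert a b; decide
lemma uFun_ne_b (a b : Fin 3) : uFun a b ≠ b := by revert a b; decide
lemma wFun_ne_b (a b : Fin 3) : wFun a b ≠ b := by revert a b; decide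
lemma uFun_ne_wFun (a b : Fin 3) : uFun a b ≠ wFun a b := by revert a b; decide


lemma exists_fill (m : ℕ) (D : Set (Fin (m+3))) (v : Fin (m+3) → Fin 3)
    (hS : ∀ i, i ∈ D → i + 1 ∈ D → v i ≠ v (i+1)) :
    ∃ c : Fin (m+3) → Fin 3, (∀ i, c i ≠ c (i+1)) ∧ ∀ i ∈ D, c i = v i := by
  rcases D.eq_empty_or_nonempty with hD | ⟨p₀, hp₀⟩
  · subst hD
    refine ⟨fun i => if i.val = m+2 then 2 else ⟨i.val % 2, by omega⟩, fun i => ?_, by simp⟩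
    show (if i.val = m+2 then (2:Fin 3) else ⟨i.val % 2, by omega⟩) ≠
      (if (i+1).val = m+2 then (2:Fin 3) else ⟨(i+1).val % 2, by omega⟩)
    rcases Nat.lt_or_ge i.val (m+2) with hi | hi
    · have hvi : (i+1).val = i.val + 1 := by
        rw [Fin.val_add_one_of_lt]; rw [Fin.lt_iff_val_lt_val, Fin.val_last]; omega
      rcases Nat.lt_or_ge (i.val + 1) (m+2) with hj | hj
      · rw [if_neg (by omega), if_neg (by omega)]
        simp only [ne_eq, Fin.mk.injEq, hvi]
        omega
      · rw [if_neg (by omega), if_pos (by omega)]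
        intro h
        have := congrArg Fin.val h
        simp at this
        omega
    · have hi2 : i.val = m + 2 := by omega
      have hlast : i = Fin.last (m+2) := by apply Fin.ext; simpa using hi2
      have h0 : (i + 1) = 0 := by rw [hlast]; apply Fin.ext; simp [Fin.val_add_one]
      rw [if_pos hi2]
      have hv0 : (i+1).val = 0 := by rw [h0]; rfl
      rw [if_neg (by omega)]
      intro h
      have := congrArg Fin.val h
      simp [hv0] at this
  · let o : Fin (m+3) → ℕ := fun i => (i - p₀).val
    let O : Set ℕ := o '' D
    let prev : ℕ → ℕ := fun x => Nat.findGreatest (· ∈ O) x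
    let SS : ℕ → Set ℕ := fun x => {y | (x < y ∧ y ∈ O) ∨ y = m+3}
    let nxt : ℕ → ℕ := fun x => sInf (SS x)
    have hO0 : 0 ∈ O := ⟨p₀, hp₀, by simp [o]⟩
    have hOlt : ∀ x ∈ O, x < m+3 := by rintro x ⟨i, _, rfl⟩; exact (i - p₀).isLt
    have hinv : ∀ i : Fin (m+3), p₀ + ((o i : ℕ) : Fin (m+3)) = i := by
      intro i; show p₀ + (((i - p₀).val : ℕ) : Fin (m+3)) = i
      rw [Fin.cast_val_eq_self]; ring
    have hoinj : ∀ i j : Fin (m+3), o i = o j → i = j := by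
      intro i j h
      rw [← hinv i, ← hinv j, h]
    have hprev_mem : ∀ x, prev x ∈ O := fun x => Nat.findGreatest_spec (Nat.zero_le x) hO0
    have hprev_le : ∀ x, prev x ≤ x := fun x => Nat.findGreatest_le x
    have hprev_max : ∀ x y, y ≤ x → y ∈ O → y ≤ prev x := fun x y h1 h2 => Nat.le_findGreatest h1 h2
    have hSS_ne : ∀ x, (SS x).Nonempty := fun x => ⟨m+3, Or.inr rfl⟩
    have hnxt_mem : ∀ x, nxt x ∈ SS x := fun x => Nat.sInf_mem (hSS_ne x)
    have hnxt_min : ∀ x y, y ∈ SS x → nxt x ≤ y := fun x y h => Nat.sInf_le h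
    let A : ℕ → Fin 3 := fun x => v (p₀ + ((prev x : ℕ) : Fin (m+3)))
    let B : ℕ → Fin 3 := fun x => v (p₀ + ((nxt x : ℕ) : Fin (m+3)))
    let c : Fin (m+3) → Fin 3 := fun i =>
      if i ∈ D then v i
      else if (o i - prev (o i)) % 2 = 1 then uFun (A (o i)) (B (o i)) else wFun (A (o i)) (B (o i))
    have hext : ∀ i ∈ D, c i = v i := fun i hi => if_pos hi
    refine ⟨c, fun i => ?_, hext⟩
    have hx : o i < m+3 := (i - p₀).isLt
    have hUW : ∀ i' : Fin (m+3), i' ∉ D →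
        c i' = uFun (A (o i')) (B (o i')) ∨ c i' = wFun (A (o i')) (B (o i')) := by
      intro i' hi'
      show (if i' ∈ D then v i' else _) = _ ∨ (if i' ∈ D then v i' else _) = _
      rw [if_neg hi']
      split
      · exact Or.inl rfl
      · exact Or.inr rfl
    have hBne : ∀ i' : Fin (m+3), i' ∉ D → c i' ≠ B (o i') := by
      intro i' hi'
      rcases hUW i' hi' with h | h <;> rw [h]
      · exact uFun_ne_b _ _
      · exact wFun_ne_b _ _
    rcases Nat.lt_or_ge (o i) (m + 2) with hlt | hge
    · -- o (i+1) = o i + 1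
      have hsucc : o (i+1) = o i + 1 := by
        show ((i+1) - p₀).val = (i - p₀).val + 1
        have h1 : (i + 1) - p₀ = (i - p₀) + 1 := by ring
        rw [h1, Fin.val_add_one_of_lt]
        rw [Fin.lt_iff_val_lt_val, Fin.val_last]
        exact hlt
      by_cases hiD : i ∈ D <;> by_cases hjD : i + 1 ∈ D
      · rw [hext i hiD, hext _ hjD]; exact hS i hiD hjD
      · -- i ∈ D, i+1 ∉ D : c (i+1) = uFun (A (oi+1)) _, A (oi+1) = v i
        have hxO : o i ∈ O := ⟨i, hiD, rfl⟩
        have hx1O : o i + 1 ∉ O := by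
          rw [← hsucc]
          rintro ⟨j, hj, hjeq⟩
          exact hjD ((hoinj j (i+1) hjeq) ▸ hj)
        have hprev1 : prev (o i + 1) = o i := by
          have h1 : prev (o i + 1) ≤ o i + 1 := hprev_le _
          have h2 : prev (o i + 1) ≠ o i + 1 := fun h => hx1O (h ▸ hprev_mem _)
          have h3 : o i ≤ prev (o i + 1) := hprev_max _ _ (by omega) hxO
          omega
        have hpar : (o (i+1) - prev (o (i+1))) % 2 = 1 := by rw [hsucc, hprev1]; omega
        have hc1 : c (i+1) = uFun (A (o (i+1))) (B (o (i+1))) := by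
          show (if i+1 ∈ D then _ else _) = _
          rw [if_neg hjD, if_pos hpar]
        have hA : A (o (i+1)) = v i := by
          show v (p₀ + ((prev (o (i+1)) : ℕ) : Fin (m+3))) = v i
          rw [hsucc, hprev1, hinv]
        rw [hext i hiD, hc1, hA]
        exact (uFun_ne_a _ _).symm
      · -- i ∉ D, i+1 ∈ D : B (o i) = v (i+1)
        have hx1O : o i + 1 ∈ O := ⟨i+1, hjD, hsucc⟩
        have hnxt1 : nxt (o i) = o i + 1 := by
          have h1 : nxt (o i) ≤ o i + 1 := hnxt_min _ _ (Or.inl ⟨by omega, hx1O⟩)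
          rcases hnxt_mem (o i) with ⟨h2, _⟩ | h2
          · omega
          · omega
        have hB : B (o i) = v (i+1) := by
          show v (p₀ + ((nxt (o i) : ℕ) : Fin (m+3))) = v (i+1)
          rw [hnxt1, ← hsucc, hinv]
        rw [hext _ hjD, ← hB]
        exact hBne i hiD
      · -- both free
        have hxO : o i ∉ O := fun h => by
          rcases h with ⟨j, hj, hjeq⟩; exact hiD ((hoinj j i hjeq) ▸ hj)
        have hx1O : o i + 1 ∉ O := by
          rw [← hsucc]
          rintro ⟨j, hj, hjeq⟩
          exact hjD ((hoinj j (i+1) hjeq) ▸ hj)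
        have hprev1 : prev (o i + 1) = prev (o i) := by
          have h1 : prev (o i + 1) ≤ o i + 1 := hprev_le _
          have h2 : prev (o i + 1) ≠ o i + 1 := fun h => hx1O (h ▸ hprev_mem _)
          have h3 : prev (o i) ≤ prev (o i + 1) := hprev_max _ _ (by have := hprev_le (o i); omega) (hprev_mem _)
          have h4 : prev (o i + 1) ≤ prev (o i) := hprev_max _ _ (by omega) (hprev_mem _)
          omega
        have hnxt1 : nxt (o i + 1) = nxt (o i) := by
          have h1 : nxt (o i + 1) ≤ nxt (o i) := by
            rcases hnxt_mem (o i) with ⟨h2, h3⟩ | h2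
            · have : nxt (o i) ≠ o i + 1 := fun h => hx1O (h ▸ h3)
              exact hnxt_min _ _ (Or.inl ⟨by omega, h3⟩)
            · exact hnxt_min _ _ (Or.inr h2)
          have h2 : nxt (o i) ≤ nxt (o i + 1) := by
            rcases hnxt_mem (o i + 1) with ⟨h3, h4⟩ | h3
            · exact hnxt_min _ _ (Or.inl ⟨by omega, h4⟩)
            · exact hnxt_min _ _ (Or.inr h3)
          omega
        have hA : A (o (i+1)) = A (o i) := by
          show v (p₀ + ((prev (o (i+1)) : ℕ) : Fin (m+3))) = v (p₀ + ((prev (o i) : ℕ) : Fin (m+3)))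
          rw [hsucc, hprev1]
        have hB : B (o (i+1)) = B (o i) := by
          show v (p₀ + ((nxt (o (i+1)) : ℕ) : Fin (m+3))) = v (p₀ + ((nxt (o i) : ℕ) : Fin (m+3)))
          rw [hsucc, hnxt1]
        have hple : prev (o i) ≤ o i := hprev_le _
        have hc0 : c i = (if (o i - prev (o i)) % 2 = 1 then uFun (A (o i)) (B (o i)) else wFun (A (o i)) (B (o i))) := by
          show (if i ∈ D then _ else _) = _
          rw [if_neg hiD]
        have hc1 : c (i+1) = (if (o (i+1) - prev (o (i+1))) % 2 = 1 then uFun (A (o (i+1))) (B (o (i+1))) else wFun (A (o (i+1))) (B (o (i+1)))) := by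
          show (if i+1 ∈ D then _ else _) = _
          rw [if_neg hjD]
        rw [hc0, hc1, hA, hB, hsucc, hprev1]
        by_cases hpar : (o i - prev (o i)) % 2 = 1
        · rw [if_pos hpar, if_neg (by omega)]
          exact uFun_ne_wFun _ _
        · rw [if_neg hpar, if_pos (by omega)]
          exact (uFun_ne_wFun _ _).symm
    · -- o i = m+2, wrap around: i + 1 = p₀
      have hx2 : o i = m + 2 := by omega
      have hip : i + 1 = p₀ := by
        have h1 : i - p₀ = Fin.last (m+2) := by apply Fin.ext; simpa using hx2
        have h2 : i - p₀ = -1 := by apply Fin.ext; rw [h1]; simp [Fin.coe_neg_one]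
        have h3 := sub_eq_iff_eq_add.mp h2
        rw [h3]; ring
      by_cases hiD : i ∈ D
      · rw [hext i hiD, hext _ (hip ▸ hp₀)]
        exact hS i hiD (hip ▸ hp₀)
      · have hnxtN : nxt (o i) = m + 3 := by
          rcases hnxt_mem (o i) with ⟨h1, h2⟩ | h1
          · have := hOlt _ h2; omega
          · exact h1
        have hB : B (o i) = v p₀ := by
          show v (p₀ + ((nxt (o i) : ℕ) : Fin (m+3))) = v p₀
          rw [hnxtN]
          norm_num
        rw [hip, hext _ hp₀, ← hB]
        exact hBne i hiD


variable {m : ℕ}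

def tE (m : ℕ) (i : Fin (m+3)) : Sym2 (Fin (m+3) × Fin 2) := s((i,0),(i+1,0))
def bE (m : ℕ) (i : Fin (m+3)) : Sym2 (Fin (m+3) × Fin 2) := s((i,1),(i+1,1))
def rE (m : ℕ) (i : Fin (m+3)) : Sym2 (Fin (m+3) × Fin 2) := s((i,0),(i,1))

lemma fin_add_ne (i : Fin (m+3)) (d : ℕ) (h0 : 0 < d) (h1 : d < m+3) :
    i ≠ i + (d : Fin (m+3)) := by
  intro h
  have h2 : (d : Fin (m+3)) = 0 := by
    have h3 := congrArg (· - i) h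
    simp [sub_eq_iff_eq_add] at h3
    exact h3.symm
  rw [Fin.natCast_eq_zero] at h2
  exact absurd (Nat.le_of_dvd h0 h2) (by omega)

lemma fin_ne_add_one (i : Fin (m+3)) : i ≠ i + 1 := by
  have := fin_add_ne i 1 (by norm_num) (by omega)
  simpa using this

lemma fin_ne_add_two (i : Fin (m+3)) : i ≠ i + 1 + 1 := by
  have := fin_add_ne i 2 (by norm_num) (by omega)
  rw [show ((2:ℕ):Fin (m+3)) = 1 + 1 by push_cast; ring, ← add_assoc] at this
  exact this

lemma tE_ne_bE (i j : Fin (m+3)) : tE m i ≠ bE m j := by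
  simp [tE, bE, Sym2.eq_iff, Prod.ext_iff]
lemma tE_ne_rE (i j : Fin (m+3)) : tE m i ≠ rE m j := by
  simp [tE, rE, Sym2.eq_iff, Prod.ext_iff]
lemma bE_ne_rE (i j : Fin (m+3)) : bE m i ≠ rE m j := by
  simp [bE, rE, Sym2.eq_iff, Prod.ext_iff]
lemma rE_inj (i j : Fin (m+3)) (h : rE m i = rE m j) : i = j := by
  simp [rE, Sym2.eq_iff, Prod.ext_iff] at h
  tauto
lemma rE_ne_succ (i : Fin (m+3)) : rE m i ≠ rE m (i+1) :=
  fun h => fin_ne_add_one i (rE_inj _ _ h)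
lemma rE_ne_succ2 (i : Fin (m+3)) : rE m i ≠ rE m (i+1+1) :=
  fun h => fin_ne_add_two i (rE_inj _ _ h)
lemma tE_ne_succ (i : Fin (m+3)) : tE m i ≠ tE m (i+1) := by
  intro h
  simp only [tE, Sym2.eq_iff, Prod.ext_iff] at h
  rcases h with ⟨⟨h1,-⟩,-⟩ | ⟨⟨h1,-⟩,-⟩
  · exact fin_ne_add_one i h1
  · exact fin_ne_add_two i h1
lemma bE_ne_succ (i : Fin (m+3)) : bE m i ≠ bE m (i+1) := by
  intro h
  simp only [bE, Sym2.eq_iff, Prod.ext_iff] at h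
  rcases h with ⟨⟨h1,-⟩,-⟩ | ⟨⟨h1,-⟩,-⟩
  · exact fin_ne_add_one i h1
  · exact fin_ne_add_two i h1

local notation "GG" => (SimpleGraph.boxProd (cycleGraph (m+3)) (⊤ : SimpleGraph (Fin 2)))

lemma adjC (i : Fin (m+3)) (ε : Fin 2) : (GG).Adj (i,ε) (i+1,ε) := by
  rw [boxProd_adj]; left
  exact ⟨by rw [cycleGraph_adj]; right; ring, rfl⟩

lemma adjR (i : Fin (m+3)) (ε δ : Fin 2) (h : ε ≠ δ) : (GG).Adj (i,ε) (i,δ) := by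
  rw [boxProd_adj]; right
  exact ⟨by simp [h], rfl⟩

lemma dist1 (x y : Fin (m+3) × Fin 2) (h : (GG).Adj x y) : (GG).edist x y ≤ 2 := by
  have := edist_le (Walk.cons h Walk.nil)
  simp only [Walk.length_cons, Walk.length_nil, zero_add, Nat.cast_one] at this
  exact le_trans this (by norm_num)

lemma dist2 (x y z : Fin (m+3) × Fin 2) (h : (GG).Adj x y) (h2 : (GG).Adj y z) :
    (GG).edist x z ≤ 2 := by
  simpa using edist_le (Walk.cons h (Walk.cons h2 Walk.nil))

lemma fin2cases (a : Fin 2) : a = 0 ∨ a = 1 := by omega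

lemma edge_form (e : Sym2 (Fin (m+3) × Fin 2)) (he : e ∈ (GG).edgeSet) :
    (∃ i, e = rE m i) ∨ (∃ i ε, e = s((i,ε),(i+1,ε))) := by
  induction e with
  | _ x y =>
    rw [mem_edgeSet, boxProd_adj] at he
    rcases he with ⟨hadj, h2⟩ | ⟨hadj, h1⟩
    · right
      have hcyc : y.1 = x.1 + 1 ∨ x.1 = y.1 + 1 := by
        rw [cycleGraph_adj] at hadj
        rcases hadj with h | h
        · right; rw [sub_eq_iff_eq_add] at h; rw [h]; ring
        · left; rw [sub_eq_iff_eq_add] at h; rw [h]; ring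
      rcases hcyc with h | h
      · exact ⟨x.1, x.2, by rw [show ((x.1, x.2) : Fin (m+3) × Fin 2) = x from rfl,
          show ((x.1 + 1, x.2) : Fin (m+3) × Fin 2) = y from Prod.ext h.symm h2]⟩
      · refine ⟨y.1, y.2, ?_⟩
        rw [Sym2.eq_swap]
        rw [show ((y.1, y.2) : Fin (m+3) × Fin 2) = y from rfl,
          show ((y.1 + 1, y.2) : Fin (m+3) × Fin 2) = x from Prod.ext h.symm h2.symm]
    · left
      refine ⟨x.1, ?_⟩
      have hne : x.2 ≠ y.2 := by simpa using hadj
      rcases fin2cases x.2 with h2 | h2 <;> rcases fin2cases y.2 with h3 | h3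
      · exact absurd (h2.trans h3.symm) hne
      · rw [rE, show ((x.1, 0) : Fin (m+3) × Fin 2) = x from Prod.ext rfl h2.symm,
          show ((x.1, 1) : Fin (m+3) × Fin 2) = y from Prod.ext h1 h3.symm]
      · rw [rE, Sym2.eq_swap,
          show ((x.1, 0) : Fin (m+3) × Fin 2) = y from Prod.ext h1 h3.symm,
          show ((x.1, 1) : Fin (m+3) × Fin 2) = x from Prod.ext rfl h2.symm]
      · exact absurd (h2.trans h3.symm) hne

lemma mem_rE (z : Fin (m+3) × Fin 2) (j : Fin (m+3)) (h : z ∈ rE m j) : z.1 = j := by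
  rw [rE, Sym2.mem_iff] at h
  rcases h with h | h <;> rw [h]

lemma mem_cyc (z : Fin (m+3) × Fin 2) (i : Fin (m+3)) (ε : Fin 2)
    (h : z ∈ (s((i,ε),(i+1,ε)) : Sym2 (Fin (m+3) × Fin 2))) :
    (z.1 = i ∨ z.1 = i + 1) ∧ z.2 = ε := by
  rw [Sym2.mem_iff] at h
  rcases h with h | h <;> rw [h] <;> simp

lemma third_ne_left (a b : Fin 3) (h : a ≠ b) : third a b ≠ a := by revert a b; decide
lemma third_ne_right (a b : Fin 3) (h : a ≠ b) : third a b ≠ b := by revert a b; decide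
lemma third_other (v : Fin 3) : third (other1 v) (other2 v) = v := by revert v; decide
lemma other1_ne_other2 (v : Fin 3) : other1 v ≠ other2 v := by revert v; decide

def fColor (c : Fin (m+3) → Fin 3) (x y : Fin (m+3) × Fin 2) : Fin 3 :=
  if x.1 = y.1 then third (c (x.1 - 1)) (c x.1)
  else if y.1 = x.1 + 1 then c x.1
  else if x.1 = y.1 + 1 then c y.1
  else 0

lemma fColor_symm (c : Fin (m+3) → Fin 3) (x y : Fin (m+3) × Fin 2) :
    fColor c x y = fColor c y x := by
  unfold fColor
  by_cases h1 : x.1 = y.1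
  · rw [if_pos h1, if_pos h1.symm, h1]
  · rw [if_neg h1, if_neg (Ne.symm h1)]
    by_cases h2 : y.1 = x.1 + 1
    · have h3 : ¬ x.1 = y.1 + 1 := by
        intro h3
        exact fin_ne_add_two x.1 (by rw [← h2, ← h3])
      rw [if_pos h2, if_neg h3, if_pos h2]
    · rw [if_neg h2]
      by_cases h3 : x.1 = y.1 + 1
      · rw [if_pos h3, if_pos h3]
      · rw [if_neg h3, if_neg h3, if_neg h2]

noncomputable def ccol (c : Fin (m+3) → Fin 3) : Sym2 (Fin (m+3) × Fin 2) → Fin 3 :=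
  Sym2.lift ⟨fun x y => fColor c x y, fColor_symm c⟩

lemma ccol_cyc (c : Fin (m+3) → Fin 3) (i : Fin (m+3)) (ε : Fin 2) :
    ccol c (s((i,ε),(i+1,ε))) = c i := by
  rw [ccol, Sym2.lift_mk]
  show fColor c (i,ε) (i+1,ε) = c i
  unfold fColor
  rw [if_neg (by exact fun h => fin_ne_add_one i h), if_pos rfl]

lemma ccol_rE (c : Fin (m+3) → Fin 3) (i : Fin (m+3)) :
    ccol c (rE m i) = third (c (i-1)) (c i) := by
  rw [rE, ccol, Sym2.lift_mk]
  show fColor c (i,0) (i,1) = _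
  unfold fColor
  rw [if_pos rfl]

lemma ccol_proper (c : Fin (m+3) → Fin 3) (hc : ∀ i, c i ≠ c (i+1)) :
    IsProperEdgeColoring (GG) (ccol c) := by
  have hc' : ∀ i : Fin (m+3), c (i - 1) ≠ c i := by
    intro i
    have := hc (i-1)
    rwa [sub_add_cancel] at this
  intro e he f hf hne ⟨z, hze, hzf⟩
  rcases edge_form e he with ⟨j, rfl⟩ | ⟨i, ε, rfl⟩ <;>
    rcases edge_form f hf with ⟨j', rfl⟩ | ⟨i', ε', rfl⟩
  · exact absurd (congrArg (rE m) ((mem_rE z j hze).symm.trans (mem_rE z j' hzf))) hne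
  · rw [ccol_rE, ccol_cyc]
    have h1 := mem_rE z j hze
    rcases (mem_cyc z i' ε' hzf).1 with h2 | h2
    · rw [h1.symm.trans h2]
      exact third_ne_right _ _ (hc' i')
    · rw [h1.symm.trans h2, add_sub_cancel_right]
      exact third_ne_left _ _ (hc i')
  · rw [ccol_rE, ccol_cyc]
    have h1 := mem_rE z j' hzf
    rcases (mem_cyc z i ε hze).1 with h2 | h2
    · rw [h1.symm.trans h2]
      exact (third_ne_right _ _ (hc' i)).symm
    · rw [h1.symm.trans h2, add_sub_cancel_right]
      exact (third_ne_left _ _ (hc i)).symm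
  · rw [ccol_cyc, ccol_cyc]
    obtain ⟨hz1, hz2⟩ := mem_cyc z i ε hze
    obtain ⟨hz1', hz2'⟩ := mem_cyc z i' ε' hzf
    have hεε : ε = ε' := hz2.symm.trans hz2'
    have hii : i ≠ i' := by
      intro h
      exact hne (by rw [h, hεε])
    rcases hz1 with h | h <;> rcases hz1' with h' | h'
    · exact absurd (h.symm.trans h') hii
    · rw [h.symm.trans h']
      exact (hc i').symm
    · rw [← (h.symm.trans h')]
      exact hc i
    · exact absurd (add_right_cancel (h.symm.trans h')) hii

def DSet (m : ℕ) (E₀ : Set (Sym2 (Fin (m+3) × Fin 2))) : Set (Fin (m+3)) :=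
  {i | tE m i ∈ E₀ ∨ bE m i ∈ E₀ ∨ rE m i ∈ E₀ ∨ rE m (i+1) ∈ E₀}

noncomputable def vFun (m : ℕ) (E₀ : Set (Sym2 (Fin (m+3) × Fin 2)))
    (φ : Sym2 (Fin (m+3) × Fin 2) → Fin 3) : Fin (m+3) → Fin 3 := fun i =>
  if tE m i ∈ E₀ then φ (tE m i)
  else if bE m i ∈ E₀ then φ (bE m i)
  else if rE m i ∈ E₀ then other2 (φ (rE m i))
  else if rE m (i+1) ∈ E₀ then other1 (φ (rE m (i+1)))
  else 0

lemma main_ext (E₀ : Set (Sym2 (Fin (m+3) × Fin 2)))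
    (φ : Sym2 (Fin (m+3) × Fin 2) → Fin 3)
    (hsub : E₀ ⊆ (GG).edgeSet)
    (hdist : ∀ e ∈ E₀, ∀ f ∈ E₀, e ≠ f → EdgeDistGE (GG) e f 3) :
    ∃ c : Sym2 (Fin (m+3) × Fin 2) → Fin 3,
      IsProperEdgeColoring (GG) c ∧ ∀ e ∈ E₀, c e = φ e := by
  have dist0 : ∀ x : Fin (m+3) × Fin 2, (GG).edist x x ≤ 2 := by intro x; simp
  have ex : ∀ {e f}, e ∈ E₀ → f ∈ E₀ → e ≠ f → ∀ {x y}, x ∈ e → y ∈ f →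
      (GG).edist x y ≤ 2 → False := by
    intro e f he hf hne x y hx hy hle
    have h3 := hdist e he f hf hne x hx y hy
    have h23 : (3:ℕ∞) ≤ 2 := le_trans h3 hle
    norm_num at h23
  have X1 : ∀ i, tE m i ∈ E₀ → bE m i ∈ E₀ → False := fun i h1 h2 =>
    ex h1 h2 (tE_ne_bE i i) (by rw [tE]; exact Sym2.mem_mk_left _ _)
      (by rw [bE]; exact Sym2.mem_mk_left _ _) (dist1 _ _ (adjR i 0 1 (by decide)))
  have X2 : ∀ i, tE m i ∈ E₀ → rE m i ∈ E₀ → False := fun i h1 h2 =>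
    ex h1 h2 (tE_ne_rE i i) (by rw [tE]; exact Sym2.mem_mk_left _ _)
      (by rw [rE]; exact Sym2.mem_mk_left _ _) (dist0 _)
  have X2' : ∀ i, bE m i ∈ E₀ → rE m i ∈ E₀ → False := fun i h1 h2 =>
    ex h1 h2 (bE_ne_rE i i) (by rw [bE]; exact Sym2.mem_mk_left _ _)
      (by rw [rE]; exact Sym2.mem_mk_right _ _) (dist0 _)
  have X3 : ∀ i, tE m i ∈ E₀ → rE m (i+1) ∈ E₀ → False := fun i h1 h2 =>
    ex h1 h2 (tE_ne_rE i (i+1)) (by rw [tE]; exact Sym2.mem_mk_right _ _)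
      (by rw [rE]; exact Sym2.mem_mk_left _ _) (dist0 _)
  have X3' : ∀ i, bE m i ∈ E₀ → rE m (i+1) ∈ E₀ → False := fun i h1 h2 =>
    ex h1 h2 (bE_ne_rE i (i+1)) (by rw [bE]; exact Sym2.mem_mk_right _ _)
      (by rw [rE]; exact Sym2.mem_mk_right _ _) (dist0 _)
  have X4 : ∀ i, rE m i ∈ E₀ → rE m (i+1) ∈ E₀ → False := fun i h1 h2 =>
    ex h1 h2 (rE_ne_succ i) (by rw [rE]; exact Sym2.mem_mk_left _ _)
      (by rw [rE]; exact Sym2.mem_mk_left _ _) (dist1 _ _ (adjC i 0))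
  have X5 : ∀ i, rE m i ∈ E₀ → rE m (i+1+1) ∈ E₀ → False := fun i h1 h2 =>
    ex h1 h2 (rE_ne_succ2 i) (by rw [rE]; exact Sym2.mem_mk_left _ _)
      (by rw [rE]; exact Sym2.mem_mk_left _ _) (dist2 _ _ _ (adjC i 0) (adjC (i+1) 0))
  have X6 : ∀ i, tE m i ∈ E₀ → tE m (i+1) ∈ E₀ → False := fun i h1 h2 =>
    ex h1 h2 (tE_ne_succ i) (by rw [tE]; exact Sym2.mem_mk_right _ _)
      (by rw [tE]; exact Sym2.mem_mk_left _ _) (dist0 _)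
  have X6' : ∀ i, bE m i ∈ E₀ → bE m (i+1) ∈ E₀ → False := fun i h1 h2 =>
    ex h1 h2 (bE_ne_succ i) (by rw [bE]; exact Sym2.mem_mk_right _ _)
      (by rw [bE]; exact Sym2.mem_mk_left _ _) (dist0 _)
  have X7 : ∀ i, tE m i ∈ E₀ → bE m (i+1) ∈ E₀ → False := fun i h1 h2 =>
    ex h1 h2 (tE_ne_bE i (i+1)) (by rw [tE]; exact Sym2.mem_mk_right _ _)
      (by rw [bE]; exact Sym2.mem_mk_left _ _) (dist1 _ _ (adjR (i+1) 0 1 (by decide)))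
  have X7' : ∀ i, bE m i ∈ E₀ → tE m (i+1) ∈ E₀ → False := fun i h1 h2 =>
    ex h1 h2 (Ne.symm (tE_ne_bE (i+1) i)) (by rw [bE]; exact Sym2.mem_mk_right _ _)
      (by rw [tE]; exact Sym2.mem_mk_left _ _) (dist1 _ _ (adjR (i+1) 1 0 (by decide)))
  have X8 : ∀ i, tE m i ∈ E₀ → rE m (i+1+1) ∈ E₀ → False := fun i h1 h2 =>
    ex h1 h2 (tE_ne_rE i (i+1+1)) (by rw [tE]; exact Sym2.mem_mk_right _ _)
      (by rw [rE]; exact Sym2.mem_mk_left _ _) (dist1 _ _ (adjC (i+1) 0))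
  have X8' : ∀ i, bE m i ∈ E₀ → rE m (i+1+1) ∈ E₀ → False := fun i h1 h2 =>
    ex h1 h2 (bE_ne_rE i (i+1+1)) (by rw [bE]; exact Sym2.mem_mk_right _ _)
      (by rw [rE]; exact Sym2.mem_mk_right _ _) (dist1 _ _ (adjC (i+1) 1))
  have X9 : ∀ i, rE m i ∈ E₀ → tE m (i+1) ∈ E₀ → False := fun i h1 h2 =>
    ex h1 h2 (Ne.symm (tE_ne_rE (i+1) i)) (by rw [rE]; exact Sym2.mem_mk_left _ _)
      (by rw [tE]; exact Sym2.mem_mk_left _ _) (dist1 _ _ (adjC i 0))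
  have X9' : ∀ i, rE m i ∈ E₀ → bE m (i+1) ∈ E₀ → False := fun i h1 h2 =>
    ex h1 h2 (Ne.symm (bE_ne_rE (i+1) i)) (by rw [rE]; exact Sym2.mem_mk_right _ _)
      (by rw [bE]; exact Sym2.mem_mk_left _ _) (dist1 _ _ (adjC i 1))
  have vspec1 : ∀ i, tE m i ∈ E₀ → vFun m E₀ φ i = φ (tE m i) := by
    intro i h
    rw [vFun, if_pos h]
  have vspec2 : ∀ i, bE m i ∈ E₀ → vFun m E₀ φ i = φ (bE m i) := by
    intro i h
    rw [vFun, if_neg (fun ht => X1 i ht h), if_pos h]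
  have vspec3 : ∀ i, rE m i ∈ E₀ → vFun m E₀ φ i = other2 (φ (rE m i)) := by
    intro i h
    rw [vFun, if_neg (fun ht => X2 i ht h), if_neg (fun ht => X2' i ht h), if_pos h]
  have vspec4 : ∀ i, rE m (i+1) ∈ E₀ → vFun m E₀ φ i = other1 (φ (rE m (i+1))) := by
    intro i h
    rw [vFun, if_neg (fun ht => X3 i ht h), if_neg (fun ht => X3' i ht h),
      if_neg (fun ht => X4 i ht h), if_pos h]
  have hS : ∀ i, i ∈ DSet m E₀ → i + 1 ∈ DSet m E₀ → vFun m E₀ φ i ≠ vFun m E₀ φ (i+1) := by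
    intro i h1 h2
    rcases h1 with h1|h1|h1|h1 <;> rcases h2 with h2|h2|h2|h2
    · exact (X6 i h1 h2).elim
    · exact (X7 i h1 h2).elim
    · exact (X3 i h1 h2).elim
    · exact (X8 i h1 h2).elim
    · exact (X7' i h1 h2).elim
    · exact (X6' i h1 h2).elim
    · exact (X3' i h1 h2).elim
    · exact (X8' i h1 h2).elim
    · exact (X9 i h1 h2).elim
    · exact (X9' i h1 h2).elim
    · exact (X4 i h1 h2).elim
    · exact (X5 i h1 h2).elim
    · exact (X2 (i+1) h2 h1).elim
    · exact (X2' (i+1) h2 h1).elim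
    · rw [vspec4 i h1, vspec3 (i+1) h2]
      exact other1_ne_other2 _
    · exact (X4 (i+1) h1 h2).elim
  obtain ⟨c, hc, hcd⟩ := exists_fill m (DSet m E₀) (vFun m E₀ φ) hS
  refine ⟨ccol c, ccol_proper c hc, ?_⟩
  intro e he
  rcases edge_form e (hsub he) with ⟨j, rfl⟩ | ⟨i, ε, rfl⟩
  · rw [ccol_rE]
    have hjD : j ∈ DSet m E₀ := Or.inr (Or.inr (Or.inl he))
    have hj1 : rE m ((j-1)+1) ∈ E₀ := by rwa [sub_add_cancel]
    have hj1D : j - 1 ∈ DSet m E₀ := Or.inr (Or.inr (Or.inr hj1))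
    have e1 : c (j-1) = other1 (φ (rE m j)) := by
      rw [hcd _ hj1D]
      have h4 := vspec4 (j-1) hj1
      rwa [sub_add_cancel] at h4
    have e2 : c j = other2 (φ (rE m j)) := by rw [hcd _ hjD, vspec3 j he]
    rw [e1, e2, third_other]
  · rcases fin2cases ε with rfl | rfl
    · have he' : tE m i ∈ E₀ := he
      have hiD : i ∈ DSet m E₀ := Or.inl he'
      rw [ccol_cyc, hcd i hiD, vspec1 i he']
      rfl
    · have he' : bE m i ∈ E₀ := he
      have hiD : i ∈ DSet m E₀ := Or.inr (Or.inl he')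
      rw [ccol_cyc, hcd i hiD, vspec2 i he']
      rfl


lemma main_ext' (N : ℕ) (hN : 3 ≤ N) (E₀ : Set (Sym2 (Fin N × Fin 2)))
    (φ : Sym2 (Fin N × Fin 2) → Fin 3)
    (hsub : E₀ ⊆ (cycleGraph N □ (⊤ : SimpleGraph (Fin 2))).edgeSet)
    (hdist : ∀ e ∈ E₀, ∀ f ∈ E₀, e ≠ f →
      EdgeDistGE (cycleGraph N □ (⊤ : SimpleGraph (Fin 2))) e f 3) :
    ∃ c : Sym2 (Fin N × Fin 2) → Fin 3,
      IsProperEdgeColoring (cycleGraph N □ (⊤ : SimpleGraph (Fin 2))) c ∧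
        ∀ e ∈ E₀, c e = φ e := by
  obtain ⟨m, rfl⟩ : ∃ m, N = m + 3 := ⟨N - 3, by omega⟩
  exact main_ext E₀ φ hsub hdist

/-- A distance-3 precoloring of `C₂ₖ₊₁ □ K₂` (`k ≥ 1`) with at most 3
colors is extendable to a proper 3-edge coloring. -/
theorem extend_distance3_oddCycle_times_edge {k : ℕ} (hk : 1 ≤ k)
    (E₀ : Set (Sym2 (Fin (2 * k + 1) × Fin 2)))
    (φ : Sym2 (Fin (2 * k + 1) × Fin 2) → Fin 3)
    (hφ : IsProperEdgeColoringOn (cycleGraph (2 * k + 1) □ (⊤ : SimpleGraph (Fin 2))) E₀ φ)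
    (hdist : ∀ e ∈ E₀, ∀ f ∈ E₀, e ≠ f →
      EdgeDistGE (cycleGraph (2 * k + 1) □ (⊤ : SimpleGraph (Fin 2))) e f 3) :
    ∃ c : Sym2 (Fin (2 * k + 1) × Fin 2) → Fin 3,
      IsProperEdgeColoring (cycleGraph (2 * k + 1) □ (⊤ : SimpleGraph (Fin 2))) c ∧
        ∀ e ∈ E₀, c e = φ e := by
  exact main_ext' (2*k+1) (by omega) E₀ φ hφ.1 hdist
end

section
/- Let G be a bipartite simple graph with maximum degree Δ(G) ≥ 1. Let φ be a partial proper edge coloring of the Cartesian product G □ C₄ defined on a set E₀ of edges using at most Δ(G) + 2 colors, such that any two distinct edges of E₀ are at distance at least 3 in G □ C₄. Then φ extends to a proper edge coloring of G □ C₄ using Δ(G) + 2 colors. -/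
open SimpleGraph
open scoped Classical

section Koenig
variable {V : Type*} {G : SimpleGraph V}

lemma walk_parity (C : G.Coloring (Fin 2)) {x y : V} (p : G.Walk x y) :
    (C x = C y) ↔ Even p.length := by
  induction p with
  | nil => simp
  | @cons u w v h q ih =>
    have hne : C u ≠ C w := C.valid h
    have key : ∀ a b c : Fin 2, a ≠ b → (a = c ↔ ¬(b = c)) := by decide
    simp only [SimpleGraph.Walk.length_cons, Nat.even_add_one, ← ih]
    exact key _ _ _ hne

lemma alt_list {n : ℕ} (c : Sym2 V → Fin n) :
    ∀ (l : List (Sym2 V)) (a b : Fin n), a ≠ b → (∀ e ∈ l, c e = a ∨ c e = b) →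
      l.Chain' (fun e f => c e ≠ c f) → ∀ (h : l ≠ []),
      c (l.head h) = a → c (l.getLast h) = if Even l.length then b else a := by
  intro l
  induction l with
  | nil => intro a b _ _ _ h; exact absurd rfl h
  | cons e t ih =>
    intro a b hab hmem hch h he
    match t, ih with
    | [], _ => simpa using he
    | f :: t', ih =>
      have hef : c e ≠ c f := (List.isChain_cons_cons.mp hch).1
      have hcf : c f = b := by
        rcases hmem f (by simp) with h1 | h1
        · exact absurd h1 (by rw [List.head_cons] at he; rw [he] at hef; exact hef.symm)
        · exact h1
      have ihr := ih b a hab.symm (fun g hg => (hmem g (by simp [hg])).symm)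
        (List.isChain_cons_cons.mp hch).2 (by simp) (by simpa using hcf)
      rw [List.getLast_cons (by simp)]
      rw [ihr]
      simp only [List.length_cons]
      rcases Nat.even_or_odd t'.length with hev | hod
      · have h1 : ¬ Even (t'.length + 1) := by simp [Nat.even_add_one, hev]
        have h2 : Even (t'.length + 1 + 1) := by simp [Nat.even_add_one, h1]
        simp [h1, h2]
      · have h1 : Even (t'.length + 1) := by simp [Nat.even_add_one, Nat.not_even_iff_odd]; exact hod
        have h2 : ¬ Even (t'.length + 1 + 1) := by simp [Nat.even_add_one, h1]
        simp [h1, h2]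

lemma walk_edges_chain : ∀ {x y : V} (p : G.Walk x y),
    p.edges.Chain' (fun e f => ∃ v, v ∈ e ∧ v ∈ f) := by
  intro x y p
  induction p with
  | nil => exact List.isChain_nil
  | @cons u w v h q ih =>
    rw [SimpleGraph.Walk.edges_cons]; unfold List.Chain'; rw [List.isChain_cons]
    refine ⟨?_, ih⟩
    intro g hg
    cases q with
    | nil => simp at hg
    | cons h' q' =>
      rw [SimpleGraph.Walk.edges_cons] at hg
      simp only [List.head?_cons, Option.mem_some_iff] at hg
      exact ⟨w, by simp, by rw [← hg]; simp⟩

lemma walk_head_mem {x y : V} (p : G.Walk x y) (h : p.edges ≠ []) :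
    x ∈ p.edges.head h := by
  cases p with
  | nil => simp at h
  | cons h' q => simp

lemma head_eq_of_eq {β : Type*} {l₁ l₂ : List β} (h : l₁ = l₂) (h₁ : l₁ ≠ []) (h₂ : l₂ ≠ []) :
    l₁.head h₁ = l₂.head h₂ := by subst h; rfl

lemma walk_getLast_mem {x y : V} (p : G.Walk x y) (h : p.edges ≠ []) :
    y ∈ p.edges.getLast h := by
  have h2 : p.reverse.edges ≠ [] := by simpa [SimpleGraph.Walk.edges_reverse] using h
  have heq : p.edges.getLast h = p.reverse.edges.head h2 := by
    rw [List.getLast_eq_head_reverse]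
    exact head_eq_of_eq (SimpleGraph.Walk.edges_reverse p).symm _ _
  rw [heq]
  exact walk_head_mem p.reverse h2
end Koenig

section H
variable {V : Type*} {G : SimpleGraph V}
lemma exists_missing {n : ℕ} (t : Finset (Fin n)) (h : t.card < n) : ∃ a : Fin n, a ∉ t := by
  by_contra hc
  push_neg at hc
  have h2 : (Finset.univ : Finset (Fin n)) ⊆ t := fun a _ => hc a
  have := Finset.card_le_card h2
  simp at this
  omega

lemma chain'_ne_of {β : Type*} {n : ℕ} (Rs : β → β → Prop) (P : β → Prop) (f : β → Fin n)
    (hp : ∀ g g', P g → P g' → Rs g g' → g ≠ g' → f g ≠ f g') :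
    ∀ l : List β, (∀ g ∈ l, P g) → l.Chain' Rs → l.Nodup →
      l.Chain' (fun g g' => f g ≠ f g') := by
  intro l
  induction l with
  | nil => exact fun _ _ _ => List.isChain_nil
  | cons g t ih =>
    intro hP hch hnd
    cases t with
    | nil => exact List.isChain_singleton _
    | cons g' t' =>
      unfold List.Chain' at hch ⊢; rw [List.isChain_cons_cons] at hch ⊢
      have hnd' := hnd
      rw [List.nodup_cons] at hnd'
      refine ⟨hp _ _ (hP g (by simp)) (hP g' (by simp)) hch.1 ?_, ?_⟩
      · intro hgg
        exact hnd'.1 (by rw [hgg]; simp)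
      · exact ih (fun x hx => hP x (by simp [hx])) hch.2 hnd.of_cons
end H


section K
variable {V : Type*} {G : SimpleGraph V}

theorem koenig [Fintype V] (G : SimpleGraph V) (C : G.Coloring (Fin 2)) {n : ℕ}
    (hn : ∀ v, G.degree v ≤ n) (hpos : 0 < n) :
    ∃ κ : Sym2 V → Fin n, IsProperEdgeColoring G κ := by
  suffices claim : ∀ t : Finset (Sym2 V), ↑t ⊆ G.edgeSet →
      ∃ κ : Sym2 V → Fin n, ∀ e ∈ t, ∀ f ∈ t, e ≠ f → (∃ w, w ∈ e ∧ w ∈ f) → κ e ≠ κ f by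
    obtain ⟨κ, hκ⟩ := claim G.edgeFinset (by simp)
    exact ⟨κ, fun e he f hf => hκ e (by rwa [mem_edgeFinset]) f (by rwa [mem_edgeFinset])⟩
  intro t
  induction t using Finset.induction_on with
  | empty => exact fun _ => ⟨fun _ => ⟨0, hpos⟩, by simp⟩
  | @insert e s hes ih =>
    induction e using Sym2.ind with
    | _ u v =>
    intro hsub
    have hs : ↑s ⊆ G.edgeSet := fun x hx => hsub (by simp [hx])
    obtain ⟨κ, hκ⟩ := ih hs
    have he : s(u, v) ∈ G.edgeSet := hsub (by simp)
    have huv : G.Adj u v := by rwa [mem_edgeSet] at he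
    -- missing colors
    have miss : ∀ w, w ∈ s(u, v) → ∃ a : Fin n, ∀ f ∈ s, w ∈ f → κ f ≠ a := by
      intro w hw
      have hsubinc : s.filter (fun f => w ∈ f) ⊆ (G.incidenceFinset w).erase s(u, v) := by
        intro f hf
        rw [Finset.mem_filter] at hf
        refine Finset.mem_erase.mpr ⟨?_, ?_⟩
        · rintro rfl; exact hes hf.1
        · rw [mem_incidenceFinset]; exact ⟨hs hf.1, hf.2⟩
      have hecard : ((G.incidenceFinset w).erase s(u, v)).card < n := by
        have h1 : s(u, v) ∈ G.incidenceFinset w := by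
          rw [mem_incidenceFinset]; exact ⟨he, hw⟩
        have h2 := Finset.card_erase_of_mem h1
        rw [card_incidenceFinset_eq_degree] at h2
        have h3 := hn w
        have h4 : 1 ≤ G.degree w := by
          rw [← card_incidenceFinset_eq_degree]
          exact Finset.card_pos.mpr ⟨_, h1⟩
        omega
      have hcard : ((s.filter (fun f => w ∈ f)).image κ).card < n :=
        lt_of_le_of_lt (le_trans Finset.card_image_le (Finset.card_le_card hsubinc)) hecard
      obtain ⟨a, ha⟩ := exists_missing _ hcard
      exact ⟨a, fun f hf hwf hfa => ha (Finset.mem_image.mpr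
        ⟨f, Finset.mem_filter.mpr ⟨hf, hwf⟩, hfa⟩)⟩
    obtain ⟨a, hma⟩ := miss u (by simp)
    obtain ⟨b, hmb⟩ := miss v (by simp)
    by_cases hav : ∀ f ∈ s, v ∈ f → κ f ≠ a
    · -- color e with a directly
      refine ⟨Function.update κ s(u, v) a, ?_⟩
      intro f hf g hg hfg hsh
      rw [Finset.mem_insert] at hf hg
      obtain ⟨w, hwf, hwg⟩ := hsh
      rcases hf with rfl | hf <;> rcases hg with rfl | hg
      · exact absurd rfl hfg
      · rw [Function.update_self, Function.update_of_ne (by rintro rfl; exact hes hg)]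
        rcases Sym2.mem_iff.mp hwf with rfl | rfl
        · exact fun hh => hma g hg hwg hh.symm
        · exact fun hh => hav g hg hwg hh.symm
      · rw [Function.update_self, Function.update_of_ne (by rintro rfl; exact hes hf)]
        rcases Sym2.mem_iff.mp hwg with rfl | rfl
        · exact hma f hf hwf
        · exact hav f hf hwf
      · rw [Function.update_of_ne (by rintro rfl; exact hes hf),
            Function.update_of_ne (by rintro rfl; exact hes hg)]
        exact hκ f hf g hg hfg ⟨w, hwf, hwg⟩
    · -- Kempe chain swap
      push_neg at hav
      obtain ⟨f₀, hf₀s, hvf₀, hκf₀⟩ := hav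
      have hab : a ≠ b := by rintro rfl; exact hmb f₀ hf₀s hvf₀ hκf₀
      set K : SimpleGraph V :=
        { Adj := fun x y => G.Adj x y ∧ s(x, y) ∈ s ∧ (κ s(x, y) = a ∨ κ s(x, y) = b),
          symm := by
            constructor
            intro x y ⟨h1, h2, h3⟩
            refine ⟨h1.symm, ?_, ?_⟩ <;> rwa [Sym2.eq_swap]
          loopless := ⟨fun x h => G.loopless.irrefl x h.1⟩ } with hK
      have hKG : K ≤ G := fun {x y} h => h.1
      have hKedge : ∀ g, g ∈ K.edgeSet → g ∈ s ∧ (κ g = a ∨ κ g = b) := by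
        intro g hg
        induction g using Sym2.ind with
        | _ x y => rw [mem_edgeSet] at hg; exact ⟨hg.2.1, hg.2.2⟩
      have hreach : ¬ K.Reachable u v := by
        intro hr
        obtain ⟨p₀⟩ := hr
        obtain ⟨q, hqp⟩ := p₀.toPath
        have hne' : q.edges ≠ [] := by
          cases q with
          | nil => exact absurd rfl huv.ne
          | cons h' q' => simp
        have hKe : ∀ g ∈ q.edges, g ∈ s ∧ (κ g = a ∨ κ g = b) :=
          fun g hg => hKedge g (q.edges_subset_edgeSet hg)
        have hch : q.edges.Chain' (fun g g' => κ g ≠ κ g') := by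
          refine chain'_ne_of _ (fun g => g ∈ s) κ ?_ _ (fun g hg => (hKe g hg).1)
            (walk_edges_chain q) hqp.isTrail.edges_nodup
          intro g g' hg hg' hsh hne
          exact hκ g hg g' hg' hne hsh
        have hhead : κ (q.edges.head hne') = b := by
          have hm := walk_head_mem q hne'
          have h2 := hKe _ (List.head_mem hne')
          rcases h2.2 with h1 | h1
          · exact absurd h1 (hma _ h2.1 hm)
          · exact h1
        have hlast : κ (q.edges.getLast hne') = a := by
          have hm := walk_getLast_mem q hne'
          have h2 := hKe _ (List.getLast_mem hne')
          rcases h2.2 with h1 | h1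
          · exact h1
          · exact absurd h1 (hmb _ h2.1 hm)
        have halt := alt_list κ q.edges b a hab.symm
          (fun g hg => ((hKe g hg).2).symm) hch hne' hhead
        rw [hlast] at halt
        have heven : Even q.edges.length := by
          by_contra hodd
          rw [if_neg hodd] at halt
          exact hab halt
        rw [SimpleGraph.Walk.length_edges] at heven
        have hpar := walk_parity C (q.mapLe hKG)
        rw [SimpleGraph.Walk.mapLe, SimpleGraph.Walk.length_map] at hpar
        exact C.valid huv (hpar.mpr heven)
      -- the swap
      set Sw : Sym2 V → Prop :=
        fun g => g ∈ s ∧ (κ g = a ∨ κ g = b) ∧ (∃ x ∈ g, K.Reachable u x) with hSw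
      set κ' : Sym2 V → Fin n :=
        fun g => if Sw g then (if κ g = a then b else a) else κ g with hκ'def
      have spread : ∀ g ∈ s, (κ g = a ∨ κ g = b) → ∀ x ∈ g, K.Reachable u x →
          ∀ y ∈ g, K.Reachable u y := by
        intro g hg hab' x hx hrx y hy
        induction g using Sym2.ind with
        | _ p₁ p₂ =>
          have hadj : K.Adj p₁ p₂ := by
            have : G.Adj p₁ p₂ := by rw [← mem_edgeSet]; exact hs hg
            exact ⟨this, hg, hab'⟩
          rcases Sym2.mem_iff.mp hx with rfl | rfl <;>
            rcases Sym2.mem_iff.mp hy with rfl | rfl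
          · exact hrx
          · exact hrx.trans hadj.reachable
          · exact hrx.trans hadj.symm.reachable
          · exact hrx
      have hval1 : ∀ g, Sw g → κ' g = (if κ g = a then b else a) := by
        intro g h; simp only [hκ'def]; exact if_pos h
      have hval2 : ∀ g, ¬ Sw g → κ' g = κ g := by
        intro g h; simp only [hκ'def]; exact if_neg h
      have hκ'prop : ∀ f ∈ s, ∀ g ∈ s, f ≠ g → (∃ w, w ∈ f ∧ w ∈ g) → κ' f ≠ κ' g := by
        intro f hf g hg hfg hsh
        by_cases hswf : Sw f <;> by_cases hswg : Sw g
        · rw [hval1 f hswf, hval1 g hswg]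
          rcases hswf.2.1 with h1 | h1 <;> rcases hswg.2.1 with h2 | h2
          · exact absurd (h1.trans h2.symm) (hκ f hf g hg hfg hsh)
          · rw [if_pos h1, if_neg (fun hha => hab (hha.symm.trans h2))]
            exact hab.symm
          · rw [if_neg (fun hha => hab (hha.symm.trans h1)), if_pos h2]
            exact hab
          · exact absurd (h1.trans h2.symm) (hκ f hf g hg hfg hsh)
        · rw [hval1 f hswf, hval2 g hswg]
          rcases hswf.2.2 with ⟨x, hx, hrx⟩
          obtain ⟨w, hwf, hwg⟩ := hsh
          by_cases hgab : κ g = a ∨ κ g = b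
          · exfalso
            apply hswg
            refine ⟨hg, hgab, ⟨w, hwg, ?_⟩⟩
            exact spread f hf hswf.2.1 x hx hrx w hwf
          · push_neg at hgab
            rcases hswf.2.1 with h1 | h1
            · rw [if_pos h1]; exact fun hh => hgab.2 hh.symm
            · rw [if_neg (fun hha => hab (hha.symm.trans h1))]
              exact fun hh => hgab.1 hh.symm
        · rw [hval2 f hswf, hval1 g hswg]
          rcases hswg.2.2 with ⟨x, hx, hrx⟩
          obtain ⟨w, hwf, hwg⟩ := hsh
          by_cases hfab : κ f = a ∨ κ f = b
          · exfalso
            apply hswf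
            refine ⟨hf, hfab, ⟨w, hwf, ?_⟩⟩
            exact spread g hg hswg.2.1 x hx hrx w hwg
          · push_neg at hfab
            rcases hswg.2.1 with h1 | h1
            · rw [if_pos h1]; exact hfab.2
            · rw [if_neg (fun hha => hab (hha.symm.trans h1))]
              exact hfab.1
        · rw [hval2 f hswf, hval2 g hswg]
          exact hκ f hf g hg hfg hsh
      have hu' : ∀ f ∈ s, u ∈ f → κ' f ≠ b := by
        intro f hf huf
        by_cases hswf : Sw f
        · rw [hval1 f hswf]
          have h1 : κ f ≠ a := hma f hf huf
          rcases hswf.2.1 with h2 | h2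
          · exact absurd h2 h1
          · rw [if_neg h1]; exact hab
        · rw [hval2 f hswf]
          intro hfb
          exact hswf ⟨hf, Or.inr hfb, ⟨u, huf, SimpleGraph.Reachable.refl u⟩⟩
      have hv' : ∀ f ∈ s, v ∈ f → κ' f ≠ b := by
        intro f hf hvf
        by_cases hswf : Sw f
        · exfalso
          rcases hswf.2.2 with ⟨x, hx, hrx⟩
          exact hreach (spread f hf hswf.2.1 x hx hrx v hvf)
        · rw [hval2 f hswf]
          exact hmb f hf hvf
      refine ⟨Function.update κ' s(u, v) b, ?_⟩
      intro f hf g hg hfg hsh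
      rw [Finset.mem_insert] at hf hg
      obtain ⟨w, hwf, hwg⟩ := hsh
      rcases hf with rfl | hf <;> rcases hg with rfl | hg
      · exact absurd rfl hfg
      · rw [Function.update_self, Function.update_of_ne (by rintro rfl; exact hes hg)]
        rcases Sym2.mem_iff.mp hwf with rfl | rfl
        · exact fun hh => hu' g hg hwg hh.symm
        · exact fun hh => hv' g hg hwg hh.symm
      · rw [Function.update_self, Function.update_of_ne (by rintro rfl; exact hes hf)]
        rcases Sym2.mem_iff.mp hwg with rfl | rfl
        · exact hu' f hf hwf
        · exact hv' f hf hwf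
      · rw [Function.update_of_ne (by rintro rfl; exact hes hf),
            Function.update_of_ne (by rintro rfl; exact hes hg)]
        exact hκ'prop f hf g hg hfg ⟨w, hwf, hwg⟩
end K

section Swap
variable {V : Type*} {G' : SimpleGraph V} {n : ℕ} {c : Sym2 V → Fin n}

lemma recolor1 (hc : IsProperEdgeColoring G' c) {x y : V} (hxy : G'.Adj x y) {t : Fin n}
    (hx : ∀ g ∈ G'.edgeSet, g ≠ s(x, y) → x ∈ g → c g ≠ t)
    (hy : ∀ g ∈ G'.edgeSet, g ≠ s(x, y) → y ∈ g → c g ≠ t) :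
    ∃ c' : Sym2 V → Fin n, IsProperEdgeColoring G' c' ∧ c' s(x, y) = t ∧
      ∀ g, g ≠ s(x, y) → c' g = c g := by
  refine ⟨Function.update c s(x, y) t, ?_, Function.update_self _ _ _,
    fun g hg => Function.update_of_ne hg _ _⟩
  intro e he f hf hef ⟨w, hwe, hwf⟩
  by_cases he' : e = s(x, y) <;> by_cases hf' : f = s(x, y)
  · exact absurd (he'.trans hf'.symm) hef
  · subst he'
    rw [Function.update_self, Function.update_of_ne hf']
    rcases Sym2.mem_iff.mp hwe with rfl | rfl
    · exact fun hh => hx f hf hf' hwf hh.symm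
    · exact fun hh => hy f hf hf' hwf hh.symm
  · subst hf'
    rw [Function.update_self, Function.update_of_ne he']
    rcases Sym2.mem_iff.mp hwf with rfl | rfl
    · exact hx e he he' hwe
    · exact hy e he he' hwe
  · rw [Function.update_of_ne he', Function.update_of_ne hf']
    exact hc e he f hf hef ⟨w, hwe, hwf⟩

lemma swap4 (hc : IsProperEdgeColoring G' c)
    {p q r s : V} (h1 : G'.Adj p q) (h2 : G'.Adj q r) (h3 : G'.Adj r s) (h4 : G'.Adj s p)
    (hpr : p ≠ r) (hqs : q ≠ s) {β γ : Fin n} (hbg : β ≠ γ)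
    (e1 : c s(p, q) = β) (e2 : c s(q, r) = γ) (e3 : c s(r, s) = β) (e4 : c s(s, p) = γ) :
    ∃ c' : Sym2 V → Fin n, IsProperEdgeColoring G' c' ∧
      c' s(p, q) = γ ∧ c' s(q, r) = β ∧ c' s(r, s) = γ ∧ c' s(s, p) = β ∧
      ∀ g, g ≠ s(p, q) → g ≠ s(q, r) → g ≠ s(r, s) → g ≠ s(s, p) → c' g = c g := by
  have hpq := h1.ne
  have hqr := h2.ne
  have hrs := h3.ne
  have hsp := h4.ne
  set c' : Sym2 V → Fin n := fun g =>
    if g = s(p, q) ∨ g = s(r, s) then γ else if g = s(q, r) ∨ g = s(s, p) then β else c g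
    with hc'def
  have d1 : s(p, q) ≠ s(q, r) := by
    intro h
    rcases Sym2.eq_iff.mp h with ⟨ha, hb⟩ | ⟨ha, hb⟩
    exacts [hpq ha, hpr ha]
  have d2 : s(p, q) ≠ s(r, s) := by
    intro h
    rcases Sym2.eq_iff.mp h with ⟨ha, hb⟩ | ⟨ha, hb⟩
    exacts [hpr ha, hsp ha.symm]
  have d3 : s(p, q) ≠ s(s, p) := by
    intro h
    rcases Sym2.eq_iff.mp h with ⟨ha, hb⟩ | ⟨ha, hb⟩
    exacts [hsp ha.symm, hqs hb]
  have d4 : s(q, r) ≠ s(r, s) := by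
    intro h
    rcases Sym2.eq_iff.mp h with ⟨ha, hb⟩ | ⟨ha, hb⟩
    exacts [hqr ha, hqs ha]
  have d5 : s(q, r) ≠ s(s, p) := by
    intro h
    rcases Sym2.eq_iff.mp h with ⟨ha, hb⟩ | ⟨ha, hb⟩
    exacts [hqs ha, hpq ha.symm]
  have d6 : s(r, s) ≠ s(s, p) := by
    intro h
    rcases Sym2.eq_iff.mp h with ⟨ha, hb⟩ | ⟨ha, hb⟩
    exacts [hrs ha, hpr ha.symm]
  have v1 : c' s(p, q) = γ := by rw [hc'def]; simp
  have v3 : c' s(r, s) = γ := by rw [hc'def]; simp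
  have v2 : c' s(q, r) = β := by
    rw [hc'def]; simp only
    rw [if_neg (by rintro (h | h); exacts [d1 h.symm, d4 h])]
    simp
  have v4 : c' s(s, p) = β := by
    rw [hc'def]; simp only
    rw [if_neg (by rintro (h | h); exacts [d3 h.symm, d6 h.symm])]
    simp
  have vother : ∀ g, g ≠ s(p, q) → g ≠ s(q, r) → g ≠ s(r, s) → g ≠ s(s, p) → c' g = c g := by
    intro g hg1 hg2 hg3 hg4
    rw [hc'def]; simp only
    rw [if_neg (by rintro (h | h); exacts [hg1 h, hg3 h]),
        if_neg (by rintro (h | h); exacts [hg2 h, hg4 h])]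
  have hepq : s(p, q) ∈ G'.edgeSet := h1
  have heqr : s(q, r) ∈ G'.edgeSet := h2
  have hers : s(r, s) ∈ G'.edgeSet := h3
  have hesp : s(s, p) ∈ G'.edgeSet := h4
  have key : ∀ w, (w = p ∨ w = q ∨ w = r ∨ w = s) → ∀ g ∈ G'.edgeSet, w ∈ g →
      c' g = Equiv.swap β γ (c g) := by
    intro w hw g hg hwg
    by_cases hg1 : g = s(p, q)
    · subst hg1; rw [v1, e1, Equiv.swap_apply_left]
    · by_cases hg2 : g = s(q, r)
      · subst hg2; rw [v2, e2, Equiv.swap_apply_right]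
      · by_cases hg3 : g = s(r, s)
        · subst hg3; rw [v3, e3, Equiv.swap_apply_left]
        · by_cases hg4 : g = s(s, p)
          · subst hg4; rw [v4, e4, Equiv.swap_apply_right]
          · rw [vother g hg1 hg2 hg3 hg4]
            rw [Equiv.swap_apply_of_ne_of_ne]
            · rcases hw with rfl | rfl | rfl | rfl
              · rw [← e1]; exact hc g hg _ hepq hg1 ⟨w, hwg, by simp⟩
              · rw [← e1]; exact hc g hg _ hepq hg1 ⟨w, hwg, by simp⟩
              · rw [← e3]; exact hc g hg _ hers hg3 ⟨w, hwg, by simp⟩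
              · rw [← e3]; exact hc g hg _ hers hg3 ⟨w, hwg, by simp⟩
            · rcases hw with rfl | rfl | rfl | rfl
              · rw [← e4]; exact hc g hg _ hesp hg4 ⟨w, hwg, by simp⟩
              · rw [← e2]; exact hc g hg _ heqr hg2 ⟨w, hwg, by simp⟩
              · rw [← e2]; exact hc g hg _ heqr hg2 ⟨w, hwg, by simp⟩
              · rw [← e4]; exact hc g hg _ hesp hg4 ⟨w, hwg, by simp⟩
  refine ⟨c', ?_, v1, v2, v3, v4, vother⟩
  intro e he f hf hef ⟨w, hwe, hwf⟩
  by_cases hw : w = p ∨ w = q ∨ w = r ∨ w = s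
  · rw [key w hw e he hwe, key w hw f hf hwf]
    intro hh
    exact hc e he f hf hef ⟨w, hwe, hwf⟩ ((Equiv.swap β γ).injective hh)
  · push_neg at hw
    have hmem : ∀ g, w ∈ g → g ≠ s(p, q) ∧ g ≠ s(q, r) ∧ g ≠ s(r, s) ∧ g ≠ s(s, p) := by
      intro g hwg
      refine ⟨?_, ?_, ?_, ?_⟩ <;> rintro rfl <;>
        rcases Sym2.mem_iff.mp hwg with rfl | rfl <;> simp_all
    obtain ⟨a1, a2, a3, a4⟩ := hmem e hwe
    obtain ⟨b1, b2, b3, b4⟩ := hmem f hwf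
    rw [vother e a1 a2 a3 a4, vother f b1 b2 b3 b4]
    exact hc e he f hf hef ⟨w, hwe, hwf⟩
end Swap

section Dist
variable {α : Type*} {G : SimpleGraph α}

lemma cyc_succ : ∀ i : Fin 4, (cycleGraph 4).Adj i (i + 1) := by decide
lemma cyc_cases : ∀ i j : Fin 4, (cycleGraph 4).Adj i j → (j = i + 1 ∨ i = j + 1) := by decide

lemma adjG {u v : α} (h : G.Adj u v) (i : Fin 4) :
    (G □ cycleGraph 4).Adj (u, i) (v, i) := boxProd_adj.mpr (Or.inl ⟨h, rfl⟩)

lemma adjC_s8 (u : α) {i j : Fin 4} (h : (cycleGraph 4).Adj i j) :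
    (G □ cycleGraph 4).Adj (u, i) (u, j) := boxProd_adj.mpr (Or.inr ⟨h, rfl⟩)

lemma adjC' (u : α) (i : Fin 4) : (G □ cycleGraph 4).Adj (u, i) (u, i + 1) :=
  adjC_s8 u (cyc_succ i)

/-- all endpoints of `g` are within distance 1 of `e` -/
def Near1 (G : SimpleGraph α) (e g : Sym2 (α × Fin 4)) : Prop :=
  ∀ P ∈ g, ∃ q ∈ e, (G □ cycleGraph 4).edist q P ≤ 1

/-- the outer region of the big move at a `G`-edge `(u,v)` in layer `i` -/
def BigR (G : SimpleGraph α) (u v : α) (i : Fin 4) (g : Sym2 (α × Fin 4)) : Prop :=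
  (∃ x, (G.Adj x u ∨ G.Adj x v) ∧ g = s((x, i), (x, i + 1)))
  ∨ (∃ x, (x = u ∨ x = v) ∧ g = s((x, i + 1), (x, i + 2)))
  ∨ (∃ x y, G.Adj x y ∧ (x = u ∨ x = v) ∧ g = s((x, i + 1), (y, i + 1)))

/-- the region of edges involved in the move repairing `e` -/
def Reg (G : SimpleGraph α) (e g : Sym2 (α × Fin 4)) : Prop :=
  Near1 G e g ∨ ∃ u v i, e = s((u, i), (v, i)) ∧ G.Adj u v ∧ BigR G u v i g

lemma edist_le_one {x y : α × Fin 4} (h : (G □ cycleGraph 4).Adj x y) :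
    (G □ cycleGraph 4).edist x y ≤ 1 :=
  le_of_eq (edist_eq_one_iff_adj.mpr h)

lemma edist_le_one_self (x : α × Fin 4) : (G □ cycleGraph 4).edist x x ≤ 1 := by
  rw [edist_self]; exact zero_le_one

lemma edist_two {q B q' : α × Fin 4} (h1 : (G □ cycleGraph 4).edist q B ≤ 1)
    (h2 : (G □ cycleGraph 4).edist q' B ≤ 1) :
    (G □ cycleGraph 4).edist q q' ≤ 2 := by
  have h3 : (G □ cycleGraph 4).edist B q' ≤ 1 := by rwa [edist_comm]
  calc (G □ cycleGraph 4).edist q q' ≤ _ + _ := SimpleGraph.edist_triangle (v := B)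
  _ ≤ 1 + 1 := add_le_add h1 h3
  _ = 2 := by norm_num

lemma near1_self (e : Sym2 (α × Fin 4)) : Near1 G e e :=
  fun P hP => ⟨P, hP, edist_le_one_self P⟩

lemma reg_self (e : Sym2 (α × Fin 4)) : Reg G e e := Or.inl (near1_self e)

/-- every edge in the region has an endpoint near `e` -/
lemma reg_near {e g : Sym2 (α × Fin 4)} (h : Reg G e g) :
    ∃ B ∈ g, ∃ q ∈ e, (G □ cycleGraph 4).edist q B ≤ 1 := by
  rcases h with h | ⟨u, v, i, rfl, huv, h⟩
  · induction g using Sym2.ind with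
    | _ x y => exact ⟨x, by simp, h x (by simp)⟩
  · rcases h with ⟨x, hx, rfl⟩ | ⟨x, hx, rfl⟩ | ⟨x, y, hxy, hx, rfl⟩
    · rcases hx with hA | hA
      · exact ⟨(x, i), by simp, (u, i), by simp, edist_le_one (adjG hA.symm i)⟩
      · exact ⟨(x, i), by simp, (v, i), by simp, edist_le_one (adjG hA.symm i)⟩
    · rcases hx with rfl | rfl
      · exact ⟨(x, i + 1), by simp, (x, i), by simp, edist_le_one (adjC' x i)⟩
      · exact ⟨(x, i + 1), by simp, (x, i), by simp, edist_le_one (adjC' x i)⟩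
    · rcases hx with rfl | rfl
      · exact ⟨(x, i + 1), by simp, (x, i), by simp, edist_le_one (adjC' x i)⟩
      · exact ⟨(x, i + 1), by simp, (x, i), by simp, edist_le_one (adjC' x i)⟩

lemma disj {e e' g : Sym2 (α × Fin 4)} (he : Reg G e g) (he' : Reg G e' g)
    (hd : ∀ x ∈ e, ∀ y ∈ e', (3 : ℕ∞) ≤ (G □ cycleGraph 4).edist x y) : False := by
  have contra : ∀ q ∈ e, ∀ q' ∈ e', (G □ cycleGraph 4).edist q q' ≤ 2 → False := by
    intro q hq q' hq' hle
    have := le_trans (hd q hq q' hq') hle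
    norm_num at this
  rcases he with hne | ⟨u, v, i, rfl, huv, hb⟩
  · obtain ⟨B, hB, q', hq', h1⟩ := reg_near he'
    obtain ⟨q, hq, h2⟩ := hne B hB
    exact contra q hq q' hq' (edist_two h2 h1)
  rcases he' with hne' | ⟨u', v', i', rfl, huv', hb'⟩
  · obtain ⟨B, hB, q, hq, h1⟩ :=
      reg_near (Or.inr ⟨u, v, i, rfl, huv, hb⟩ : Reg G s((u, i), (v, i)) g)
    obtain ⟨q', hq', h2⟩ := hne' B hB
    exact contra q hq q' hq' (edist_two h1 h2)
  -- both big moves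
  have pij : ∀ (x x' : α) (j j' : Fin 4), (x, j) = ((x', j') : α × Fin 4) → x = x' ∧ j = j' :=
    fun _ _ _ _ h => Prod.ext_iff.mp h
  -- helper to conclude from q -adj- B -adj- q'
  have conc2 : ∀ (q B q' : α × Fin 4), q ∈ s((u, i), (v, i)) → q' ∈ s((u', i'), (v', i')) →
      (G □ cycleGraph 4).edist q B ≤ 1 → (G □ cycleGraph 4).edist q' B ≤ 1 → False :=
    fun q B q' hq hq' h1 h2 => contra q hq q' hq' (edist_two h1 h2)
  rcases hb with ⟨x, hx, rfl⟩ | ⟨x, hx, rfl⟩ | ⟨x, y, hxy, hx, rfl⟩ <;>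
    rcases hb' with ⟨x', hx', heq⟩ | ⟨x', hx', heq⟩ | ⟨x', y', hxy', hx', heq⟩ <;>
    rcases Sym2.eq_iff.mp heq with ⟨h1, h2⟩ | ⟨h1, h2⟩ <;>
    obtain ⟨hc1, hl1⟩ := pij _ _ _ _ h1 <;>
    obtain ⟨hc2, hl2⟩ := pij _ _ _ _ h2
  -- (V1,V1) straight : x=x', i=i'
  · subst hc1; subst hl1
    rcases hx with hA | hA <;> rcases hx' with hB | hB
    · exact conc2 (u, i) (x, i) (u', i) (by simp) (by simp)
        (edist_le_one (adjG hA.symm i)) (edist_le_one (adjG hB.symm i))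
    · exact conc2 (u, i) (x, i) (v', i) (by simp) (by simp)
        (edist_le_one (adjG hA.symm i)) (edist_le_one (adjG hB.symm i))
    · exact conc2 (v, i) (x, i) (u', i) (by simp) (by simp)
        (edist_le_one (adjG hA.symm i)) (edist_le_one (adjG hB.symm i))
    · exact conc2 (v, i) (x, i) (v', i) (by simp) (by simp)
        (edist_le_one (adjG hA.symm i)) (edist_le_one (adjG hB.symm i))
  -- (V1,V1) swapped
  · exact (by decide : ∀ a b : Fin 4, a = b + 1 → a + 1 = b → False) i i' hl1 hl2
  -- (V1,V2) straight : i = i'+1, x=x'∈{u',v'}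
  · subst hc1; subst hl1
    have hcy : (cycleGraph 4).Adj i' (i' + 1) := cyc_succ i'
    rcases hx with hA | hA <;> rcases hx' with rfl | rfl
    · exact conc2 (u, i' + 1) (x, i' + 1) (x, i') (by simp) (by simp)
        (edist_le_one (adjG hA.symm _)) (edist_le_one (adjC_s8 x hcy))
    · exact conc2 (u, i' + 1) (x, i' + 1) (x, i') (by simp) (by simp)
        (edist_le_one (adjG hA.symm _)) (edist_le_one (adjC_s8 x hcy))
    · exact conc2 (v, i' + 1) (x, i' + 1) (x, i') (by simp) (by simp)
        (edist_le_one (adjG hA.symm _)) (edist_le_one (adjC_s8 x hcy))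
    · exact conc2 (v, i' + 1) (x, i' + 1) (x, i') (by simp) (by simp)
        (edist_le_one (adjG hA.symm _)) (edist_le_one (adjC_s8 x hcy))
  -- (V1,V2) swapped
  · exact (by decide : ∀ a b : Fin 4, a = b + 2 → a + 1 = b + 1 → False) i i' hl1 hl2
  -- (V1,E3)
  · exact (by decide : ∀ a b : Fin 4, a = b + 1 → a + 1 = b + 1 → False) i i' hl1 hl2
  · exact (by decide : ∀ a b : Fin 4, a = b + 1 → a + 1 = b + 1 → False) i i' hl1 hl2
  -- (V2,V1) straight : i' = i+1, x'=x, x ∈ {u,v}, x adj {u',v'}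
  · subst hc1; subst hl1
    have hcy : (cycleGraph 4).Adj i (i + 1) := cyc_succ i
    rcases hx with rfl | rfl <;> rcases hx' with hB | hB
    · exact conc2 (x, i) (x, i + 1) (u', i + 1) (by simp) (by simp)
        (edist_le_one (adjC_s8 x hcy)) (edist_le_one (adjG hB.symm (i + 1)))
    · exact conc2 (x, i) (x, i + 1) (v', i + 1) (by simp) (by simp)
        (edist_le_one (adjC_s8 x hcy)) (edist_le_one (adjG hB.symm (i + 1)))
    · exact conc2 (x, i) (x, i + 1) (u', i + 1) (by simp) (by simp)
        (edist_le_one (adjC_s8 x hcy)) (edist_le_one (adjG hB.symm (i + 1)))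
    · exact conc2 (x, i) (x, i + 1) (v', i + 1) (by simp) (by simp)
        (edist_le_one (adjC_s8 x hcy)) (edist_le_one (adjG hB.symm (i + 1)))
  -- (V2,V1) swapped
  · exact (by decide : ∀ a b : Fin 4, a + 1 = b + 1 → a + 2 = b → False) i i' hl1 hl2
  -- (V2,V2) straight : i = i', x = x'
  · have hii : i = i' := (by decide : ∀ a b : Fin 4, a + 1 = b + 1 → a = b) i i' hl1
    subst hii; subst hc1
    rcases hx with rfl | rfl <;> rcases hx' with rfl | rfl <;>
      exact conc2 (x, i) (x, i) (x, i) (by simp) (by simp)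
        (edist_le_one_self _) (edist_le_one_self _)
  -- (V2,V2) swapped
  · exact (by decide : ∀ a b : Fin 4, a + 1 = b + 2 → a + 2 = b + 1 → False) i i' hl1 hl2
  -- (V2,E3)
  · exact (by decide : ∀ a b : Fin 4, a + 1 = b + 1 → a + 2 = b + 1 → False) i i' hl1 hl2
  · exact (by decide : ∀ a b : Fin 4, a + 1 = b + 1 → a + 2 = b + 1 → False) i i' hl1 hl2
  -- (E3,V1)
  · exact (by decide : ∀ a b : Fin 4, a + 1 = b → a + 1 = b + 1 → False) i i' hl1 hl2
  · exact (by decide : ∀ a b : Fin 4, a + 1 = b + 1 → a + 1 = b → False) i i' hl1 hl2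
  -- (E3,V2)
  · exact (by decide : ∀ a b : Fin 4, a + 1 = b + 1 → a + 1 = b + 2 → False) i i' hl1 hl2
  · exact (by decide : ∀ a b : Fin 4, a + 1 = b + 2 → a + 1 = b + 1 → False) i i' hl1 hl2
  -- (E3,E3) straight
  · have hii : i = i' := (by decide : ∀ a b : Fin 4, a + 1 = b + 1 → a = b) i i' hl1
    subst hii; subst hc1
    rcases hx with rfl | rfl <;> rcases hx' with rfl | rfl <;>
      exact conc2 (x, i) (x, i) (x, i) (by simp) (by simp)
        (edist_le_one_self _) (edist_le_one_self _)
  -- (E3,E3) swapped : x = y', y = x'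
  · have hii : i = i' := (by decide : ∀ a b : Fin 4, a + 1 = b + 1 → a = b) i i' hl1
    subst hii; subst hc1; subst hc2
    rcases hx with rfl | rfl <;> rcases hx' with rfl | rfl <;>
      exact conc2 (x, i) (x, i) (y, i) (by simp) (by simp)
        (edist_le_one_self _) (edist_le_one (adjG hxy.symm i))
end Dist

section Base
variable {α : Type*} {G : SimpleGraph α} {Δ : ℕ}

/-- colors for the two "vertical" classes -/
def vc (Δ : ℕ) (i j : Fin 4) : Fin (Δ + 2) :=
  if i + j = 1 then ⟨Δ, by omega⟩ else ⟨Δ + 1, by omega⟩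

lemma vc_comm (i j : Fin 4) : vc Δ i j = vc Δ j i := by
  rw [vc, vc]; exact if_congr (by rw [add_comm]) rfl rfl

lemma vc_big (i j : Fin 4) : Δ ≤ (vc Δ i j).1 := by
  rw [vc]; split <;> simp

lemma vc_alt : ∀ i j j' : Fin 4, (cycleGraph 4).Adj i j → (cycleGraph 4).Adj i j' → j ≠ j' →
    ¬ (i + j = 1 ↔ i + j' = 1) := by decide

lemma vc_ne {i j j' : Fin 4} (h : (cycleGraph 4).Adj i j) (h' : (cycleGraph 4).Adj i j')
    (hjj : j ≠ j') : vc Δ i j ≠ vc Δ i j' := by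
  have := vc_alt i j j' h h' hjj
  rw [vc, vc]
  split <;> split
  · exact absurd (iff_of_true ‹_› ‹_›) this
  · intro hh; have h2 : Δ = Δ + 1 := congrArg Fin.val hh; omega
  · intro hh; have h2 : Δ + 1 = Δ := congrArg Fin.val hh; omega
  · exact absurd (iff_of_false ‹_› ‹_›) this

def emb (Δ : ℕ) : Fin Δ → Fin (Δ + 2) := Fin.castLE (by omega)

lemma emb_small (c : Fin Δ) : (emb Δ c).1 < Δ := c.2

lemma emb_ne_vc (c : Fin Δ) (i j : Fin 4) : emb Δ c ≠ vc Δ i j := by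
  intro h
  have h1 := emb_small c
  have h2 := vc_big (Δ := Δ) i j
  rw [h] at h1
  omega

lemma emb_inj : Function.Injective (emb Δ) := Fin.castLE_injective _

variable (κ : Sym2 α → Fin Δ)

/-- the base coloring of `G □ C₄` -/
noncomputable def base (Δ : ℕ) (κ : Sym2 α → Fin Δ) : Sym2 (α × Fin 4) → Fin (Δ + 2) :=
  Sym2.lift ⟨fun p q => if p.1 = q.1 then vc Δ p.2 q.2 else emb Δ (κ s(p.1, q.1)),
    by
      intro p q
      simp only
      by_cases h : p.1 = q.1
      · rw [if_pos h, if_pos h.symm, vc_comm]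
      · rw [if_neg h, if_neg (Ne.symm h), Sym2.eq_swap]⟩

lemma base_G {u v : α} (hne : u ≠ v) (i j : Fin 4) :
    base Δ κ s((u, i), (v, j)) = emb Δ (κ s(u, v)) := by
  rw [base, Sym2.lift_mk]
  exact if_neg hne

lemma base_V (u : α) (i j : Fin 4) : base Δ κ s((u, i), (u, j)) = vc Δ i j := by
  rw [base, Sym2.lift_mk]
  exact if_pos rfl

/-- classification of edges incident to a vertex -/
lemma inc_cases {g : Sym2 (α × Fin 4)} (hg : g ∈ (G □ cycleGraph 4).edgeSet)
    {P : α × Fin 4} (hP : P ∈ g) :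
    (∃ y, G.Adj P.1 y ∧ g = s(P, (y, P.2))) ∨
    (∃ j, (cycleGraph 4).Adj P.2 j ∧ g = s(P, (P.1, j))) := by
  induction g using Sym2.ind with
  | _ x y =>
    rw [mem_edgeSet] at hg
    rcases Sym2.mem_iff.mp hP with rfl | rfl
    · rcases boxProd_adj.mp hg with ⟨h1, h2⟩ | ⟨h1, h2⟩
      · exact Or.inl ⟨y.1, h1, by rw [show ((y.1 : α), P.2) = y from Prod.ext rfl h2]⟩
      · exact Or.inr ⟨y.2, h1, by rw [show ((P.1 : α), y.2) = y from Prod.ext h2 rfl]⟩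
    · rcases boxProd_adj.mp hg with ⟨h1, h2⟩ | ⟨h1, h2⟩
      · refine Or.inl ⟨x.1, h1.symm, ?_⟩
        rw [show ((x.1 : α), P.2) = x from Prod.ext rfl h2.symm, Sym2.eq_swap]
      · refine Or.inr ⟨x.2, h1.symm, ?_⟩
        rw [show ((P.1 : α), x.2) = x from Prod.ext h2.symm rfl, Sym2.eq_swap]

lemma base_proper (hκ : IsProperEdgeColoring G κ) :
    IsProperEdgeColoring (G □ cycleGraph 4) (base Δ κ) := by
  intro e he f hf hef ⟨w, hwe, hwf⟩
  rcases inc_cases he hwe with ⟨y, hy, rfl⟩ | ⟨j, hj, rfl⟩ <;>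
    rcases inc_cases hf hwf with ⟨y', hy', rfl⟩ | ⟨j', hj', rfl⟩
  · rw [base_G κ hy.ne, base_G κ hy'.ne]
    intro hh
    have hyy : y ≠ y' := by rintro rfl; exact hef rfl
    exact hκ _ hy _ hy' (by
      intro hcon
      rcases Sym2.eq_iff.mp hcon with ⟨h1, h2⟩ | ⟨h1, h2⟩
      · exact hyy h2
      · exact hy.ne h2.symm) ⟨w.1, by simp, by simp⟩ (emb_inj hh)
  · rw [base_G κ hy.ne, base_V]
    exact emb_ne_vc _ _ _
  · rw [base_G κ hy'.ne, base_V]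
    exact (emb_ne_vc _ _ _).symm
  · rw [base_V, base_V]
    refine vc_ne hj hj' ?_
    rintro rfl
    exact hef rfl
end Base


section Moves
variable {α : Type*} {G : SimpleGraph α} {Δ : ℕ}

lemma fin4_facts1 : ∀ j : Fin 4, j + 1 + 1 = j + 2 := by decide
lemma cyc12 : ∀ j : Fin 4, (cycleGraph 4).Adj (j + 1) (j + 2) := by decide
lemma cyc23 : ∀ j : Fin 4, (cycleGraph 4).Adj (j + 2) (j + 3) := by decide
lemma cyc30 : ∀ j : Fin 4, (cycleGraph 4).Adj (j + 3) j := by decide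
lemma fin4_ne02 : ∀ j : Fin 4, j ≠ j + 2 := by decide
lemma fin4_ne13 : ∀ j : Fin 4, j + 1 ≠ j + 3 := by decide

lemma pne_fst {u w : α} (h : u ≠ w) {i j : Fin 4} : (u, i) ≠ ((w, j) : α × Fin 4) :=
  fun hh => h (congrArg Prod.fst hh)

lemma pne_snd (u : α) {i j : Fin 4} (h : i ≠ j) : (u, i) ≠ ((u, j) : α × Fin 4) :=
  fun hh => h (congrArg Prod.snd hh)

lemma near1_pair {e : Sym2 (α × Fin 4)} {A B : α × Fin 4}
    (hA : ∃ q ∈ e, (G □ cycleGraph 4).edist q A ≤ 1)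
    (hB : ∃ q ∈ e, (G □ cycleGraph 4).edist q B ≤ 1) : Near1 G e s(A, B) := by
  intro P hP
  rcases Sym2.mem_iff.mp hP with rfl | rfl
  exacts [hA, hB]

lemma vc_shift2 (i : Fin 4) : vc Δ (i + 2) (i + 3) = vc Δ i (i + 1) := by
  rw [vc, vc]
  exact if_congr ((by decide : ∀ i : Fin 4, ((i+2) + (i+3) = 1) ↔ (i + (i+1) = 1)) i) rfl rfl

lemma vc_shift3 (i : Fin 4) : vc Δ (i + 3) i = vc Δ (i + 1) (i + 2) := by
  rw [vc, vc]
  exact if_congr ((by decide : ∀ i : Fin 4, ((i+3) + i = 1) ↔ ((i+1) + (i+2) = 1)) i) rfl rfl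

lemma vc_ne' (i : Fin 4) : vc Δ i (i + 1) ≠ vc Δ (i + 1) (i + 2) := by
  rw [vc_comm (i := i)]
  exact vc_ne (cyc_succ i).symm (cyc12 i) (fin4_ne02 i)

lemma two_vc {t : Fin (Δ + 2)} (ht : Δ ≤ t.1) (i1 j1 i2 j2 : Fin 4)
    (hne : vc Δ i1 j1 ≠ vc Δ i2 j2) : t = vc Δ i1 j1 ∨ t = vc Δ i2 j2 := by
  have hval : t.1 = Δ ∨ t.1 = Δ + 1 := by have := t.2; omega
  rw [vc] at hne ⊢
  rw [vc] at hne ⊢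
  by_cases h1 : (i1 + j1 : Fin 4) = 1 <;> by_cases h2 : (i2 + j2 : Fin 4) = 1
  · rw [if_pos h1, if_pos h2] at hne; exact absurd rfl hne
  · rw [if_pos h1, if_neg h2]
    rcases hval with hv | hv
    · exact Or.inl (Fin.ext hv)
    · exact Or.inr (Fin.ext hv)
  · rw [if_neg h1, if_pos h2]
    rcases hval with hv | hv
    · exact Or.inr (Fin.ext hv)
    · exact Or.inl (Fin.ext hv)
  · rw [if_neg h1, if_neg h2] at hne; exact absurd rfl hne

variable (κ : Sym2 α → Fin Δ)

lemma moveV {c : Sym2 (α × Fin 4) → Fin (Δ + 2)}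
    (hc : IsProperEdgeColoring (G □ cycleGraph 4) c)
    (u : α) (i : Fin 4) (t : Fin (Δ + 2))
    (hread : ∀ g ∈ (G □ cycleGraph 4).edgeSet,
      Reg G s((u, i), (u, i + 1)) g → c g = base Δ κ g) :
    ∃ c', IsProperEdgeColoring (G □ cycleGraph 4) c' ∧ c' s((u, i), (u, i + 1)) = t ∧
      ∀ g, ¬ Reg G s((u, i), (u, i + 1)) g → c' g = c g := by
  set e := s(((u, i) : α × Fin 4), (u, i + 1)) with he_def
  have hee : e ∈ (G □ cycleGraph 4).edgeSet := (mem_edgeSet _).mpr (adjC' u i)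
  have hmem0 : (u, i) ∈ e := by rw [he_def]; simp
  have hmem1 : (u, i + 1) ∈ e := by rw [he_def]; simp
  have hce : c e = vc Δ i (i + 1) := by
    rw [hread e hee (reg_self e), he_def, base_V]
  by_cases htΔ : Δ ≤ t.1
  · rcases two_vc htΔ i (i + 1) (i + 1) (i + 2) (vc_ne' i) with rfl | rfl
    · exact ⟨c, hc, hce, fun _ _ => rfl⟩
    · -- swap around the fiber four-cycle
      have n1 : Near1 G e s(((u, i) : α × Fin 4), (u, i + 1)) :=
        near1_pair ⟨_, hmem0, edist_le_one_self _⟩ ⟨_, hmem1, edist_le_one_self _⟩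
      have n2 : Near1 G e s(((u, i + 1) : α × Fin 4), (u, i + 2)) :=
        near1_pair ⟨_, hmem1, edist_le_one_self _⟩
          ⟨_, hmem1, edist_le_one (adjC_s8 u (cyc12 i))⟩
      have n3 : Near1 G e s(((u, i + 2) : α × Fin 4), (u, i + 3)) :=
        near1_pair ⟨_, hmem1, edist_le_one ((adjC_s8 u (cyc12 i)).symm).symm⟩
          ⟨_, hmem0, edist_le_one (adjC_s8 u (cyc30 i)).symm⟩
      have n4 : Near1 G e s(((u, i + 3) : α × Fin 4), (u, i)) :=
        near1_pair ⟨_, hmem0, edist_le_one (adjC_s8 u (cyc30 i)).symm⟩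
          ⟨_, hmem0, edist_le_one_self _⟩
      obtain ⟨c', hc', v1, v2, v3, v4, vother⟩ :=
        swap4 hc (adjC' u i) (adjC_s8 u (cyc12 i)) (adjC_s8 u (cyc23 i)) (adjC_s8 u (cyc30 i))
          (pne_snd u (fin4_ne02 i)) (pne_snd u (fin4_ne13 i)) (vc_ne' i)
          hce
          (by rw [hread _ ((mem_edgeSet _).mpr (adjC_s8 u (cyc12 i))) (Or.inl n2), base_V])
          (by rw [hread _ ((mem_edgeSet _).mpr (adjC_s8 u (cyc23 i))) (Or.inl n3), base_V,
                vc_shift2])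
          (by rw [hread _ ((mem_edgeSet _).mpr (adjC_s8 u (cyc30 i))) (Or.inl n4), base_V,
                vc_shift3])
      refine ⟨c', hc', v1, ?_⟩
      intro g hg
      refine vother g ?_ ?_ ?_ ?_ <;> rintro rfl
      exacts [hg (Or.inl n1), hg (Or.inl n2), hg (Or.inl n3), hg (Or.inl n4)]
  · push_neg at htΔ
    by_cases hw : ∃ w, G.Adj u w ∧ emb Δ (κ s(u, w)) = t
    · obtain ⟨w, huw, hwt⟩ := hw
      have n1 : Near1 G e s(((u, i) : α × Fin 4), (u, i + 1)) :=
        near1_pair ⟨_, hmem0, edist_le_one_self _⟩ ⟨_, hmem1, edist_le_one_self _⟩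
      have n2 : Near1 G e s(((u, i + 1) : α × Fin 4), (w, i + 1)) :=
        near1_pair ⟨_, hmem1, edist_le_one_self _⟩
          ⟨_, hmem1, edist_le_one (adjG huw (i + 1))⟩
      have n3 : Near1 G e s(((w, i + 1) : α × Fin 4), (w, i)) :=
        near1_pair ⟨_, hmem1, edist_le_one (adjG huw (i + 1))⟩
          ⟨_, hmem0, edist_le_one (adjG huw i)⟩
      have n4 : Near1 G e s(((w, i) : α × Fin 4), (u, i)) :=
        near1_pair ⟨_, hmem0, edist_le_one (adjG huw i)⟩
          ⟨_, hmem0, edist_le_one_self _⟩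
      obtain ⟨c', hc', v1, v2, v3, v4, vother⟩ :=
        swap4 hc (adjC' u i) (adjG huw (i + 1)) (adjC_s8 w ((cyc_succ i).symm))
          (adjG huw.symm i) (pne_fst huw.ne) (pne_fst huw.ne)
          (β := vc Δ i (i + 1)) (γ := t)
          (by rw [← hwt]; exact (emb_ne_vc _ _ _).symm)
          hce
          (by rw [hread _ ((mem_edgeSet _).mpr (adjG huw (i + 1))) (Or.inl n2),
                base_G κ huw.ne, hwt])
          (by rw [hread _ ((mem_edgeSet _).mpr (adjC_s8 w ((cyc_succ i).symm))) (Or.inl n3),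
                base_V, vc_comm])
          (by rw [hread _ ((mem_edgeSet _).mpr (adjG huw.symm i)) (Or.inl n4),
                base_G κ huw.ne.symm, Sym2.eq_swap, hwt])
      refine ⟨c', hc', v1, ?_⟩
      intro g hg
      refine vother g ?_ ?_ ?_ ?_ <;> rintro rfl
      exacts [hg (Or.inl n1), hg (Or.inl n2), hg (Or.inl n3), hg (Or.inl n4)]
    · push_neg at hw
      have habsent : ∀ (P : α × Fin 4), P ∈ e → ∀ g ∈ (G □ cycleGraph 4).edgeSet,
          g ≠ e → P ∈ g → c g ≠ t := by
        intro P hP g hg hge hPg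
        have hPcol : P.1 = u := by
          rcases Sym2.mem_iff.mp hP with rfl | rfl <;> rfl
        obtain ⟨p1, p2⟩ := P
        have hPcol' : p1 = u := hPcol
        rcases inc_cases hg hPg with ⟨y₁, hy₁, rfl⟩ | ⟨j, hj, rfl⟩
        · have hadj : G.Adj p1 y₁ := hy₁
          have hne : p1 ≠ y₁ := hadj.ne
          have hn : Near1 G e s(((p1, p2) : α × Fin 4), (y₁, p2)) :=
            near1_pair ⟨_, hP, edist_le_one_self _⟩
              ⟨_, hP, edist_le_one (adjG hadj p2)⟩
          rw [hread _ hg (Or.inl hn), base_G κ hne, hPcol']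
          exact hw y₁ (hPcol' ▸ hadj)
        · have hcadj : (cycleGraph 4).Adj p2 j := hj
          have hn : Near1 G e s(((p1, p2) : α × Fin 4), (p1, j)) :=
            near1_pair ⟨_, hP, edist_le_one_self _⟩
              ⟨_, hP, edist_le_one (adjC_s8 p1 hcadj)⟩
          rw [hread _ hg (Or.inl hn), base_V]
          intro hh
          have h1 := vc_big (Δ := Δ) p2 j
          rw [hh] at h1
          omega
      obtain ⟨c', hc', v1, vother⟩ :=
        recolor1 hc (adjC' u i) (t := t)
          (fun g hg hge hPg => habsent (u, i) hmem0 g hg hge hPg)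
          (fun g hg hge hPg => habsent (u, i + 1) hmem1 g hg hge hPg)
      refine ⟨c', hc', v1, fun g hg => vother g ?_⟩
      rintro rfl
      exact hg (reg_self _)

lemma sideStep {c : Sym2 (α × Fin 4) → Fin (Δ + 2)}
    (hc : IsProperEdgeColoring (G □ cycleGraph 4) c)
    (u v : α) (i : Fin 4) (huv : G.Adj u v) (t : Fin (Δ + 2)) (htΔ : t.1 < Δ)
    (hta : emb Δ (κ s(u, v)) ≠ t)
    (hru : ∀ g ∈ (G □ cycleGraph 4).edgeSet, ((u, i) ∈ g ∨ (u, i + 1) ∈ g) →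
        Reg G s((u, i), (v, i)) g → c g = base Δ κ g)
    (hrw : ∀ w', G.Adj u w' → emb Δ (κ s(u, w')) = t →
        c s((w', i), (w', i + 1)) = base Δ κ s((w', i), (w', i + 1))) :
    ∃ c' w₀, IsProperEdgeColoring (G □ cycleGraph 4) c' ∧
      c' s((u, i), (u, i + 1)) = t ∧
      (w₀ = u ∨ (G.Adj u w₀ ∧ emb Δ (κ s(u, w₀)) = t ∧ w₀ ≠ v)) ∧
      (∀ g, (∀ P ∈ g, P.1 ≠ u ∧ P.1 ≠ w₀) → c' g = c g) ∧
      (∀ g, ¬ Reg G s((u, i), (v, i)) g → c' g = c g) ∧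
      (∀ g, ((v, i) ∈ g ∨ (v, i + 1) ∈ g) → g ≠ s((u, i), (u, i + 1)) → c' g = c g) := by
  have regbig : ∀ g, BigR G u v i g → Reg G s((u, i), (v, i)) g :=
    fun g h => Or.inr ⟨u, v, i, rfl, huv, h⟩
  have hmem0 : ((u, i) : α × Fin 4) ∈ s(((u, i) : α × Fin 4), (v, i)) := by simp
  have n_vertu : Near1 G s(((u, i) : α × Fin 4), (v, i))
      s(((u, i) : α × Fin 4), (u, i + 1)) :=
    near1_pair ⟨_, hmem0, edist_le_one_self _⟩
      ⟨_, hmem0, edist_le_one (adjC' u i)⟩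
  have n_vertu' : Near1 G s(((u, i) : α × Fin 4), (v, i))
      s(((u, i + 1) : α × Fin 4), (u, i)) :=
    near1_pair ⟨_, hmem0, edist_le_one (adjC' u i)⟩
      ⟨_, hmem0, edist_le_one_self _⟩
  by_cases hw : ∃ w, G.Adj u w ∧ emb Δ (κ s(u, w)) = t
  · obtain ⟨w, huw, hwt⟩ := hw
    have hwv : w ≠ v := by
      rintro rfl
      exact hta hwt
    have n_uwi : Near1 G s(((u, i) : α × Fin 4), (v, i)) s(((u, i) : α × Fin 4), (w, i)) :=
      near1_pair ⟨_, hmem0, edist_le_one_self _⟩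
        ⟨_, hmem0, edist_le_one (adjG huw i)⟩
    have b_vertw : BigR G u v i s(((w, i) : α × Fin 4), (w, i + 1)) :=
      Or.inl ⟨w, Or.inl huw.symm, rfl⟩
    have b_uwi1 : BigR G u v i s(((w, i + 1) : α × Fin 4), (u, i + 1)) :=
      Or.inr (Or.inr ⟨u, w, huw, Or.inl rfl, by rw [Sym2.eq_swap]⟩)
    obtain ⟨c', hc', v1, v2, v3, v4, vother⟩ :=
      swap4 hc (adjG huw i) (adjC' w i) (adjG huw.symm (i + 1))
        (adjC_s8 u (cyc_succ i).symm)
        (pne_fst huw.ne) (pne_fst huw.ne.symm)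
        (β := t) (γ := vc Δ i (i + 1))
        (by rw [← hwt]; exact emb_ne_vc _ _ _)
        (by rw [hru _ ((mem_edgeSet _).mpr (adjG huw i)) (Or.inl (by simp))
              (Or.inl n_uwi), base_G κ huw.ne, hwt])
        ((hrw w huw hwt).trans (base_V κ w i (i + 1)))
        (by rw [hru _ ((mem_edgeSet _).mpr (adjG huw.symm (i + 1)))
              (Or.inr (by simp)) (regbig _ b_uwi1), base_G κ huw.ne.symm,
              Sym2.eq_swap, hwt])
        (by rw [hru _ ((mem_edgeSet _).mpr (adjC_s8 u (cyc_succ i).symm))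
              (Or.inr (by simp)) (Or.inl n_vertu'),
              base_V, vc_comm])
    refine ⟨c', w, hc', ?_, Or.inr ⟨huw, hwt, hwv⟩, ?_, ?_, ?_⟩
    · rw [Sym2.eq_swap]; exact v4
    · intro g hg
      refine vother g ?_ ?_ ?_ ?_ <;> rintro rfl
      · exact (hg (u, i) (by simp)).1 rfl
      · exact (hg (w, i) (by simp)).2 rfl
      · exact (hg (w, i + 1) (by simp)).2 rfl
      · exact (hg (u, i + 1) (by simp)).1 rfl
    · intro g hg
      refine vother g ?_ ?_ ?_ ?_ <;> rintro rfl
      · exact hg (Or.inl n_uwi)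
      · exact hg (regbig _ b_vertw)
      · exact hg (regbig _ b_uwi1)
      · exact hg (Or.inl n_vertu')
    · intro g hg _
      have hvne : ∀ (x : α) (j j' : Fin 4), x ≠ v →
          ((v, i) : α × Fin 4) ∈ s(((x, j) : α × Fin 4), (x, j')) ∨
            ((v, i + 1) : α × Fin 4) ∈ s(((x, j) : α × Fin 4), (x, j')) → False := by
        intro x j j' hx hmem
        rcases hmem with h | h <;> rcases Sym2.mem_iff.mp h with h1 | h1 <;>
          exact hx (congrArg Prod.fst h1).symm
      refine vother g ?_ ?_ ?_ ?_ <;> rintro rfl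
      · rcases hg with h | h <;> rcases Sym2.mem_iff.mp h with h1 | h1 <;>
          first
            | exact huv.ne (congrArg Prod.fst h1).symm
            | exact hwv (congrArg Prod.fst h1).symm
      · exact hvne w i (i + 1) hwv hg
      · rcases hg with h | h <;> rcases Sym2.mem_iff.mp h with h1 | h1 <;>
          first
            | exact huv.ne (congrArg Prod.fst h1).symm
            | exact hwv (congrArg Prod.fst h1).symm
      · exact hvne u (i + 1) i huv.ne hg
  · push_neg at hw
    have hx1 : ∀ g ∈ (G □ cycleGraph 4).edgeSet, g ≠ s(((u, i) : α × Fin 4), (u, i + 1)) →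
        ((u, i) : α × Fin 4) ∈ g → c g ≠ t := by
      intro g hg hge hPg
      rcases inc_cases hg hPg with ⟨y₁, hy₁, rfl⟩ | ⟨j, hj, rfl⟩
      · have hadj : G.Adj u y₁ := hy₁
        have hn : Near1 G s(((u, i) : α × Fin 4), (v, i))
            s(((u, i) : α × Fin 4), (y₁, i)) :=
          near1_pair ⟨_, hmem0, edist_le_one_self _⟩
            ⟨_, hmem0, edist_le_one (adjG hadj i)⟩
        rw [hru _ hg (Or.inl (by simp)) (Or.inl hn), base_G κ hadj.ne]
        exact hw y₁ hadj
      · have hcadj : (cycleGraph 4).Adj i j := hj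
        have hn : Near1 G s(((u, i) : α × Fin 4), (v, i))
            s(((u, i) : α × Fin 4), (u, j)) :=
          near1_pair ⟨_, hmem0, edist_le_one_self _⟩
            ⟨_, hmem0, edist_le_one (adjC_s8 u hcadj)⟩
        rw [hru _ hg (Or.inl (by simp)) (Or.inl hn), base_V]
        intro hh
        have h1 := vc_big (Δ := Δ) i j
        rw [hh] at h1
        omega
    have hx2 : ∀ g ∈ (G □ cycleGraph 4).edgeSet, g ≠ s(((u, i) : α × Fin 4), (u, i + 1)) →
        ((u, i + 1) : α × Fin 4) ∈ g → c g ≠ t := by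
      intro g hg hge hPg
      rcases inc_cases hg hPg with ⟨y₁, hy₁, rfl⟩ | ⟨j, hj, rfl⟩
      · have hadj : G.Adj u y₁ := hy₁
        have hb : BigR G u v i s(((u, i + 1) : α × Fin 4), (y₁, i + 1)) :=
          Or.inr (Or.inr ⟨u, y₁, hadj, Or.inl rfl, rfl⟩)
        rw [hru _ hg (Or.inr (by simp)) (regbig _ hb), base_G κ hadj.ne]
        exact hw y₁ hadj
      · have hcadj : (cycleGraph 4).Adj (i + 1) j := hj
        rcases cyc_cases (i + 1) j hcadj with h1 | h1
        · subst h1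
          have hb : BigR G u v i s(((u, i + 1) : α × Fin 4), (u, i + 1 + 1)) := by
            rw [fin4_facts1 i]
            exact Or.inr (Or.inl ⟨u, Or.inl rfl, rfl⟩)
          rw [hru _ hg (Or.inr (by simp)) (regbig _ hb), base_V]
          intro hh
          have hbig := vc_big (Δ := Δ) (i + 1) (i + 1 + 1)
          rw [hh] at hbig
          omega
        · exfalso
          apply hge
          have hji : j = i := by
            have := congrArg (· + 3) h1
            simpa using ((by decide : ∀ a b : Fin 4, a + 1 = b + 1 → a = b) i j h1).symm
          rw [hji, Sym2.eq_swap]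
    obtain ⟨c', hc', v1, vother⟩ := recolor1 hc (adjC' u i) (t := t) hx1 hx2
    refine ⟨c', u, hc', v1, Or.inl rfl, ?_, ?_, ?_⟩
    · intro g hg
      refine vother g ?_
      rintro rfl
      exact (hg (u, i) (by simp)).1 rfl
    · intro g hg
      refine vother g ?_
      rintro rfl
      exact hg (Or.inl n_vertu)
    · intro g hg hge
      exact vother g hge

lemma moveG (hκG : IsProperEdgeColoring G κ) {c : Sym2 (α × Fin 4) → Fin (Δ + 2)}
    (hc : IsProperEdgeColoring (G □ cycleGraph 4) c)
    (u v : α) (i : Fin 4) (huv : G.Adj u v) (t : Fin (Δ + 2))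
    (hread : ∀ g ∈ (G □ cycleGraph 4).edgeSet,
      Reg G s((u, i), (v, i)) g → c g = base Δ κ g) :
    ∃ c', IsProperEdgeColoring (G □ cycleGraph 4) c' ∧ c' s((u, i), (v, i)) = t ∧
      ∀ g, ¬ Reg G s((u, i), (v, i)) g → c' g = c g := by
  set e := s(((u, i) : α × Fin 4), (v, i)) with he_def
  have hee : e ∈ (G □ cycleGraph 4).edgeSet := (mem_edgeSet _).mpr (adjG huv i)
  have hmu : ((u, i) : α × Fin 4) ∈ e := by rw [he_def]; simp
  have hmv : ((v, i) : α × Fin 4) ∈ e := by rw [he_def]; simp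
  have hce : c e = emb Δ (κ s(u, v)) := by
    rw [hread e hee (reg_self e), he_def, base_G κ huv.ne]
  have hswp : s(((v, i) : α × Fin 4), (u, i)) = e := by rw [he_def, Sym2.eq_swap]
  -- the four inner cycle edges
  have n_e : Near1 G e e := near1_self e
  have n_vv : Near1 G e s(((v, i) : α × Fin 4), (v, i + 1)) :=
    near1_pair ⟨_, hmv, edist_le_one_self _⟩ ⟨_, hmv, edist_le_one (adjC' v i)⟩
  have n_vu1 : Near1 G e s(((v, i + 1) : α × Fin 4), (u, i + 1)) :=
    near1_pair ⟨_, hmv, edist_le_one (adjC' v i)⟩ ⟨_, hmu, edist_le_one (adjC' u i)⟩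
  have n_uu : Near1 G e s(((u, i + 1) : α × Fin 4), (u, i)) :=
    near1_pair ⟨_, hmu, edist_le_one (adjC' u i)⟩ ⟨_, hmu, edist_le_one_self _⟩
  by_cases hta : emb Δ (κ s(u, v)) = t
  · exact ⟨c, hc, hce.trans hta, fun _ _ => rfl⟩
  by_cases htΔ : Δ ≤ t.1
  · have hne2 : vc Δ i (i + 1) ≠ vc Δ (i + 3) i := by
      rw [vc_shift3]
      exact vc_ne' i
    rcases two_vc htΔ i (i + 1) (i + 3) i hne2 with rfl | rfl
    · obtain ⟨c', hc', v1, v2, v3, v4, vother⟩ :=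
        swap4 hc (adjG huv i) (adjC' v i) (adjG huv.symm (i + 1))
          (adjC_s8 u (cyc_succ i).symm)
          (pne_fst huv.ne) (pne_fst huv.ne.symm)
          (β := emb Δ (κ s(u, v))) (γ := vc Δ i (i + 1))
          (emb_ne_vc _ _ _) hce
          (by rw [hread _ ((mem_edgeSet _).mpr (adjC' v i)) (Or.inl n_vv), base_V])
          (by rw [hread _ ((mem_edgeSet _).mpr (adjG huv.symm (i + 1))) (Or.inl n_vu1),
                base_G κ huv.ne.symm, Sym2.eq_swap])
          (by rw [hread _ ((mem_edgeSet _).mpr (adjC_s8 u (cyc_succ i).symm)) (Or.inl n_uu),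
                base_V, vc_comm])
      refine ⟨c', hc', v1, ?_⟩
      intro g hg
      refine vother g ?_ ?_ ?_ ?_ <;> rintro rfl
      exacts [hg (Or.inl n_e), hg (Or.inl n_vv), hg (Or.inl n_vu1), hg (Or.inl n_uu)]
    · have n_vv3 : Near1 G e s(((v, i) : α × Fin 4), (v, i + 3)) :=
        near1_pair ⟨_, hmv, edist_le_one_self _⟩
          ⟨_, hmv, edist_le_one (adjC_s8 v (cyc30 i).symm)⟩
      have n_vu3 : Near1 G e s(((v, i + 3) : α × Fin 4), (u, i + 3)) :=
        near1_pair ⟨_, hmv, edist_le_one (adjC_s8 v (cyc30 i).symm)⟩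
          ⟨_, hmu, edist_le_one (adjC_s8 u (cyc30 i).symm)⟩
      have n_uu3 : Near1 G e s(((u, i + 3) : α × Fin 4), (u, i)) :=
        near1_pair ⟨_, hmu, edist_le_one (adjC_s8 u (cyc30 i).symm)⟩
          ⟨_, hmu, edist_le_one_self _⟩
      obtain ⟨c', hc', v1, v2, v3, v4, vother⟩ :=
        swap4 hc (adjG huv i) (adjC_s8 v (cyc30 i).symm) (adjG huv.symm (i + 3))
          (adjC_s8 u (cyc30 i))
          (pne_fst huv.ne) (pne_fst huv.ne.symm)
          (β := emb Δ (κ s(u, v))) (γ := vc Δ i (i + 3))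
          (emb_ne_vc _ _ _) hce
          (by rw [hread _ ((mem_edgeSet _).mpr (adjC_s8 v (cyc30 i).symm)) (Or.inl n_vv3),
                base_V])
          (by rw [hread _ ((mem_edgeSet _).mpr (adjG huv.symm (i + 3))) (Or.inl n_vu3),
                base_G κ huv.ne.symm, Sym2.eq_swap])
          (by rw [hread _ ((mem_edgeSet _).mpr (adjC_s8 u (cyc30 i))) (Or.inl n_uu3),
                base_V]
              exact vc_comm _ _)
      refine ⟨c', hc', v1.trans (vc_comm _ _), ?_⟩
      intro g hg
      refine vother g ?_ ?_ ?_ ?_ <;> rintro rfl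
      exacts [hg (Or.inl n_e), hg (Or.inl n_vv3), hg (Or.inl n_vu3), hg (Or.inl n_uu3)]
  · push_neg at htΔ
    -- step 1 : fix the u side
    obtain ⟨c₁, w₀, hc₁, hvu, hw₀, hcol1, hreg1, hvpres1⟩ :=
      sideStep κ hc u v i huv t htΔ hta
        (fun g hg _ hr => hread g hg hr)
        (fun w' hw' hwt' => hread _ ((mem_edgeSet _).mpr (adjC' w' i))
          (Or.inr ⟨u, v, i, rfl, huv, Or.inl ⟨w', Or.inl hw'.symm, rfl⟩⟩))
    -- step 2 : fix the v side
    have hta' : emb Δ (κ s(v, u)) ≠ t := by rwa [Sym2.eq_swap]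
    have hune : ∀ (x y : α) (j j' j'' : Fin 4), y ≠ x →
        (((y, j) : α × Fin 4) ∈ s(((x, j') : α × Fin 4), (x, j'')) → False) := by
      intro x y j j' j'' hx h
      rcases Sym2.mem_iff.mp h with h1 | h1 <;> exact hx (congrArg Prod.fst h1)
    obtain ⟨c₂, z₀, hc₂, hvv, hz₀, hcol2, hreg2, hupres2⟩ :=
      sideStep κ hc₁ v u i huv.symm t htΔ hta'
        (by
          intro g hg hmem hr
          rw [hswp] at hr
          have h1 : g ≠ s(((u, i) : α × Fin 4), (u, i + 1)) := by
            rintro rfl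
            rcases hmem with h | h
            · exact hune u v i i (i + 1) huv.ne.symm h
            · exact hune u v (i + 1) i (i + 1) huv.ne.symm h
          rw [hvpres1 g hmem h1]
          exact hread g hg hr)
        (by
          intro z' hz' hzt'
          have hzu : z' ≠ u := by
            rintro rfl
            rw [Sym2.eq_swap] at hzt'
            exact hta hzt'
          have hzw : z' ≠ w₀ := by
            rcases hw₀ with rfl | ⟨huw₀, hwt₀, _⟩
            · exact hzu
            · rintro rfl
              refine hκG s(u, z') ((mem_edgeSet _).mpr huw₀) s(v, z') ((mem_edgeSet _).mpr hz') ?_ ⟨z', by simp, by simp⟩ ?_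
              · intro hcon
                rcases Sym2.eq_iff.mp hcon with ⟨h1, _⟩ | ⟨_, h2⟩
                · exact huv.ne h1
                · exact hz'.ne h2.symm
              · exact emb_inj (hwt₀.trans hzt'.symm)
          have hcc : c₁ s(((z', i) : α × Fin 4), (z', i + 1)) =
              c s(((z', i) : α × Fin 4), (z', i + 1)) := by
            refine hcol1 _ ?_
            intro P hP
            rcases Sym2.mem_iff.mp hP with rfl | rfl
            exacts [⟨hzu, hzw⟩, ⟨hzu, hzw⟩]
          rw [hcc]
          exact hread _ ((mem_edgeSet _).mpr (adjC' z' i))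
            (Or.inr ⟨u, v, i, rfl, huv, Or.inl ⟨z', Or.inr hz'.symm, rfl⟩⟩))
    -- step 3 : the central swap
    have hvertv_ne : ∀ (x : α) (j j' : Fin 4), x ≠ v →
        s(((x, j) : α × Fin 4), (v, j')) ≠ s(((v, i) : α × Fin 4), (v, i + 1)) := by
      intro x j j' hx h
      have := Sym2.eq_iff.mp h
      rcases this with ⟨h1, _⟩ | ⟨h1, _⟩ <;> exact hx (congrArg Prod.fst h1)
    have hvertu_ne : ∀ (x : α) (j j' : Fin 4), x ≠ u →
        s(((x, j) : α × Fin 4), (u, j')) ≠ s(((u, i) : α × Fin 4), (u, i + 1)) := by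
      intro x j j' hx h
      have := Sym2.eq_iff.mp h
      rcases this with ⟨h1, _⟩ | ⟨h1, _⟩ <;> exact hx (congrArg Prod.fst h1)
    have he1 : c₂ e = emb Δ (κ s(u, v)) := by
      have h1 : c₂ e = c₁ e := by
        refine hupres2 e (Or.inl hmu) ?_
        rw [he_def]
        exact hvertv_ne u i i huv.ne
      have h2 : c₁ e = c e := by
        refine hvpres1 e (Or.inl hmv) ?_
        rw [← hswp]
        exact hvertu_ne v i i huv.ne.symm
      rw [h1, h2, hce]
    have he3 : c₂ s(((v, i + 1) : α × Fin 4), (u, i + 1)) = emb Δ (κ s(u, v)) := by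
      have h1 : c₂ s(((v, i + 1) : α × Fin 4), (u, i + 1)) =
          c₁ s(((v, i + 1) : α × Fin 4), (u, i + 1)) := by
        refine hupres2 _ (Or.inr (by simp)) ?_
        exact fun h => hvertv_ne u (i + 1) (i + 1) huv.ne (Sym2.eq_swap.trans h)
      have h2 : c₁ s(((v, i + 1) : α × Fin 4), (u, i + 1)) =
          c s(((v, i + 1) : α × Fin 4), (u, i + 1)) := by
        refine hvpres1 _ (Or.inr (by simp)) ?_
        exact hvertu_ne v (i + 1) (i + 1) huv.ne.symm
      rw [h1, h2, hread _ ((mem_edgeSet _).mpr (adjG huv.symm (i + 1))) (Or.inl n_vu1),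
        base_G κ huv.ne.symm, Sym2.eq_swap]
    have he4 : c₂ s(((u, i + 1) : α × Fin 4), (u, i)) = t := by
      have h1 : c₂ s(((u, i + 1) : α × Fin 4), (u, i)) =
          c₁ s(((u, i + 1) : α × Fin 4), (u, i)) := by
        refine hupres2 _ (Or.inr (by simp)) ?_
        intro h
        rcases Sym2.eq_iff.mp h with ⟨h1, _⟩ | ⟨h1, _⟩ <;>
          exact huv.ne.symm (congrArg Prod.fst h1).symm
      rw [h1, show s(((u, i + 1) : α × Fin 4), (u, i)) =
          s(((u, i) : α × Fin 4), (u, i + 1)) from Sym2.eq_swap]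
      exact hvu
    obtain ⟨c₃, hc₃, v1, v2, v3, v4, vother⟩ :=
      swap4 hc₂ (adjG huv i) (adjC' v i) (adjG huv.symm (i + 1))
        (adjC_s8 u (cyc_succ i).symm)
        (pne_fst huv.ne) (pne_fst huv.ne.symm)
        (β := emb Δ (κ s(u, v))) (γ := t) hta he1 hvv he3 he4
    refine ⟨c₃, hc₃, v1, ?_⟩
    intro g hg
    have hg' : ¬ Reg G s(((v, i) : α × Fin 4), (u, i)) g := by rw [hswp]; exact hg
    have h1 : c₃ g = c₂ g := by
      refine vother g ?_ ?_ ?_ ?_ <;> rintro rfl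
      exacts [hg (Or.inl n_e), hg (Or.inl n_vv), hg (Or.inl n_vu1), hg (Or.inl n_uu)]
    rw [h1, hreg2 g hg', hreg1 g hg]

end Moves

/-- A distance-3 precoloring of `G □ C₄` (`G` bipartite, `Δ(G) ≥ 1`) with
at most `Δ(G) + 2` colors is extendable to a proper `(Δ(G)+2)`-edge coloring. -/
theorem extend_distance3_bipartite_times_C4 {α : Type*} [Fintype α]
    (G : SimpleGraph α) (hbip : G.Colorable 2) (hΔ : 1 ≤ G.maxDegree)
    (E₀ : Set (Sym2 (α × Fin 4)))
    (φ : Sym2 (α × Fin 4) → Fin (G.maxDegree + 2))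
    (hφ : IsProperEdgeColoringOn (G □ cycleGraph 4) E₀ φ)
    (hdist : ∀ e ∈ E₀, ∀ f ∈ E₀, e ≠ f → EdgeDistGE (G □ cycleGraph 4) e f 3) :
    ∃ c : Sym2 (α × Fin 4) → Fin (G.maxDegree + 2),
      IsProperEdgeColoring (G □ cycleGraph 4) c ∧ ∀ e ∈ E₀, c e = φ e := by
  classical
  obtain ⟨C⟩ := hbip
  have hdeg : ∀ v, G.degree v ≤ G.maxDegree := fun v => G.degree_le_maxDegree v
  obtain ⟨κ, hκ⟩ := koenig G C hdeg hΔ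
  have hbase := base_proper κ hκ
  have hE₀sub := hφ.1
  -- dispatcher for one local repair
  have hmove : ∀ (c : Sym2 (α × Fin 4) → Fin (G.maxDegree + 2)),
      IsProperEdgeColoring (G □ cycleGraph 4) c →
      ∀ e ∈ (G □ cycleGraph 4).edgeSet, ∀ t : Fin (G.maxDegree + 2),
      (∀ g ∈ (G □ cycleGraph 4).edgeSet, Reg G e g → c g = base G.maxDegree κ g) →
      ∃ c', IsProperEdgeColoring (G □ cycleGraph 4) c' ∧ c' e = t ∧
        ∀ g, ¬ Reg G e g → c' g = c g := by
    intro c hc e he t hread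
    induction e using Sym2.ind with
    | _ P Q =>
      rw [mem_edgeSet] at he
      obtain ⟨p1, p2⟩ := P
      obtain ⟨q1, q2⟩ := Q
      rcases boxProd_adj.mp he with ⟨h1, h2⟩ | ⟨h1, h2⟩
      · have h2' : p2 = q2 := h2
        subst h2'
        exact moveG κ hκ hc p1 q1 p2 h1 t hread
      · have h2' : p1 = q1 := h2
        subst h2'
        have h1' : (cycleGraph 4).Adj p2 q2 := h1
        rcases cyc_cases p2 q2 h1' with h3 | h3
        · subst h3
          exact moveV κ hc p1 p2 t hread
        · subst h3
          have hsw2 : s(((p1, q2 + 1) : α × Fin 4), (p1, q2)) =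
              s(((p1, q2) : α × Fin 4), (p1, q2 + 1)) := Sym2.eq_swap
          rw [hsw2] at hread ⊢
          exact moveV κ hc p1 q2 t hread
  -- induction over the set of precolored edges
  have main : ∀ S : Finset (Sym2 (α × Fin 4)), ↑S ⊆ E₀ →
      ∃ c, IsProperEdgeColoring (G □ cycleGraph 4) c ∧ (∀ e ∈ S, c e = φ e) ∧
        (∀ g, c g ≠ base G.maxDegree κ g → ∃ e ∈ S, Reg G e g) := by
    intro S
    induction S using Finset.induction_on with
    | empty => exact fun _ => ⟨base G.maxDegree κ, hbase, by simp, fun g hg => absurd rfl hg⟩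
    | @insert e S hes ih =>
      intro hsub
      have heE : e ∈ E₀ := hsub (by simp)
      obtain ⟨c, hc, hagree, hinv⟩ := ih (fun x hx => hsub (by simp [hx]))
      have hdd : ∀ e' ∈ E₀, e ≠ e' → ∀ g, Reg G e g → Reg G e' g → False := by
        intro e' he'E hne g hr hr'
        refine disj hr hr' ?_
        intro x hx y hy
        exact_mod_cast hdist e heE e' he'E hne x hx y hy
      have hread : ∀ g ∈ (G □ cycleGraph 4).edgeSet, Reg G e g →
          c g = base G.maxDegree κ g := by
        intro g hg hr
        by_contra hne
        obtain ⟨e', he'S, hr'⟩ := hinv g hne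
        have he'E : e' ∈ E₀ := hsub (by simp [he'S])
        have hne' : e ≠ e' := by rintro rfl; exact hes he'S
        exact hdd e' he'E hne' g hr hr'
      obtain ⟨c', hc', hce, hch⟩ := hmove c hc e (hE₀sub heE) (φ e) hread
      refine ⟨c', hc', ?_, ?_⟩
      · intro f hf
        rcases Finset.mem_insert.mp hf with rfl | hf
        · exact hce
        · have hfE : f ∈ E₀ := hsub (by simp [hf])
          have hnef : e ≠ f := by rintro rfl; exact hes hf
          rw [hch f (fun hr => hdd f hfE hnef f hr (reg_self f))]
          exact hagree f hf
      · intro g hg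
        by_cases hreg : Reg G e g
        · exact ⟨e, by simp, hreg⟩
        · rw [hch g hreg] at hg
          obtain ⟨e', he', hr'⟩ := hinv g hg
          exact ⟨e', by simp [he'], hr'⟩
  have hfin : E₀.Finite := Set.toFinite E₀
  obtain ⟨c, hc, hagree, _⟩ := main hfin.toFinset (by simp)
  exact ⟨c, hc, fun e he => hagree e (hfin.mem_toFinset.mpr he)⟩
end
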